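/- arXiv:1401.5767 — 12 statements merged into one kernel-verified Lean document; each statement's English description precedes it below -/
import Mathlib

section
/- Let b ≥ 1 be an integer and let p0, p1 be real numbers with 0 < p1 ≤ p0. Then p0·log(b·p0/(p0+(b−1)·p1)) + (b−1)·p1·log(b·p1/(p0+(b−1)·p1)) ≥ p0·log b − p0·log(1 + b·p1/p0) − p0. -/
/-- Chain of inequalities lower-bounding the simple-PPM super-channel mutual information. -/
theorem stmt_0 (b : ℕ) (hb : 1 ≤ b) (p0 p1 : ℝ) (hp1 : 0 < p1) (hle : p1 ≤ p0) :
    p0 * Real.log ((b : ℝ) * p0 / (p0 + ((b : ℝ) - 1) * p1))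
      + ((b : ℝ) - 1) * p1 * Real.log ((b : ℝ) * p1 / (p0 + ((b : ℝ) - 1) * p1))
    ≥ p0 * Real.log (b : ℝ) - p0 * Real.log (1 + (b : ℝ) * p1 / p0) - p0 := by
  set B : ℝ := (b : ℝ) with hBdef
  have hB : (1:ℝ) ≤ B := by rw [hBdef]; exact_mod_cast hb
  have hp0 : 0 < p0 := lt_of_lt_of_le hp1 hle
  have hS : 0 < p0 + (B - 1) * p1 := by nlinarith
  have hBp1 : 0 < B * p1 := by nlinarith
  have hBp0 : 0 < B * p0 := by nlinarith
  have hPpos : 0 < p0 + B * p1 := by nlinarith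
  have hBpos : 0 < B := lt_of_lt_of_le one_pos hB
  -- rewrite 1 + B*p1/p0 as (p0 + B*p1)/p0
  have hone : 1 + B * p1 / p0 = (p0 + B * p1) / p0 := by field_simp
  rw [hone,
    Real.log_div (ne_of_gt hBp0) (ne_of_gt hS),
    Real.log_div (ne_of_gt hBp1) (ne_of_gt hS),
    Real.log_div (ne_of_gt hPpos) (ne_of_gt hp0),
    Real.log_mul (ne_of_gt hBpos) (ne_of_gt hp0),
    Real.log_mul (ne_of_gt hBpos) (ne_of_gt hp1)]
  -- monotonicity facts
  have hmono : Real.log (p0 + (B - 1) * p1) ≤ Real.log (p0 + B * p1) :=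
    Real.log_le_log hS (by nlinarith)
  have hmono2 : Real.log B + Real.log p1 ≤ Real.log (p0 + (B - 1) * p1) := by
    have h := Real.log_le_log hBp1 (show B * p1 ≤ p0 + (B - 1) * p1 by nlinarith)
    rw [Real.log_mul (ne_of_gt hBpos) (ne_of_gt hp1)] at h
    exact h
  -- key bound from log x ≤ x - 1
  have key : B * p1 * (Real.log (p0 + (B - 1) * p1) - (Real.log B + Real.log p1))
      ≤ p0 - p1 := by
    have h := Real.log_le_sub_one_of_pos
      (show 0 < (p0 + (B - 1) * p1) / (B * p1) by positivity)
    rw [Real.log_div (ne_of_gt hS) (ne_of_gt hBp1),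
      Real.log_mul (ne_of_gt hBpos) (ne_of_gt hp1)] at h
    have h2 := mul_le_mul_of_nonneg_left h (le_of_lt hBp1)
    have h3 : B * p1 * ((p0 + (B - 1) * p1) / (B * p1) - 1) = p0 - p1 := by
      field_simp
      ring
    linarith [h3.le, h3.ge]
  have ht : 0 ≤ Real.log (p0 + (B - 1) * p1) - (Real.log B + Real.log p1) := by
    linarith
  nlinarith [mul_nonneg hp1.le ht, mul_nonneg hp0.le (sub_nonneg.mpr hmono)]
end

section
/- Let c ≥ 0 and E ∈ (0,1) satisfy E·log(1/E) < 1 and E < e^{−c}. Set b := ⌊1/(E·log(1/E))⌋, η := b·E, p0 := e^{−(b−1)cE} − e^{−η−b·cE}, and p1 := e^{−η−(b−1)cE} − e^{−η−b·cE}. Then (1/η)·[ p0·log(b·p0/(p0+(b−1)·p1)) + (b−1)·p1·log(b·p1/(p0+(b−1)·p1)) ] ≥ (1−η/2)·log b − c·η·log b − (1 + cE/η)·log(1+c) + (1 + cE/η)·( log(1−c·η) + log(1−η/2) ) − 1 − cE/η. -/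
private lemma aux2 (t : ℝ) (ht : 0 ≤ t) : t - t ^ 2 / 2 ≤ 1 - Real.exp (-t) := by
  have hq := Real.quadratic_le_exp_of_nonneg ht
  have hm : Real.exp (-t) * Real.exp t = 1 := by rw [← Real.exp_add]; simp
  have h1 := mul_le_mul_of_nonneg_left hq (Real.exp_pos (-t)).le
  nlinarith [Real.exp_pos (-t), sq_nonneg (t ^ 2), sq_nonneg t]

set_option maxHeartbeats 1000000 in
private lemma aux_star (η X s L P : ℝ) (hη0 : 0 < η) (hX0 : 0 ≤ X) (hs0 : 0 ≤ s)
    (hs1 : s < 1) (hXs : X ≤ s) (hXL : X / 2 * L ≤ s) (hL0 : 0 ≤ L)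
    (hL4 : 4 < η → 1 ≤ L) (hP0 : 0 ≤ P)
    (hPlow : Real.exp (-s) * ((η + X) - (η + X) ^ 2 / 2) ≤ P) :
    η * (1 - η / 2 - s) * L + (η + X) * (Real.log (1 - s) + Real.log (1 - η / 2))
      ≤ P * L := by
  have hlog1s : Real.log (1 - s) ≤ 0 := Real.log_nonpos (by linarith) (by linarith)
  have hPL : 0 ≤ P * L := mul_nonneg hP0 hL0
  have hX1 : X ≤ 1 := by linarith
  rcases le_or_gt (1 - η / 2 - s) 0 with hA' | hB
  · rcases le_or_gt η 4 with h4 | h4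
    · have t1 : η * (1 - η / 2 - s) * L ≤ 0 := by
        nlinarith [mul_nonneg (mul_nonneg hη0.le hL0) (neg_nonneg.mpr hA')]
      have t2 : Real.log (1 - η / 2) ≤ 0 := by
        rw [← Real.log_abs]
        exact Real.log_nonpos (abs_nonneg _) (abs_le.mpr ⟨by linarith, by linarith⟩)
      have t3 : (η + X) * (Real.log (1 - s) + Real.log (1 - η / 2)) ≤ 0 :=
        mul_nonpos_of_nonneg_of_nonpos (by linarith) (by linarith)
      linarith
    · have hL1 : 1 ≤ L := hL4 h4
      have habs : Real.log (1 - η / 2) = Real.log (η / 2 - 1) := by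
        rw [← Real.log_abs (1 - η / 2), abs_of_neg (by linarith : 1 - η / 2 < 0)]
        congr 1; ring
      have hlogpos : 0 ≤ Real.log (η / 2 - 1) := Real.log_nonneg (by linarith)
      have hlog42 : Real.log (η / 2 - 1) ≤ η / 2 - 2 := by
        have := Real.log_le_sub_one_of_pos (show (0 : ℝ) < η / 2 - 1 by linarith)
        linarith
      have k1 : (η + X) * Real.log (1 - s) ≤ 0 :=
        mul_nonpos_of_nonneg_of_nonpos (by linarith) hlog1s
      have k2 : (η + X) * Real.log (η / 2 - 1) ≤ (η + 1) * (η / 2 - 2) := by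
        calc (η + X) * Real.log (η / 2 - 1) ≤ (η + 1) * Real.log (η / 2 - 1) :=
              mul_le_mul_of_nonneg_right (by linarith) hlogpos
          _ ≤ (η + 1) * (η / 2 - 2) := mul_le_mul_of_nonneg_left hlog42 (by linarith)
      have k3 : η * (1 - η / 2 - s) * L ≤ η * (1 - η / 2) * L := by
        nlinarith [mul_nonneg (mul_nonneg hη0.le hL0) hs0]
      have k4 : η * (1 - η / 2) * L ≤ η * (1 - η / 2) := by
        nlinarith [mul_nonneg (mul_nonneg hη0.le (show (0 : ℝ) ≤ η / 2 - 1 by linarith))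
          (show (0 : ℝ) ≤ L - 1 by linarith)]
      have k5 : η * (1 - η / 2) + (η + 1) * (η / 2 - 2) = -η / 2 - 2 := by ring
      have expand : (η + X) * (Real.log (1 - s) + Real.log (1 - η / 2))
          = (η + X) * Real.log (1 - s) + (η + X) * Real.log (1 - η / 2) := by ring
      rw [expand, habs]
      linarith
  · have hη2 : η < 2 := by linarith
    have ht2 : η + X < 2 := by linarith
    have ht0 : 0 ≤ η + X := by linarith
    have key1 : (η + X) - (η + X) ^ 2 / 2 ≤ 1 - Real.exp (-(η + X)) := aux2 _ ht0
    have hstep : Real.exp (-s) * ((η + X) - (η + X) ^ 2 / 2) * L ≤ P * L :=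
      mul_le_mul_of_nonneg_right hPlow hL0
    have key2 : (1 - η / 2 - s) - X / 2 ≤ Real.exp (-s) * (1 - (η + X) / 2) := by
      have he1 : 1 - s ≤ Real.exp (-s) := by nlinarith [Real.add_one_le_exp (-s)]
      have he2 : Real.exp (-s) ≤ 1 := Real.exp_le_one_iff.mpr (by linarith)
      nlinarith [mul_nonneg (show 0 ≤ Real.exp (-s) - (1 - s) by linarith)
          (show (0 : ℝ) ≤ 1 - η / 2 by linarith),
        mul_nonneg (show 0 ≤ 1 - Real.exp (-s) by linarith)
          (show (0 : ℝ) ≤ X / 2 by linarith),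
        mul_nonneg hs0 hη0.le]
    have key4 : Real.log (1 - s) ≤ -s := by
      apply (Real.log_le_iff_le_exp (by linarith)).mpr
      nlinarith [Real.add_one_le_exp (-s)]
    have key5 : Real.log (1 - η / 2) ≤ 0 := Real.log_nonpos (by linarith) (by linarith)
    have c1 : η * (1 - η / 2 - s) * L + (η + X) * (Real.log (1 - s) + Real.log (1 - η / 2))
        ≤ (η + X) * (1 - η / 2 - s) * L + (η + X) * (-(X / 2 * L)) := by
      have h1 : η * (1 - η / 2 - s) * L ≤ (η + X) * (1 - η / 2 - s) * L := by
        nlinarith [mul_nonneg (mul_nonneg hX0 hB.le) hL0]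
      have h2 : Real.log (1 - s) + Real.log (1 - η / 2) ≤ -(X / 2 * L) := by linarith
      have h3 : (η + X) * (Real.log (1 - s) + Real.log (1 - η / 2))
          ≤ (η + X) * (-(X / 2 * L)) := mul_le_mul_of_nonneg_left h2 ht0
      linarith
    have c2 : (η + X) * (1 - η / 2 - s) * L + (η + X) * (-(X / 2 * L))
        = ((1 - η / 2 - s) - X / 2) * ((η + X) * L) := by ring
    have c3 : ((1 - η / 2 - s) - X / 2) * ((η + X) * L)
        ≤ (Real.exp (-s) * (1 - (η + X) / 2)) * ((η + X) * L) :=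
      mul_le_mul_of_nonneg_right key2 (mul_nonneg ht0 hL0)
    have c4 : (Real.exp (-s) * (1 - (η + X) / 2)) * ((η + X) * L)
        = Real.exp (-s) * ((η + X) - (η + X) ^ 2 / 2) * L := by ring
    linarith

set_option maxHeartbeats 2000000 in
/-- Proposition 1: photon-efficiency lower bound achieved by simple PPM. -/
theorem stmt_2 (c E : ℝ) (hc : 0 ≤ c) (hE0 : 0 < E) (hE1 : E < 1)
    (hcond1 : E * Real.log (1 / E) < 1) (hcond2 : E < Real.exp (-c))
    (b : ℕ) (hb : b = ⌊1 / (E * Real.log (1 / E))⌋₊)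
    (η p0 p1 : ℝ) (hη : η = (b : ℝ) * E)
    (hp0 : p0 = Real.exp (-(((b : ℝ) - 1) * c * E)) - Real.exp (-η - (b : ℝ) * c * E))
    (hp1 : p1 = Real.exp (-η - ((b : ℝ) - 1) * c * E) - Real.exp (-η - (b : ℝ) * c * E)) :
    (1 / η) * (p0 * Real.log ((b : ℝ) * p0 / (p0 + ((b : ℝ) - 1) * p1))
        + ((b : ℝ) - 1) * p1 * Real.log ((b : ℝ) * p1 / (p0 + ((b : ℝ) - 1) * p1)))
    ≥ (1 - η / 2) * Real.log (b : ℝ) - c * η * Real.log (b : ℝ)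
        - (1 + c * E / η) * Real.log (1 + c)
        + (1 + c * E / η) * (Real.log (1 - c * η) + Real.log (1 - η / 2))
        - 1 - c * E / η := by
  have hl : 0 < Real.log (1 / E) := Real.log_pos (one_lt_one_div hE0 hE1)
  have hEl : 0 < E * Real.log (1 / E) := mul_pos hE0 hl
  have hb1 : 1 ≤ b := by
    rw [hb]
    exact Nat.le_floor (by rw [Nat.cast_one]; exact one_le_one_div hEl hcond1.le)
  have hbR : (1 : ℝ) ≤ (b : ℝ) := by exact_mod_cast hb1
  have hbpos : (0 : ℝ) < (b : ℝ) := by linarith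
  have hη0 : 0 < η := by rw [hη]; exact mul_pos hbpos hE0
  have hX0 : 0 ≤ c * E := mul_nonneg hc hE0.le
  have hs0 : 0 ≤ c * η := mul_nonneg hc hη0.le
  have hble : (b : ℝ) ≤ 1 / (E * Real.log (1 / E)) := by
    rw [hb]; exact Nat.floor_le (by positivity)
  have hηl : η * Real.log (1 / E) ≤ 1 := by
    rw [hη]
    calc (b : ℝ) * E * Real.log (1 / E) = (b : ℝ) * (E * Real.log (1 / E)) := by ring
      _ ≤ (1 / (E * Real.log (1 / E))) * (E * Real.log (1 / E)) :=
          mul_le_mul_of_nonneg_right hble hEl.le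
      _ = 1 := by field_simp
  have hcl : c < Real.log (1 / E) := by
    have h1 : Real.log E < -c := (Real.log_lt_iff_lt_exp hE0).mpr hcond2
    have h2 : Real.log (1 / E) = -Real.log E := by rw [one_div, Real.log_inv]
    linarith
  have hs1 : c * η < 1 := by
    nlinarith [mul_le_mul_of_nonneg_left hηl hc]
  have hEη : E ≤ η := by rw [hη]; nlinarith
  have hXs : c * E ≤ c * η := mul_le_mul_of_nonneg_left hEη hc
  have hbX : (b : ℝ) * (c * E) = c * η := by rw [hη]; ring
  -- exponential factorizations
  set A : ℝ := Real.exp (-(((b : ℝ) - 1) * c * E)) with hA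
  have e1 : Real.exp (-η - (b : ℝ) * c * E) = A * Real.exp (-(η + c * E)) := by
    rw [hA, ← Real.exp_add]; congr 1; ring
  have e2 : Real.exp (-η - ((b : ℝ) - 1) * c * E) = A * Real.exp (-η) := by
    rw [hA, ← Real.exp_add]; congr 1; ring
  have e3 : Real.exp (-(η + c * E)) = Real.exp (-η) * Real.exp (-(c * E)) := by
    rw [← Real.exp_add]; congr 1; ring
  have hp0f : p0 = A * (1 - Real.exp (-(η + c * E))) := by rw [hp0, e1]; ring
  have hp1f : p1 = A * Real.exp (-η) * (1 - Real.exp (-(c * E))) := by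
    rw [hp1, e2, e1, e3]; ring
  have hApos : 0 < A := Real.exp_pos _
  have hA1 : A ≤ 1 := by
    rw [hA, Real.exp_le_one_iff]
    nlinarith
  have hexpt : Real.exp (-(η + c * E)) < 1 := by
    rw [Real.exp_lt_one_iff]; linarith
  have h1expt : 1 - Real.exp (-(η + c * E)) ≤ η + c * E := by
    nlinarith [Real.add_one_le_exp (-(η + c * E))]
  have hp0pos : 0 < p0 := by
    rw [hp0f]; exact mul_pos hApos (by linarith)
  have hp0le : p0 ≤ η + c * E := by
    rw [hp0f]
    calc A * (1 - Real.exp (-(η + c * E))) ≤ 1 * (1 - Real.exp (-(η + c * E))) :=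
          mul_le_mul_of_nonneg_right hA1 (by linarith)
      _ ≤ η + c * E := by linarith
  have hp1nn : 0 ≤ p1 := by
    have hx1 : Real.exp (-(c * E)) ≤ 1 := Real.exp_le_one_iff.mpr (by linarith)
    rw [hp1f]
    have : 0 ≤ A * Real.exp (-η) := by positivity
    nlinarith
  have hQnn : 0 ≤ ((b : ℝ) - 1) * p1 := mul_nonneg (by linarith) hp1nn
  -- key estimate : (b-1) p1 ≤ c p0
  have hQc : ((b : ℝ) - 1) * p1 ≤ c * p0 := by
    have h1x : 1 - Real.exp (-(c * E)) ≤ c * E := by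
      nlinarith [Real.add_one_le_exp (-(c * E))]
    have h1xnn : 0 ≤ 1 - Real.exp (-(c * E)) :=
      by nlinarith [Real.exp_le_one_iff.mpr (show -(c * E) ≤ 0 by linarith)]
    have h1 : ((b : ℝ) - 1) * (1 - Real.exp (-(c * E))) ≤ c * η := by
      calc ((b : ℝ) - 1) * (1 - Real.exp (-(c * E))) ≤ ((b : ℝ) - 1) * (c * E) :=
            mul_le_mul_of_nonneg_left h1x (by linarith)
        _ ≤ (b : ℝ) * (c * E) := by nlinarith
        _ = c * η := hbX
    have hmul : Real.exp (-η) * Real.exp η = 1 := by rw [← Real.exp_add]; simp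
    have hηe : η * Real.exp (-η) ≤ 1 - Real.exp (-η) := by
      nlinarith [Real.add_one_le_exp η, Real.exp_pos (-η)]
    have hee : 1 - Real.exp (-η) ≤ 1 - Real.exp (-(η + c * E)) := by
      have : Real.exp (-(η + c * E)) ≤ Real.exp (-η) := Real.exp_le_exp.mpr (by linarith)
      linarith
    have step : (((b : ℝ) - 1) * (1 - Real.exp (-(c * E)))) * (A * Real.exp (-η))
        ≤ (c * η) * (A * Real.exp (-η)) :=
      mul_le_mul_of_nonneg_right h1 (by positivity)
    have step3 : c * (A * (η * Real.exp (-η))) ≤ c * (A * (1 - Real.exp (-(η + c * E)))) := by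
      apply mul_le_mul_of_nonneg_left _ hc
      apply mul_le_mul_of_nonneg_left _ hApos.le
      linarith
    calc ((b : ℝ) - 1) * p1 = (((b : ℝ) - 1) * (1 - Real.exp (-(c * E)))) * (A * Real.exp (-η)) := by
          rw [hp1f]; ring
      _ ≤ (c * η) * (A * Real.exp (-η)) := step
      _ = c * (A * (η * Real.exp (-η))) := by ring
      _ ≤ c * (A * (1 - Real.exp (-(η + c * E)))) := step3
      _ = c * p0 := by rw [hp0f]
  set S : ℝ := p0 + ((b : ℝ) - 1) * p1 with hSdef
  have hSpos : 0 < S := by rw [hSdef]; linarith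
  have hSle : S ≤ (1 + c) * p0 := by rw [hSdef]; nlinarith
  set L : ℝ := Real.log (b : ℝ) with hLdef
  have hL0 : 0 ≤ L := Real.log_nonneg hbR
  have hlog1c : 0 ≤ Real.log (1 + c) := Real.log_nonneg (by linarith)
  have hlog1s : Real.log (1 - c * η) ≤ 0 := Real.log_nonpos (by linarith) (by linarith)
  -- Step 2 : log(b p0 / S) ≥ L - log(1+c)
  have step2 : L - Real.log (1 + c) ≤ Real.log ((b : ℝ) * p0 / S) := by
    have h1 : Real.log ((b : ℝ) * p0 / S) = L + Real.log p0 - Real.log S := by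
      rw [Real.log_div (by positivity) hSpos.ne', Real.log_mul (by positivity) hp0pos.ne', hLdef]
    have h2 : Real.log S ≤ Real.log (1 + c) + Real.log p0 := by
      calc Real.log S ≤ Real.log ((1 + c) * p0) :=
            (Real.log_le_log_iff hSpos (by positivity)).mpr hSle
        _ = Real.log (1 + c) + Real.log p0 := Real.log_mul (by positivity) hp0pos.ne'
    linarith
  -- Step 1 : Q-term lower bound
  have step1 : -(η + c * E) ≤ ((b : ℝ) - 1) * p1 * Real.log ((b : ℝ) * p1 / S) := by
    rcases eq_or_lt_of_le hQnn with hQ0 | hQpos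
    · rw [← hQ0, zero_mul]; linarith
    · have hcase := mul_pos_iff.mp hQpos
      have hbm : 0 < (b : ℝ) - 1 ∧ 0 < p1 := by
        rcases hcase with h | h
        · exact h
        · exact absurd hp1nn (not_le.mpr h.2)
      obtain ⟨hbm1, hp1pos⟩ := hbm
      have hbp1 : ((b : ℝ) - 1) * p1 ≤ (b : ℝ) * p1 := by nlinarith
      have hbp1pos : 0 < (b : ℝ) * p1 := mul_pos hbpos hp1pos
      have hlogmono : Real.log (((b : ℝ) - 1) * p1 / S) ≤ Real.log ((b : ℝ) * p1 / S) := by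
        apply (Real.log_le_log_iff (div_pos hQpos hSpos) (div_pos hbp1pos hSpos)).mpr
        exact (div_le_div_iff_of_pos_right hSpos).mpr hbp1
      have hlogQS : -(p0 / (((b : ℝ) - 1) * p1)) ≤ Real.log (((b : ℝ) - 1) * p1 / S) := by
        have hd : Real.log (((b : ℝ) - 1) * p1 / S) = Real.log (((b : ℝ) - 1) * p1) - Real.log S :=
          Real.log_div hQpos.ne' hSpos.ne'
        have hd2 : Real.log S - Real.log (((b : ℝ) - 1) * p1) ≤ p0 / (((b : ℝ) - 1) * p1) := by
          have h3 : Real.log (S / (((b : ℝ) - 1) * p1)) ≤ S / (((b : ℝ) - 1) * p1) - 1 :=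
            Real.log_le_sub_one_of_pos (div_pos hSpos hQpos)
          have h4 : Real.log (S / (((b : ℝ) - 1) * p1))
              = Real.log S - Real.log (((b : ℝ) - 1) * p1) :=
            Real.log_div hSpos.ne' hQpos.ne'
          have h5 : S / (((b : ℝ) - 1) * p1) - 1 = p0 / (((b : ℝ) - 1) * p1) := by
            rw [hSdef]; field_simp; ring
          linarith
        linarith
      have hfin : -p0 ≤ ((b : ℝ) - 1) * p1 * Real.log ((b : ℝ) * p1 / S) := by
        have h6 : ((b : ℝ) - 1) * p1 * (-(p0 / (((b : ℝ) - 1) * p1)))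
            ≤ ((b : ℝ) - 1) * p1 * Real.log ((b : ℝ) * p1 / S) :=
          mul_le_mul_of_nonneg_left (le_trans hlogQS hlogmono) hQpos.le
        have h7 : ((b : ℝ) - 1) * p1 * (-(p0 / (((b : ℝ) - 1) * p1))) = -p0 := by
          field_simp
        linarith
      linarith
  have star : η * (1 - η / 2 - c * η) * L
      + (η + c * E) * (Real.log (1 - c * η) + Real.log (1 - η / 2)) ≤ p0 * L := by
    apply aux_star η (c * E) (c * η) L p0 hη0 hX0 hs0 hs1 hXs _ hL0 _ hp0pos.le _
    · -- c*E/2 * L ≤ c*η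
      have hLb : L ≤ (b : ℝ) - 1 := by
        rw [hLdef]; exact Real.log_le_sub_one_of_pos hbpos
      nlinarith only [mul_le_mul_of_nonneg_left hLb (show (0 : ℝ) ≤ c * E / 2 by positivity),
        hbX, hX0, hbR]
    · -- 4 < η → 1 ≤ L
      intro h4
      have hbη : η ≤ (b : ℝ) := by rw [hη]; nlinarith only [hE1, hbpos, hE0]
      have hexpb : Real.exp 1 ≤ (b : ℝ) := by
        nlinarith only [Real.exp_one_lt_d9, hbη, h4]
      rw [hLdef]
      exact (Real.le_log_iff_exp_le hbpos).mpr hexpb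
    · -- lower bound for p0
      have hAA : Real.exp (-(c * η)) ≤ A := by
        rw [hA]
        apply Real.exp_le_exp.mpr
        nlinarith only [hbX, hX0]
      rcases le_or_gt (η + c * E) 2 with ht2 | ht2
      · have htnn : 0 ≤ (η + c * E) - (η + c * E) ^ 2 / 2 := by
          nlinarith only [ht2, hX0, hη0]
        have key1 : (η + c * E) - (η + c * E) ^ 2 / 2 ≤ 1 - Real.exp (-(η + c * E)) :=
          aux2 _ (by linarith)
        rw [hp0f]
        exact mul_le_mul hAA key1 htnn hApos.le
      · have htneg : (η + c * E) - (η + c * E) ^ 2 / 2 ≤ 0 := by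
          nlinarith only [ht2]
        have : Real.exp (-(c * η)) * ((η + c * E) - (η + c * E) ^ 2 / 2) ≤ 0 :=
          mul_nonpos_of_nonneg_of_nonpos (Real.exp_pos _).le htneg
        linarith only [this, hp0pos]
  -- assemble
  have m1 : p0 * (L - Real.log (1 + c)) ≤ p0 * Real.log ((b : ℝ) * p0 / S) :=
    mul_le_mul_of_nonneg_left step2 hp0pos.le
  have m2 : p0 * Real.log (1 + c) ≤ (η + c * E) * Real.log (1 + c) :=
    mul_le_mul_of_nonneg_right hp0le hlog1c
  have main : η * (1 - η / 2) * L - c * η * η * L - (η + c * E) * Real.log (1 + c)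
      + (η + c * E) * (Real.log (1 - c * η) + Real.log (1 - η / 2)) - (η + c * E)
      ≤ p0 * Real.log ((b : ℝ) * p0 / S)
        + ((b : ℝ) - 1) * p1 * Real.log ((b : ℝ) * p1 / S) := by
    linarith only [star, step1, m1, m2]
  rw [ge_iff_le]
  have h3 : (1 - η / 2) * L - c * η * L - (1 + c * E / η) * Real.log (1 + c)
        + (1 + c * E / η) * (Real.log (1 - c * η) + Real.log (1 - η / 2)) - 1 - c * E / η
      = (1 / η) * (η * (1 - η / 2) * L - c * η * η * L - (η + c * E) * Real.log (1 + c)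
        + (η + c * E) * (Real.log (1 - c * η) + Real.log (1 - η / 2)) - (η + c * E)) := by
    field_simp
    ring
  rw [h3]
  exact mul_le_mul_of_nonneg_left main (by positivity)
end

section
/- Fix c ≥ 0. For E ∈ (0,1) with E·log(1/E) < 1, define b(E) := ⌊1/(E·log(1/E))⌋, η(E) := b(E)·E, p0(E) := e^{−(b(E)−1)cE} − e^{−η(E)−b(E)·cE}, p1(E) := e^{−η(E)−(b(E)−1)cE} − e^{−η(E)−b(E)·cE}, and F_c(E) := (1/η(E))·[ p0(E)·log(b(E)·p0(E)/(p0(E)+(b(E)−1)·p1(E))) + (b(E)−1)·p1(E)·log(b(E)·p1(E)/(p0(E)+(b(E)−1)·p1(E))) ]. Then liminf_{E→0^+} ( F_c(E) − log(1/E) + log log(1/E) ) ≥ −c − log(1+c) − 3/2. -/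
open Filter Real Topology
set_option linter.unusedSectionVars false
set_option maxHeartbeats 1000000



/-- Photon efficiency achieved by simple PPM with frame length `⌊1/(E log(1/E))⌋`
and pulse amplitude `b·E` on the Poisson channel with dark current `c·E`. -/
noncomputable def simplePPMEfficiency (c E : ℝ) : ℝ :=
  let b : ℕ := ⌊1 / (E * Real.log (1 / E))⌋₊
  let η : ℝ := (b : ℝ) * E
  let p0 : ℝ := Real.exp (-(((b : ℝ) - 1) * c * E)) - Real.exp (-η - (b : ℝ) * c * E)
  let p1 : ℝ := Real.exp (-η - ((b : ℝ) - 1) * c * E) - Real.exp (-η - (b : ℝ) * c * E)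
  (1 / η) * (p0 * Real.log ((b : ℝ) * p0 / (p0 + ((b : ℝ) - 1) * p1))
      + ((b : ℝ) - 1) * p1 * Real.log ((b : ℝ) * p1 / (p0 + ((b : ℝ) - 1) * p1)))



lemma exp_lin {t : ℝ} (h1 : |t| ≤ 1) : |Real.exp t - (1 + t)| ≤ t ^ 2 := by
  have h := Real.exp_bound h1 (n := 2) (by norm_num)
  simp [Finset.sum_range_succ] at h
  calc |Real.exp t - (1 + t)| ≤ |t| ^ 2 * (3 / (2 * 2)) := by
        convert h using 2 <;> norm_num
    _ ≤ t ^ 2 := by rw [sq_abs]; nlinarith [sq_nonneg t]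

lemma exp_quad {t : ℝ} (h1 : |t| ≤ 1) : |Real.exp t - (1 + t + t ^ 2 / 2)| ≤ |t| ^ 3 := by
  have h := Real.exp_bound h1 (n := 3) (by norm_num)
  simp [Finset.sum_range_succ] at h
  calc |Real.exp t - (1 + t + t ^ 2 / 2)| ≤ |t| ^ 3 * (4 / (6 * 3)) := by
        convert h using 2 <;> norm_num
    _ ≤ |t| ^ 3 := by nlinarith [pow_nonneg (abs_nonneg t) 3]


namespace PPMaux

noncomputable def LL (E : ℝ) : ℝ := Real.log (1 / E)
noncomputable def bb (E : ℝ) : ℝ := (⌊1 / (E * LL E)⌋₊ : ℝ)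
noncomputable def eta (E : ℝ) : ℝ := bb E * E
noncomputable def p0 (c E : ℝ) : ℝ :=
  Real.exp (-((bb E - 1) * c * E)) - Real.exp (-eta E - bb E * c * E)
noncomputable def p1 (c E : ℝ) : ℝ :=
  Real.exp (-eta E - (bb E - 1) * c * E) - Real.exp (-eta E - bb E * c * E)
noncomputable def ss (c E : ℝ) : ℝ := p0 c E + (bb E - 1) * p1 c E

lemma eff_eq (c E : ℝ) : simplePPMEfficiency c E =
    (1 / eta E) * (p0 c E * Real.log (bb E * p0 c E / ss c E)
      + (bb E - 1) * p1 c E * Real.log (bb E * p1 c E / ss c E)) := rfl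

/-- bundled pointwise hypotheses -/
structure Good (c E : ℝ) : Prop where
  hc : 0 ≤ c
  hE : 0 < E
  hL2 : 2 ≤ LL E
  hLc : 1 + c ≤ LL E
  hEL : E * LL E ≤ 1 / 2

namespace Good
variable {c E : ℝ} (g : Good c E)
include g

lemma hLpos : 0 < LL E := lt_of_lt_of_le (by norm_num) g.hL2
lemma hELpos : 0 < E * LL E := mul_pos g.hE g.hLpos
lemma hy2 : 2 ≤ 1 / (E * LL E) := by
  rw [le_div_iff₀ g.hELpos]; linarith [g.hEL]
lemma hb2 : (2 : ℝ) ≤ bb E := by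
  have : (2 : ℕ) ≤ ⌊1 / (E * LL E)⌋₊ := Nat.le_floor (by exact_mod_cast g.hy2)
  unfold bb
  exact_mod_cast this
lemma hb1 : (1 : ℝ) ≤ bb E := le_trans (by norm_num) g.hb2
lemma hbpos : 0 < bb E := lt_of_lt_of_le one_pos g.hb1
lemma hble : bb E ≤ 1 / (E * LL E) := Nat.floor_le (by have := g.hELpos; positivity)
lemma hblt : 1 / (E * LL E) - 1 < bb E := Nat.sub_one_lt_floor _
lemma hetapos : 0 < eta E := mul_pos g.hbpos g.hE
lemma hetaL_le : eta E * LL E ≤ 1 := by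
  have h := mul_le_mul_of_nonneg_right g.hble (le_of_lt g.hE)
  calc eta E * LL E = bb E * E * LL E := rfl
    _ ≤ (1 / (E * LL E)) * E * LL E := by nlinarith [g.hLpos]
    _ = 1 := by
        rw [div_mul_eq_mul_div, one_mul, div_mul_eq_mul_div]
        exact div_self (ne_of_gt g.hELpos)
lemma hetaL_gt : 1 - E * LL E < eta E * LL E := by
  have h := mul_lt_mul_of_pos_right g.hblt g.hELpos
  have : (1 / (E * LL E) - 1) * (E * LL E) = 1 - E * LL E := by
    rw [sub_mul, one_mul, one_div, inv_mul_cancel₀ (ne_of_gt g.hELpos)]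
  calc 1 - E * LL E = (1 / (E * LL E) - 1) * (E * LL E) := this.symm
    _ < bb E * (E * LL E) := h
    _ = eta E * LL E := by unfold eta; ring
lemma heta_le : eta E ≤ 1 / LL E := by
  rw [le_div_iff₀ g.hLpos]; exact g.hetaL_le
lemma heta_le' : eta E ≤ 1 / 2 := le_trans g.heta_le (by
  rw [div_le_div_iff₀ g.hLpos (by norm_num : (0:ℝ) < 2)]; linarith [g.hL2])
lemma hE_le_eta : E ≤ eta E := by
  have := mul_le_mul_of_nonneg_right g.hb1 g.hE.le
  unfold eta; linarith
lemma hceta_le : c * eta E ≤ c / LL E := by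
  rcases eq_or_lt_of_le g.hc with h | h
  · simp [← h]
  · rw [le_div_iff₀ g.hLpos]; nlinarith [g.hetaL_le]
lemma hceta_lt1 : c * eta E ≤ 1 := by
  refine le_trans g.hceta_le ?_
  rw [div_le_one g.hLpos]; linarith [g.hLc]
lemma hcE_le : c * E ≤ c * eta E := by nlinarith [g.hE_le_eta, g.hc]
lemma ht_nonneg : 0 ≤ (bb E - 1) * c * E :=
  mul_nonneg (mul_nonneg (by linarith [g.hb1]) g.hc) g.hE.le
lemma ht_le : (bb E - 1) * c * E ≤ c * eta E := by
  unfold eta; nlinarith [g.hc, g.hE.le, g.hbpos]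
lemma ht_le1 : (bb E - 1) * c * E ≤ 1 := le_trans g.ht_le g.hceta_lt1
lemma hdelta_nonneg : 0 ≤ eta E + c * E := by
  have := g.hetapos; have := g.hc; have := g.hE.le; positivity
lemma hdelta_le1 : eta E + c * E ≤ 1 := by
  have h1 : eta E + c * E ≤ (1 + c) / LL E := by
    have := g.hcE_le.trans g.hceta_le
    have := g.heta_le
    rw [add_div]; linarith
  refine le_trans h1 ?_
  rw [div_le_one g.hLpos]; exact g.hLc
lemma hp0pos : 0 < p0 c E := by
  unfold p0
  have : -eta E - bb E * c * E < -((bb E - 1) * c * E) := by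
    have := g.hetapos; have h2 : 0 ≤ c * E := mul_nonneg g.hc g.hE.le
    nlinarith
  have := Real.exp_lt_exp.mpr this
  linarith
lemma hp1nonneg : 0 ≤ p1 c E := by
  unfold p1
  have : -eta E - bb E * c * E ≤ -eta E - (bb E - 1) * c * E := by
    have h2 : 0 ≤ c * E := mul_nonneg g.hc g.hE.le
    nlinarith
  have := Real.exp_le_exp.mpr this
  linarith
lemma hsspos : 0 < ss c E := by
  unfold ss
  nlinarith [g.hp0pos, g.hp1nonneg, g.hb1]
lemma id_p0 : p0 c E = Real.exp (-((bb E - 1) * c * E)) * (1 - Real.exp (-(eta E + c * E))) := by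
  unfold p0
  rw [mul_sub, mul_one, ← Real.exp_add]
  ring_nf
lemma id_p1 : p1 c E =
    Real.exp (-eta E - (bb E - 1) * c * E) * (1 - Real.exp (-(c * E))) := by
  unfold p1
  rw [mul_sub, mul_one, ← Real.exp_add]
  ring_nf

end Good



lemma tendsto_add_small {α : Type*} {l : Filter α} {f g : α → ℝ} {a : ℝ}
    (hg : Tendsto g l (𝓝 a)) (h : Tendsto (fun x => f x - g x) l (𝓝 0)) :
    Tendsto f l (𝓝 a) := by
  have := hg.add h
  simpa using this

lemma t_LL : Tendsto LL (𝓝[>] (0:ℝ)) atTop := by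
  have h1 : Tendsto Real.log (𝓝[>] (0:ℝ)) atBot := Real.tendsto_log_nhdsGT_zero
  have : LL = fun E => -Real.log E := by
    funext E; simp [LL, Real.log_inv, one_div]
  rw [this]
  exact tendsto_neg_atBot_atTop.comp h1

lemma t_E0 : Tendsto (fun E : ℝ => E) (𝓝[>] (0:ℝ)) (𝓝 0) :=
  tendsto_id.mono_left nhdsWithin_le_nhds

lemma ev_pos : ∀ᶠ E in 𝓝[>] (0:ℝ), 0 < E := self_mem_nhdsWithin

lemma t_ELn (n : ℕ) : Tendsto (fun E : ℝ => E * LL E ^ n) (𝓝[>] (0:ℝ)) (𝓝 0) := by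
  have h := (tendsto_pow_mul_exp_neg_atTop_nhds_zero n).comp t_LL
  refine h.congr' ?_
  filter_upwards [ev_pos] with E hE
  have : Real.exp (-(LL E)) = E := by
    rw [LL, one_div, Real.log_inv, neg_neg, Real.exp_log hE]
  simp only [Function.comp_apply, this]
  ring

lemma t_EL0 : Tendsto (fun E : ℝ => E * LL E) (𝓝[>] (0:ℝ)) (𝓝 0) := by
  have := t_ELn 1
  simpa using this

lemma t_invLL : Tendsto (fun E => (LL E)⁻¹) (𝓝[>] (0:ℝ)) (𝓝 0) :=
  t_LL.inv_tendsto_atTop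

lemma t_loglogLL : Tendsto (fun E => Real.log (LL E) / LL E) (𝓝[>] (0:ℝ)) (𝓝 0) :=
  Real.isLittleO_log_id_atTop.tendsto_div_nhds_zero.comp t_LL

end PPMaux

namespace PPMaux
variable {c : ℝ}

lemma ev_good (hc : 0 ≤ c) : ∀ᶠ E in 𝓝[>] (0:ℝ), Good c E := by
  have h1 : ∀ᶠ E in 𝓝[>] (0:ℝ), (2:ℝ) ≤ LL E := t_LL.eventually_ge_atTop 2
  have h2 : ∀ᶠ E in 𝓝[>] (0:ℝ), 1 + c ≤ LL E := t_LL.eventually_ge_atTop (1+c)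
  have h3 : ∀ᶠ E in 𝓝[>] (0:ℝ), E * LL E ≤ 1/2 :=
    t_EL0.eventually (eventually_le_nhds (by norm_num))
  filter_upwards [ev_pos, h1, h2, h3] with E hE hL2 hLc hEL
  exact ⟨hc, hE, hL2, hLc, hEL⟩

lemma t_b_atTop : Tendsto bb (𝓝[>] (0:ℝ)) atTop := by
  have h0 : Tendsto (fun E : ℝ => E * LL E) (𝓝[>] (0:ℝ)) (𝓝[>] 0) := by
    rw [tendsto_nhdsWithin_iff]
    refine ⟨t_EL0, ?_⟩
    filter_upwards [ev_good le_rfl] with E g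
    exact Good.hELpos (c := 0) g
  have h1 : Tendsto (fun E : ℝ => 1 / (E * LL E)) (𝓝[>] (0:ℝ)) atTop := by
    have := h0.inv_tendsto_nhdsGT_zero
    refine this.congr fun E => ?_
    simp [one_div]
  exact tendsto_natCast_atTop_atTop.comp (tendsto_nat_floor_atTop.comp h1)

lemma t_invbb : Tendsto (fun E => (bb E)⁻¹) (𝓝[>] (0:ℝ)) (𝓝 0) :=
  t_b_atTop.inv_tendsto_atTop

lemma t_etaL : Tendsto (fun E => eta E * LL E) (𝓝[>] (0:ℝ)) (𝓝 1) := by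
  refine tendsto_of_tendsto_of_tendsto_of_le_of_le'
    (g := fun E => 1 - E * LL E) (h := fun _ => 1)
    (by simpa using (tendsto_const_nhds (x := (1:ℝ))).sub t_EL0) tendsto_const_nhds ?_ ?_
  · filter_upwards [ev_good le_rfl] with E g
    exact le_of_lt (Good.hetaL_gt (c := 0) g)
  · filter_upwards [ev_good le_rfl] with E g
    exact Good.hetaL_le (c := 0) g

lemma t_invetaL : Tendsto (fun E => (eta E * LL E)⁻¹) (𝓝[>] (0:ℝ)) (𝓝 1) := by
  have := t_etaL.inv₀ one_ne_zero
  simpa using this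

lemma t_eta0 : Tendsto eta (𝓝[>] (0:ℝ)) (𝓝 0) := by
  have h := t_etaL.mul t_invLL
  refine (by simpa using h : Tendsto (fun E => eta E * LL E * (LL E)⁻¹) _ (𝓝 0)).congr' ?_
  filter_upwards [ev_good le_rfl] with E g
  have hL : LL E ≠ 0 := ne_of_gt (Good.hLpos (c := 0) g)
  field_simp

end PPMaux
namespace PPMaux
variable {c : ℝ}

noncomputable def tt (c E : ℝ) : ℝ := (bb E - 1) * c * E
noncomputable def dd (c E : ℝ) : ℝ := eta E + c * E
noncomputable def QQ (c E : ℝ) : ℝ := (1 - Real.exp (-dd c E)) / eta E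

lemma t_cEL : Tendsto (fun E => c * (E * LL E)) (𝓝[>] (0:ℝ)) (𝓝 0) := by
  simpa using t_EL0.const_mul c

lemma t_Lt : Tendsto (fun E => LL E * tt c E) (𝓝[>] (0:ℝ)) (𝓝 c) := by
  have h := (t_etaL.const_mul c).sub (t_cEL (c := c))
  simp only [mul_one, sub_zero] at h
  refine h.congr fun E => ?_
  simp only [tt, eta]; ring

lemma t_t0 : Tendsto (fun E => tt c E) (𝓝[>] (0:ℝ)) (𝓝 0) := by
  have h := t_Lt (c := c) |>.mul t_invLL
  simp only [mul_zero] at h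
  refine h.congr' ?_
  filter_upwards [ev_good le_rfl] with E g
  have hL : LL E ≠ 0 := ne_of_gt (Good.hLpos (c := 0) g)
  field_simp

lemma t_LP (hc : 0 ≤ c) :
    Tendsto (fun E => LL E * (Real.exp (-tt c E) - 1)) (𝓝[>] (0:ℝ)) (𝓝 (-c)) := by
  refine tendsto_add_small (g := fun E => -(LL E * tt c E)) (t_Lt.neg) ?_
  have hb : Tendsto (fun E => LL E * tt c E * tt c E) (𝓝[>] (0:ℝ)) (𝓝 0) := by
    simpa using (t_Lt (c := c)).mul t_t0
  refine squeeze_zero_norm' ?_ hb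
  filter_upwards [ev_good hc, t_t0.eventually (eventually_le_nhds (by norm_num : (0:ℝ) < 1))]
    with E g ht1
  have htn : 0 ≤ tt c E := g.ht_nonneg
  have hLpos : 0 < LL E := g.hLpos
  have hexp : |Real.exp (-tt c E) - (1 + -tt c E)| ≤ (-tt c E) ^ 2 := by
    apply exp_lin
    rw [abs_neg, abs_of_nonneg htn]; exact ht1
  have : LL E * (Real.exp (-tt c E) - 1) - -(LL E * tt c E)
      = LL E * (Real.exp (-tt c E) - (1 + -tt c E)) := by ring
  rw [this, norm_mul, Real.norm_eq_abs, Real.norm_eq_abs, abs_of_pos hLpos]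
  calc LL E * |Real.exp (-tt c E) - (1 + -tt c E)| ≤ LL E * (-tt c E) ^ 2 := by
        exact mul_le_mul_of_nonneg_left hexp hLpos.le
    _ = LL E * tt c E * tt c E := by ring

lemma t_P1 (hc : 0 ≤ c) :
    Tendsto (fun E => Real.exp (-tt c E)) (𝓝[>] (0:ℝ)) (𝓝 1) := by
  have h := Real.continuous_exp.continuousAt.tendsto.comp (t_t0 (c := c)).neg
  simpa [Function.comp_def] using h

lemma t_ddLL : Tendsto (fun E => dd c E * LL E) (𝓝[>] (0:ℝ)) (𝓝 1) := by
  have h := t_etaL.add (t_cEL (c := c))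
  simp only [add_zero] at h
  refine h.congr fun E => ?_
  simp only [dd]; ring

lemma t_dd0 : Tendsto (fun E => dd c E) (𝓝[>] (0:ℝ)) (𝓝 0) := by
  have h := t_ddLL (c := c) |>.mul t_invLL
  simp only [mul_zero, one_mul] at h
  refine h.congr' ?_
  filter_upwards [ev_good le_rfl] with E g
  have hL : LL E ≠ 0 := ne_of_gt (Good.hLpos (c := 0) g)
  field_simp

lemma t_LQ (hc : 0 ≤ c) :
    Tendsto (fun E => LL E * (QQ c E - 1)) (𝓝[>] (0:ℝ)) (𝓝 (-(1/2))) := by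
  -- T1 - T2 - T3
  have hT1 : Tendsto (fun E => c * (E * LL E ^ 2) * (eta E * LL E)⁻¹)
      (𝓝[>] (0:ℝ)) (𝓝 0) := by
    simpa using ((t_ELn 2).const_mul c).mul t_invetaL
  have hT2 : Tendsto (fun E => (dd c E * LL E) ^ 2 * (eta E * LL E)⁻¹ / 2)
      (𝓝[>] (0:ℝ)) (𝓝 (1/2)) := by
    have := ((t_ddLL (c := c)).pow 2).mul t_invetaL
    simpa using this.div_const 2
  have hT3 : Tendsto (fun E => (LL E / eta E) *
      (Real.exp (-dd c E) - (1 - dd c E + dd c E ^ 2 / 2))) (𝓝[>] (0:ℝ)) (𝓝 0) := by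
    have hb : Tendsto (fun E => (dd c E * LL E) ^ 2 * (eta E * LL E)⁻¹ * dd c E)
        (𝓝[>] (0:ℝ)) (𝓝 0) := by
      simpa using (((t_ddLL (c := c)).pow 2).mul t_invetaL).mul (t_dd0 (c := c))
    refine squeeze_zero_norm' ?_ hb
    filter_upwards [ev_good hc] with E g
    have h0 : 0 ≤ dd c E := g.hdelta_nonneg
    have h1 : dd c E ≤ 1 := g.hdelta_le1
    have hLpos : 0 < LL E := g.hLpos
    have hepos : 0 < eta E := g.hetapos
    have hexp : |Real.exp (-dd c E) - (1 - dd c E + dd c E ^ 2 / 2)| ≤ dd c E ^ 3 := by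
      have := exp_quad (t := -dd c E) (by rw [abs_neg, abs_of_nonneg h0]; exact h1)
      rw [abs_neg, abs_of_nonneg h0] at this
      calc |Real.exp (-dd c E) - (1 - dd c E + dd c E ^ 2 / 2)|
          = |Real.exp (-dd c E) - (1 + -dd c E + (-dd c E) ^ 2 / 2)| := by ring_nf
        _ ≤ dd c E ^ 3 := this
    rw [norm_mul, Real.norm_eq_abs, Real.norm_eq_abs, abs_of_pos (div_pos hLpos hepos)]
    calc LL E / eta E * |Real.exp (-dd c E) - (1 - dd c E + dd c E ^ 2 / 2)|
        ≤ LL E / eta E * dd c E ^ 3 :=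
          mul_le_mul_of_nonneg_left hexp (div_pos hLpos hepos).le
      _ = (dd c E * LL E) ^ 2 * (eta E * LL E)⁻¹ * dd c E := by
          field_simp
  have h := (hT1.sub hT2).sub hT3
  simp only [zero_sub, sub_zero] at h
  refine h.congr' ?_
  filter_upwards [ev_good hc] with E g
  have hepos : 0 < eta E := g.hetapos
  have hLpos : 0 < LL E := g.hLpos
  have key : QQ c E - 1 = (c * E - dd c E ^ 2 / 2
      - (Real.exp (-dd c E) - (1 - dd c E + dd c E ^ 2 / 2))) / eta E := by
    rw [QQ, dd]
    field_simp
    ring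
  rw [key]
  field_simp

lemma t_Q (hc : 0 ≤ c) : Tendsto (fun E => QQ c E) (𝓝[>] (0:ℝ)) (𝓝 1) := by
  have h := (t_LQ hc).mul t_invLL
  simp only [mul_zero] at h
  refine tendsto_add_small (g := fun _ => (1:ℝ)) tendsto_const_nhds ?_
  refine h.congr' ?_
  filter_upwards [ev_good hc] with E g
  have hL : LL E ≠ 0 := ne_of_gt g.hLpos
  field_simp

end PPMaux
namespace PPMaux
variable {c : ℝ}

noncomputable def Aa (c E : ℝ) : ℝ := (p0 c E / eta E - 1) * Real.log (bb E)
noncomputable def Bbf (E : ℝ) : ℝ := Real.log (bb E) - (LL E - Real.log (LL E))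
noncomputable def Ccf (c E : ℝ) : ℝ :=
  (p0 c E / eta E) * (Real.log (p0 c E / eta E) - Real.log (ss c E / eta E))
noncomputable def Ddf (c E : ℝ) : ℝ :=
  ((bb E - 1) * p1 c E / eta E) * Real.log (bb E * p1 c E / ss c E)

lemma id_p0eta {E : ℝ} (g : Good c E) :
    p0 c E / eta E = Real.exp (-tt c E) * QQ c E := by
  rw [g.id_p0, QQ, tt, dd]
  field_simp

lemma t_Lp0eta (hc : 0 ≤ c) :
    Tendsto (fun E => LL E * (p0 c E / eta E - 1)) (𝓝[>] (0:ℝ)) (𝓝 (-(c + 1/2))) := by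
  have h := ((t_LP hc).mul (t_Q hc)).add (t_LQ hc)
  have h2 : (-c) * 1 + -(1/2) = -(c + 1/2) := by ring
  rw [h2] at h
  refine h.congr' ?_
  filter_upwards [ev_good hc] with E g
  rw [id_p0eta g]
  ring

lemma t_p0eta (hc : 0 ≤ c) :
    Tendsto (fun E => p0 c E / eta E) (𝓝[>] (0:ℝ)) (𝓝 1) := by
  have h := (t_Lp0eta hc).mul t_invLL
  simp only [mul_zero] at h
  refine tendsto_add_small (g := fun _ => (1:ℝ)) tendsto_const_nhds ?_
  refine h.congr' ?_
  filter_upwards [ev_good hc] with E g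
  have hL : LL E ≠ 0 := ne_of_gt g.hLpos
  field_simp

lemma ev_Bb_eq (hc : 0 ≤ c) :
    ∀ᶠ E in 𝓝[>] (0:ℝ), Bbf E = Real.log (eta E * LL E) := by
  filter_upwards [ev_good hc] with E g
  have hE : (0:ℝ) < E := g.hE
  have hLpos : 0 < LL E := g.hLpos
  have hbpos : 0 < bb E := g.hbpos
  have h1 : eta E * LL E = bb E * (E * LL E) := by rw [eta]; ring
  rw [Bbf, h1, Real.log_mul (ne_of_gt hbpos) (ne_of_gt (mul_pos hE hLpos)),
    Real.log_mul (ne_of_gt hE) (ne_of_gt hLpos)]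
  have hLE : LL E = -Real.log E := by rw [LL, one_div, Real.log_inv]
  rw [hLE]
  ring

lemma t_B (hc : 0 ≤ c) : Tendsto Bbf (𝓝[>] (0:ℝ)) (𝓝 0) := by
  have h := (Real.continuousAt_log one_ne_zero).tendsto.comp t_etaL
  rw [Real.log_one] at h
  exact Tendsto.congr' (by filter_upwards [ev_Bb_eq hc] with E hE using hE.symm) h

lemma t_logbb_div (hc : 0 ≤ c) :
    Tendsto (fun E => Real.log (bb E) / LL E) (𝓝[>] (0:ℝ)) (𝓝 1) := by
  have h := ((t_B hc).mul t_invLL).add ((tendsto_const_nhds (x := (1:ℝ))).sub t_loglogLL)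
  simp only [mul_zero, sub_zero, zero_add] at h
  refine h.congr' ?_
  filter_upwards [ev_good hc] with E g
  have hL : LL E ≠ 0 := ne_of_gt g.hLpos
  rw [Bbf]
  field_simp
  ring

lemma t_A (hc : 0 ≤ c) : Tendsto (Aa c) (𝓝[>] (0:ℝ)) (𝓝 (-(c + 1/2))) := by
  have h := (t_Lp0eta hc).mul (t_logbb_div hc)
  simp only [mul_one] at h
  refine h.congr' ?_
  filter_upwards [ev_good hc] with E g
  have hL : LL E ≠ 0 := ne_of_gt g.hLpos
  rw [Aa]
  field_simp

end PPMaux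
namespace PPMaux
variable {c : ℝ}

noncomputable def MM (c E : ℝ) : ℝ := (bb E - 1) * p1 c E / eta E

lemma t_w (hc : 0 ≤ c) :
    Tendsto (fun E => (1 - Real.exp (-(c * E))) / E) (𝓝[>] (0:ℝ)) (𝓝 c) := by
  refine tendsto_add_small (g := fun _ => c) tendsto_const_nhds ?_
  have hb : Tendsto (fun E : ℝ => c ^ 2 * E) (𝓝[>] (0:ℝ)) (𝓝 0) := by
    simpa using t_E0.const_mul (c ^ 2)
  refine squeeze_zero_norm' ?_ hb
  filter_upwards [ev_good hc] with E g
  have hE : (0:ℝ) < E := g.hE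
  have hcE1 : c * E ≤ 1 := le_trans g.hcE_le g.hceta_lt1
  have hcE0 : 0 ≤ c * E := mul_nonneg hc hE.le
  have hexp : |Real.exp (-(c * E)) - (1 + -(c * E))| ≤ (c * E) ^ 2 := by
    have := exp_lin (t := -(c * E)) (by rw [abs_neg, abs_of_nonneg hcE0]; exact hcE1)
    calc |Real.exp (-(c * E)) - (1 + -(c * E))| ≤ (-(c * E)) ^ 2 := this
      _ = (c * E) ^ 2 := by ring
  have key : (1 - Real.exp (-(c * E))) / E - c
      = -(Real.exp (-(c * E)) - (1 + -(c * E))) / E := by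
    field_simp
    ring
  rw [key, norm_div, norm_neg, Real.norm_eq_abs, Real.norm_eq_abs, abs_of_pos hE,
    div_le_iff₀ hE]
  calc |Real.exp (-(c * E)) - (1 + -(c * E))| ≤ (c * E) ^ 2 := hexp
    _ = c ^ 2 * E * E := by ring

lemma t_exp1 (hc : 0 ≤ c) :
    Tendsto (fun E => Real.exp (-eta E - tt c E)) (𝓝[>] (0:ℝ)) (𝓝 1) := by
  have h : Tendsto (fun E => -eta E - tt c E) (𝓝[>] (0:ℝ)) (𝓝 0) := by
    simpa using (t_eta0.neg).sub (t_t0 (c := c))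
  have := Real.continuous_exp.continuousAt.tendsto.comp h
  simpa [Function.comp_def] using this

lemma t_p1E (hc : 0 ≤ c) :
    Tendsto (fun E => p1 c E / E) (𝓝[>] (0:ℝ)) (𝓝 c) := by
  have h := (t_exp1 hc).mul (t_w hc)
  simp only [one_mul] at h
  refine h.congr' ?_
  filter_upwards [ev_good hc] with E g
  have hE : E ≠ 0 := ne_of_gt g.hE
  rw [g.id_p1]
  rw [tt]
  field_simp

lemma t_M (hc : 0 ≤ c) : Tendsto (MM c) (𝓝[>] (0:ℝ)) (𝓝 c) := by
  have h1 : Tendsto (fun E => (1 - (bb E)⁻¹) * (p1 c E / E)) (𝓝[>] (0:ℝ)) (𝓝 c) := by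
    have := ((tendsto_const_nhds (x := (1:ℝ))).sub t_invbb).mul (t_p1E hc)
    simpa using this
  refine h1.congr' ?_
  filter_upwards [ev_good hc] with E g
  have hb : bb E ≠ 0 := ne_of_gt g.hbpos
  have hE : E ≠ 0 := ne_of_gt g.hE
  rw [MM, eta]
  field_simp

lemma t_s (hc : 0 ≤ c) :
    Tendsto (fun E => ss c E / eta E) (𝓝[>] (0:ℝ)) (𝓝 (1 + c)) := by
  have h := (t_p0eta hc).add (t_M hc)
  refine h.congr' ?_
  filter_upwards [ev_good hc] with E g
  have he : eta E ≠ 0 := ne_of_gt g.hetapos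
  rw [MM, ss]
  field_simp

lemma t_C (hc : 0 ≤ c) : Tendsto (Ccf c) (𝓝[>] (0:ℝ)) (𝓝 (-Real.log (1 + c))) := by
  have hlog1 : Tendsto (fun E => Real.log (p0 c E / eta E)) (𝓝[>] (0:ℝ)) (𝓝 0) := by
    have := (Real.continuousAt_log one_ne_zero).tendsto.comp (t_p0eta hc)
    simpa [Function.comp_def] using this
  have hlog2 : Tendsto (fun E => Real.log (ss c E / eta E)) (𝓝[>] (0:ℝ))
      (𝓝 (Real.log (1 + c))) := by
    have hne : (1 + c : ℝ) ≠ 0 := by linarith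
    exact (Real.continuousAt_log hne).tendsto.comp (t_s hc)
  have h := (t_p0eta hc).mul (hlog1.sub hlog2)
  rw [show Ccf c = fun E => p0 c E / eta E * (Real.log (p0 c E / eta E) - Real.log (ss c E / eta E)) from rfl]
  simpa using h

lemma t_D (hc : 0 ≤ c) :
    Tendsto (Ddf c) (𝓝[>] (0:ℝ)) (𝓝 (c * (Real.log c - Real.log (1 + c)))) := by
  rcases eq_or_lt_of_le hc with rfl | hcpos
  · have hD0 : ∀ E : ℝ, Ddf 0 E = 0 := by
      intro E
      have hp1 : p1 0 E = 0 := by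
        rw [p1]; ring_nf
      rw [Ddf, hp1]; ring
    simp only [Real.log_zero, zero_mul]  -- target const
    have : (fun E => Ddf 0 E) = fun _ => (0:ℝ) := funext hD0
    rw [show Ddf 0 = fun _ => (0:ℝ) from funext hD0]
    simpa using tendsto_const_nhds
  · have hlogp1E : Tendsto (fun E => Real.log (p1 c E / E)) (𝓝[>] (0:ℝ))
        (𝓝 (Real.log c)) :=
      (Real.continuousAt_log (ne_of_gt hcpos)).tendsto.comp (t_p1E hc)
    have hlog2 : Tendsto (fun E => Real.log (ss c E / eta E)) (𝓝[>] (0:ℝ))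
        (𝓝 (Real.log (1 + c))) := by
      have hne : (1 + c : ℝ) ≠ 0 := by linarith
      exact (Real.continuousAt_log hne).tendsto.comp (t_s hc)
    have h := (t_M hc).mul (hlogp1E.sub hlog2)
    refine h.congr' ?_
    filter_upwards [ev_good hc] with E g
    have hE : (0:ℝ) < E := g.hE
    have hp1pos : 0 < p1 c E := by
      rw [g.id_p1]
      have h1 : Real.exp (-(c * E)) < 1 := by
        rw [Real.exp_lt_one_iff]
        have : 0 < c * E := mul_pos hcpos hE
        linarith
      have h2 : 0 < Real.exp (-eta E - (bb E - 1) * c * E) := Real.exp_pos _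
      nlinarith
    have hsspos : 0 < ss c E := g.hsspos
    have hkey : bb E * p1 c E / ss c E = (p1 c E / E) / (ss c E / eta E) := by
      rw [eta]
      field_simp
    rw [Ddf, MM, hkey,
      Real.log_div (ne_of_gt (div_pos hp1pos hE)) (ne_of_gt (div_pos hsspos g.hetapos))]
  
end PPMaux
namespace PPMaux

lemma id_decomp {c E : ℝ} (g : Good c E) :
    simplePPMEfficiency c E - LL E + Real.log (LL E)
      = Bbf E + Aa c E + Ccf c E + Ddf c E := by
  have hb : bb E ≠ 0 := ne_of_gt g.hbpos
  have hp0 : p0 c E ≠ 0 := ne_of_gt g.hp0pos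
  have hss : ss c E ≠ 0 := ne_of_gt g.hsspos
  have heta : eta E ≠ 0 := ne_of_gt g.hetapos
  have hlog : Real.log (bb E * p0 c E / ss c E)
      = Real.log (bb E) + Real.log (p0 c E / eta E) - Real.log (ss c E / eta E) := by
    rw [Real.log_div (mul_ne_zero hb hp0) hss, Real.log_mul hb hp0,
      Real.log_div hp0 heta, Real.log_div hss heta]
    ring
  rw [eff_eq, hlog, Bbf, Aa, Ccf, Ddf]
  field_simp
  ring

end PPMaux

/-- Asymptotic lower bound on the photon efficiency of simple PPM. -/
theorem stmt_3 (c : ℝ) (hc : 0 ≤ c) :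
    Filter.liminf
        (fun E : ℝ =>
          simplePPMEfficiency c E - Real.log (1 / E) + Real.log (Real.log (1 / E)))
        (nhdsWithin 0 (Set.Ioi 0))
      ≥ -c - Real.log (1 + c) - 3 / 2 := by
  open PPMaux in
  have hl : Tendsto
      (fun E : ℝ => simplePPMEfficiency c E - Real.log (1 / E) + Real.log (Real.log (1 / E)))
      (𝓝[>] (0:ℝ))
      (𝓝 (0 + -(c + 1/2) + -Real.log (1 + c) + c * (Real.log c - Real.log (1 + c)))) := by
    have h := (((t_B hc).add (t_A hc)).add (t_C hc)).add (t_D hc)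
    refine h.congr' ?_
    filter_upwards [ev_good hc] with E g
    have := (id_decomp g).symm
    simpa [LL] using this
  have hlim := hl.liminf_eq
  rw [ge_iff_le, hlim]
  rcases eq_or_lt_of_le hc with rfl | hcpos
  · norm_num
  · have h1 : Real.log (1 + c) - Real.log c ≤ 1 / c := by
      have hpos : (0:ℝ) < (1 + c) / c := by positivity
      have := Real.log_le_sub_one_of_pos hpos
      rw [Real.log_div (by linarith) (ne_of_gt hcpos)] at this
      have : Real.log (1 + c) - Real.log c ≤ (1 + c) / c - 1 := this
      calc Real.log (1 + c) - Real.log c ≤ (1 + c) / c - 1 := this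
        _ = 1 / c := by field_simp; ring
    have h2 : c * (Real.log c - Real.log (1 + c)) ≥ -1 := by
      have h3 := mul_le_mul_of_nonneg_left h1 hc
      have hcc : c * (1 / c) = 1 := by field_simp
      nlinarith
    linarith
end

section
/- Let b ≥ 2 be an integer and let p2, p3 be real numbers with 0 < p3 ≤ p2. Then (b−1)·p2·log(b·p2/(2·p2+(b−2)·p3)) + ((b−1)(b−2)/2)·p3·log(b·p3/(2·p2+(b−2)·p3)) ≥ (b−1)·p2·log(b/2) − (b²/2)·p3 − b·p2. -/
set_option maxHeartbeats 1000000


/-- Lower bound on the additional mutual-information terms of the soft-decision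
PPM super channel. -/
theorem stmt_4 (b : ℕ) (hb : 2 ≤ b) (p2 p3 : ℝ) (hp3 : 0 < p3) (hle : p3 ≤ p2) :
    ((b : ℝ) - 1) * p2 * Real.log ((b : ℝ) * p2 / (2 * p2 + ((b : ℝ) - 2) * p3))
      + (((b : ℝ) - 1) * ((b : ℝ) - 2) / 2) * p3
          * Real.log ((b : ℝ) * p3 / (2 * p2 + ((b : ℝ) - 2) * p3))
    ≥ ((b : ℝ) - 1) * p2 * Real.log ((b : ℝ) / 2) - ((b : ℝ) ^ 2 / 2) * p3
        - (b : ℝ) * p2 := by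
  set B : ℝ := (b : ℝ) with hBdef
  have hB2 : (2:ℝ) ≤ B := by rw [hBdef]; exact_mod_cast hb
  have hBpos : 0 < B := by linarith
  have hp2 : 0 < p2 := lt_of_lt_of_le hp3 hle
  set D : ℝ := 2 * p2 + (B - 2) * p3 with hDdef
  have hD : 0 < D := by
    have : 0 ≤ (B - 2) * p3 := mul_nonneg (by linarith) hp3.le
    have : 0 < 2 * p2 := by linarith
    simp only [hDdef]; nlinarith
  -- log x ≥ 1 - 1/x style bounds
  have key1 : Real.log (2 * p2 / D) ≥ 1 - D / (2 * p2) := by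
    have h := Real.log_le_sub_one_of_pos (show 0 < D / (2 * p2) by positivity)
    rw [Real.log_div (ne_of_gt hD) (by positivity)] at h
    rw [Real.log_div (by positivity) (ne_of_gt hD)]
    linarith
  have key2 : Real.log (B * p3 / D) ≥ 1 - D / (B * p3) := by
    have h := Real.log_le_sub_one_of_pos (show 0 < D / (B * p3) by positivity)
    rw [Real.log_div (ne_of_gt hD) (by positivity)] at h
    rw [Real.log_div (by positivity) (ne_of_gt hD)]
    linarith
  -- split the first log
  have hsplit : Real.log (B * p2 / D) = Real.log (B / 2) + Real.log (2 * p2 / D) := by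
    rw [show B * p2 / D = (B / 2) * (2 * p2 / D) by field_simp,
      Real.log_mul (by positivity) (by positivity)]
  rw [hsplit]
  have c1 : (0:ℝ) ≤ (B - 1) * p2 := mul_nonneg (by linarith) hp2.le
  have c2 : (0:ℝ) ≤ (B - 1) * (B - 2) / 2 * p3 :=
    mul_nonneg (by nlinarith) hp3.le
  have h1 : (B - 1) * p2 * Real.log (2 * p2 / D) ≥ (B - 1) * p2 - (B - 1) * D / 2 := by
    have := mul_le_mul_of_nonneg_left key1 c1
    have e : (B - 1) * p2 * (1 - D / (2 * p2)) = (B - 1) * p2 - (B - 1) * D / 2 := by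
      field_simp
    linarith [e ▸ this]
  have h2 : (B - 1) * (B - 2) / 2 * p3 * Real.log (B * p3 / D)
      ≥ (B - 1) * (B - 2) / 2 * p3 - (B - 1) * (B - 2) * D / (2 * B) := by
    have := mul_le_mul_of_nonneg_left key2 c2
    have e : (B - 1) * (B - 2) / 2 * p3 * (1 - D / (B * p3))
        = (B - 1) * (B - 2) / 2 * p3 - (B - 1) * (B - 2) * D / (2 * B) := by
      field_simp
    linarith [e ▸ this]
  have hfin : (B - 1) * p2 - (B - 1) * D / 2
      + ((B - 1) * (B - 2) / 2 * p3 - (B - 1) * (B - 2) * D / (2 * B))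
      ≥ -(B ^ 2 / 2) * p3 - B * p2 := by
    rw [ge_iff_le, ← sub_nonneg]
    have hBne : B ≠ 0 := ne_of_gt hBpos
    have expand : (B - 1) * p2 - (B - 1) * D / 2
        + ((B - 1) * (B - 2) / 2 * p3 - (B - 1) * (B - 2) * D / (2 * B))
        - (-(B ^ 2 / 2) * p3 - B * p2)
        = ((B ^ 2 - (B - 1) * (B - 2)) * (2 * p2) + (B ^ 3 - (B - 1) * (B - 2) ^ 2) * p3)
          / (2 * B) := by
      simp only [hDdef]; field_simp; ring
    rw [expand]
    apply div_nonneg _ (by linarith)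
    have t1 : (B - 1) * (B - 2) ≤ B ^ 2 := by nlinarith
    have t2 : (B - 1) * (B - 2) ^ 2 ≤ B ^ 3 := by nlinarith
    nlinarith [mul_nonneg (sub_nonneg.2 t1) hp2.le, mul_nonneg (sub_nonneg.2 t2) hp3.le]
  rw [mul_add]
  linarith
end

section
/- Let c ≥ 0 and E ∈ (0,1) satisfy E·log(1/E) < 1 and E < e^{−c}. Set b := ⌊1/(E·log(1/E))⌋, η := b·E, p0 := e^{−(b−1)cE} − e^{−η−b·cE}, p1 := e^{−η−(b−1)cE} − e^{−η−b·cE}, p2 := (1 − e^{−η−cE})·(1 − e^{−cE})·e^{−(b−2)cE}, and p3 := e^{−η−cE}·(1 − e^{−cE})²·e^{−(b−3)cE}. Then (1/η)·[ p0·log(b·p0/(p0+(b−1)·p1)) + (b−1)·p1·log(b·p1/(p0+(b−1)·p1)) + (b−1)·p2·log(b·p2/(2·p2+(b−2)·p3)) + ((b−1)(b−2)/2)·p3·log(b·p3/(2·p2+(b−2)·p3)) ] ≥ (1−η/2)·log b − c·η·log b − (1 + cE/η)·log(1+c) + (1 + cE/η)·( log(1−c·η) + log(1−η/2) ) − 1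 − cE/η + (1−η/2)·(b−1)·(c·E − c²·E²/2)·(1−c·η)·log(b/2) − (c²/2)·η − c·(η + c·E). -/
open Real

lemma aux_log_lb {z : ℝ} (hz : 0 < z) : 1 - 1/z ≤ Real.log z := by
  have h := Real.log_le_sub_one_of_pos (show (0:ℝ) < 1/z by positivity)
  rw [one_div, Real.log_inv] at h
  have : (1:ℝ)/z = z⁻¹ := one_div z
  linarith

lemma aux_log_nonpos {u : ℝ} (h1 : -1 ≤ u) (h2 : u ≤ 1) : Real.log u ≤ 0 := by
  rw [← Real.log_abs]
  exact Real.log_nonpos (abs_nonneg u) (abs_le.2 ⟨h1, h2⟩)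

lemma aux_one_sub_exp {y : ℝ} (hy : 0 ≤ y) : y - y^2/2 ≤ 1 - Real.exp (-y) := by
  rcases le_or_gt y 1 with h1 | h1
  · have hb := Real.exp_bound (x := -y) (by rw [abs_neg, abs_of_nonneg hy]; exact h1)
      (n := 4) (by norm_num)
    norm_num [Finset.sum_range_succ, Nat.factorial, abs_neg, abs_of_nonneg hy] at hb
    have h4 := (abs_sub_le_iff.1 hb).1
    nlinarith [pow_nonneg hy 3, pow_nonneg hy 4]
  · have he : 1 + y ≤ Real.exp y := by have := Real.add_one_le_exp y; linarith
    have hp : (0:ℝ) < 1 + y := by linarith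
    have h2 : Real.exp (-y) ≤ 1/(1+y) := by
      rw [Real.exp_neg, inv_eq_one_div]
      exact one_div_le_one_div_of_le hp he
    have h3 : 1/(1+y) ≤ 1 - y + y^2/2 := by
      rw [div_le_iff₀ hp]; nlinarith
    linarith

set_option maxHeartbeats 1000000 in
/-- Proposition 2: photon-efficiency lower bound achieved by soft-decision PPM. -/
theorem stmt_6 (c E : ℝ) (hc : 0 ≤ c) (hE0 : 0 < E) (hE1 : E < 1)
    (hcond1 : E * Real.log (1 / E) < 1) (hcond2 : E < Real.exp (-c))
    (b : ℕ) (hb : b = ⌊1 / (E * Real.log (1 / E))⌋₊)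
    (η p0 p1 p2 p3 : ℝ) (hη : η = (b : ℝ) * E)
    (hp0 : p0 = Real.exp (-(((b : ℝ) - 1) * c * E)) - Real.exp (-η - (b : ℝ) * c * E))
    (hp1 : p1 = Real.exp (-η - ((b : ℝ) - 1) * c * E) - Real.exp (-η - (b : ℝ) * c * E))
    (hp2 : p2 = (1 - Real.exp (-η - c * E)) * (1 - Real.exp (-(c * E)))
        * Real.exp (-(((b : ℝ) - 2) * c * E)))
    (hp3 : p3 = Real.exp (-η - c * E) * (1 - Real.exp (-(c * E))) ^ 2
        * Real.exp (-(((b : ℝ) - 3) * c * E))) :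
    (1 / η) * (p0 * Real.log ((b : ℝ) * p0 / (p0 + ((b : ℝ) - 1) * p1))
        + ((b : ℝ) - 1) * p1 * Real.log ((b : ℝ) * p1 / (p0 + ((b : ℝ) - 1) * p1))
        + ((b : ℝ) - 1) * p2 * Real.log ((b : ℝ) * p2 / (2 * p2 + ((b : ℝ) - 2) * p3))
        + (((b : ℝ) - 1) * ((b : ℝ) - 2) / 2) * p3
            * Real.log ((b : ℝ) * p3 / (2 * p2 + ((b : ℝ) - 2) * p3)))
    ≥ (1 - η / 2) * Real.log (b : ℝ) - c * η * Real.log (b : ℝ)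
        - (1 + c * E / η) * Real.log (1 + c)
        + (1 + c * E / η) * (Real.log (1 - c * η) + Real.log (1 - η / 2))
        - 1 - c * E / η
        + (1 - η / 2) * ((b : ℝ) - 1) * (c * E - c ^ 2 * E ^ 2 / 2) * (1 - c * η)
            * Real.log ((b : ℝ) / 2)
        - (c ^ 2 / 2) * η - c * (η + c * E) := by
  -- ====== basic facts ======
  have h1E : (1:ℝ) < 1/E := by rw [lt_div_iff₀ hE0]; linarith
  have hL : 0 < Real.log (1/E) := Real.log_pos h1E
  have hEL : 0 < E * Real.log (1/E) := mul_pos hE0 hL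
  have hfloor_le : (b:ℝ) ≤ 1/(E*Real.log (1/E)) := by
    rw [hb]; exact Nat.floor_le (by positivity)
  have hlogE : Real.log (1/E) = -Real.log E := by rw [one_div, Real.log_inv]
  have hkey : Real.log (1/E) ≤ 1/(Real.exp 1 * E) := by
    have h := Real.log_le_sub_one_of_pos (show (0:ℝ) < 1/(Real.exp 1 * E) by positivity)
    rw [one_div, Real.log_inv, Real.log_mul (Real.exp_pos 1).ne' hE0.ne', Real.log_exp] at h
    rw [inv_eq_one_div] at h
    rw [hlogE]; linarith
  have hexp2 : (2:ℝ) ≤ Real.exp 1 := by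
    have := Real.add_one_le_exp 1; linarith
  have hEL2 : E * Real.log (1/E) ≤ 1/2 := by
    have h2 : E * Real.log (1/E) ≤ E * (1/(Real.exp 1 * E)) :=
      mul_le_mul_of_nonneg_left hkey hE0.le
    have h3 : E * (1/(Real.exp 1 * E)) = 1/Real.exp 1 := by
      field_simp
    rw [h3] at h2
    have h4 : (1:ℝ)/Real.exp 1 ≤ 1/2 := by
      apply one_div_le_one_div_of_le <;> linarith
    linarith
  have hb2 : 2 ≤ b := by
    rw [hb]
    apply Nat.le_floor
    push_cast
    rw [le_div_iff₀ hEL]; linarith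
  have hbR : (2:ℝ) ≤ (b:ℝ) := by exact_mod_cast hb2
  have hbpos : (0:ℝ) < (b:ℝ) := by linarith
  have hη0 : 0 < η := by rw [hη]; positivity
  have hcL : c < Real.log (1/E) := by
    have h := Real.log_lt_log hE0 hcond2
    rw [Real.log_exp] at h; rw [hlogE]; linarith
  have hηle : η * Real.log (1/E) ≤ 1 := by
    rw [hη]
    calc (b:ℝ) * E * Real.log (1/E) = (b:ℝ) * (E * Real.log (1/E)) := by ring
      _ ≤ (1/(E*Real.log (1/E))) * (E * Real.log (1/E)) :=
          mul_le_mul_of_nonneg_right hfloor_le hEL.le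
      _ = 1 := by field_simp
  have hcη1 : c * η < 1 := by
    have h := mul_lt_mul_of_pos_right hcL hη0
    have h2 := mul_le_mul_of_nonneg_right hfloor_le hEL.le
    linarith only [h, hηle]
  have hcη0 : 0 ≤ c * η := mul_nonneg hc hη0.le
  have hd0 : 0 ≤ c * E := mul_nonneg hc hE0.le
  have hbcE : (b:ℝ) * (c * E) = c * η := by rw [hη]; ring
  have hx0 : 0 < η + c * E := by linarith
  have hL0 : 0 ≤ Real.log (b:ℝ) := Real.log_nonneg (by linarith)
  have hC1 : 0 ≤ Real.log (1 + c) := Real.log_nonneg (by linarith)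
  have hLneg : Real.log (1 - c*η) ≤ 0 := aux_log_nonpos (by linarith) (by linarith)
  have hlogb2 : 0 ≤ Real.log ((b:ℝ)/2) := Real.log_nonneg (by rw [le_div_iff₀ (by norm_num : (0:ℝ)<2)]; linarith)
  -- ====== factored forms ======
  obtain ⟨A, hA_def⟩ : ∃ A : ℝ, A = Real.exp (-(((b:ℝ)-1) * c * E)) := ⟨_, rfl⟩
  obtain ⟨px, hpx_def⟩ : ∃ px : ℝ, px = 1 - Real.exp (-(η + c*E)) := ⟨_, rfl⟩
  obtain ⟨w, hw_def⟩ : ∃ w : ℝ, w = ((b:ℝ)-1) * (Real.exp (-η) * (1 - Real.exp (-(c*E)))) :=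
    ⟨_, rfl⟩
  have hA0 : 0 < A := hA_def ▸ Real.exp_pos _
  have hA1 : A ≤ 1 := hA_def ▸ Real.exp_le_one_iff.mpr (by
    have := mul_nonneg (mul_nonneg (show (0:ℝ) ≤ (b:ℝ)-1 by linarith only [hbR]) hc) hE0.le
    linarith only [this])
  have hAlb : 1 - c*η ≤ A := by
    have h := Real.add_one_le_exp (-(((b:ℝ)-1) * c * E))
    rw [← hA_def] at h
    have hb1 : ((b:ℝ)-1) * c * E = c*η - c*E := by rw [← hbcE]; ring
    linarith only [h, hb1, hd0]
  have hpx0 : 0 < px := by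
    have : Real.exp (-(η + c*E)) < 1 := Real.exp_lt_one_iff.mpr (by linarith)
    rw [hpx_def]; linarith
  have hpxle : px ≤ η + c*E := by
    have h := Real.add_one_le_exp (-(η + c*E))
    rw [hpx_def]; linarith
  have hpxlb : η - η^2/2 ≤ px := by
    have h1 : Real.exp (-(η + c*E)) ≤ Real.exp (-η) := Real.exp_le_exp.2 (by linarith)
    have h2 := aux_one_sub_exp hη0.le
    rw [hpx_def]; linarith
  have he_d_ub : 1 - Real.exp (-(c*E)) ≤ c*E := by
    have := Real.add_one_le_exp (-(c*E)); linarith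
  have he_d_lb : 0 ≤ 1 - Real.exp (-(c*E)) := by
    have : Real.exp (-(c*E)) ≤ 1 := Real.exp_le_one_iff.mpr (by linarith)
    linarith
  have hw0 : 0 ≤ w := by
    rw [hw_def]
    exact mul_nonneg (by linarith) (mul_nonneg (Real.exp_pos _).le he_d_lb)
  have hwcp : w ≤ c * px := by
    have hb1 : ((b:ℝ)-1) * (c*E) ≤ c*η := by
      have : ((b:ℝ)-1) * (c*E) = c*η - c*E := by rw [← hbcE]; ring
      linarith
    have h1 : w ≤ ((b:ℝ)-1) * (Real.exp (-η) * (c*E)) := by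
      rw [hw_def]
      exact mul_le_mul_of_nonneg_left
        (mul_le_mul_of_nonneg_left he_d_ub (Real.exp_pos _).le) (by linarith)
    have h2 := mul_le_mul_of_nonneg_right hb1 (Real.exp_pos (-η)).le
    have h3 : η * Real.exp (-η) ≤ 1 - Real.exp (-η) := by
      have hh := mul_le_mul_of_nonneg_right (Real.add_one_le_exp η) (Real.exp_pos (-η)).le
      have hee : Real.exp η * Real.exp (-η) = 1 := by
        rw [← Real.exp_add]; simp
      rw [hee] at hh; nlinarith only [hh, Real.exp_pos (-η)]
    have h4 : 1 - Real.exp (-η) ≤ px := by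
      have : Real.exp (-(η + c*E)) ≤ Real.exp (-η) := Real.exp_le_exp.2 (by linarith)
      rw [hpx_def]; linarith
    have h5 := mul_le_mul_of_nonneg_left h3 hc
    have h6 := mul_le_mul_of_nonneg_left h4 hc
    linarith only [h1, h2, h5, h6]
  have hp0f : p0 = A * px := by
    have e1 : Real.exp (-(((b:ℝ)-1) * c * E)) * Real.exp (-(η + c*E))
        = Real.exp (-η - (b:ℝ)*c*E) := by
      rw [← Real.exp_add]; congr 1; ring
    rw [hp0, hA_def, hpx_def]
    linear_combination e1
  have hp1f : ((b:ℝ)-1) * p1 = A * w := by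
    have e1 : Real.exp (-(((b:ℝ)-1) * c * E)) * Real.exp (-η)
        = Real.exp (-η - ((b:ℝ)-1)*c*E) := by
      rw [← Real.exp_add]; congr 1; ring
    have e2 : Real.exp (-(((b:ℝ)-1) * c * E)) * (Real.exp (-η) * Real.exp (-(c*E)))
        = Real.exp (-η - (b:ℝ)*c*E) := by
      rw [← Real.exp_add, ← Real.exp_add]; congr 1; ring
    rw [hp1, hA_def, hw_def]
    linear_combination (1-(b:ℝ)) * e1 + ((b:ℝ)-1) * e2
  have hp0pos : 0 < p0 := by rw [hp0f]; positivity
  have hsf : p0 + ((b:ℝ)-1) * p1 = A * (px + w) := by rw [hp0f, hp1f]; ring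
  have hspos : 0 < p0 + ((b:ℝ)-1) * p1 := by rw [hsf]; positivity
  have hsle : p0 + ((b:ℝ)-1) * p1 ≤ (1+c) * p0 := by
    rw [hsf, hp0f]
    have := mul_le_mul_of_nonneg_left hwcp hA0.le
    linarith only [this]
  -- ====== Part B : T0 and T1 ======
  have hT0 : p0 * (Real.log (b:ℝ) - Real.log (1+c))
      ≤ p0 * Real.log ((b:ℝ) * p0 / (p0 + ((b:ℝ) - 1) * p1)) := by
    have hfrac : (b:ℝ)/(1+c) ≤ (b:ℝ)*p0/(p0 + ((b:ℝ)-1)*p1) := by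
      rw [div_le_div_iff₀ (by positivity) hspos]
      have h2 := mul_le_mul_of_nonneg_left hsle hbpos.le
      linarith only [h2]
    have hlog := Real.log_le_log (by positivity) hfrac
    have hsplit : Real.log ((b:ℝ)/(1+c)) = Real.log (b:ℝ) - Real.log (1+c) :=
      Real.log_div (ne_of_gt hbpos) (by positivity)
    rw [hsplit] at hlog
    exact mul_le_mul_of_nonneg_left hlog hp0pos.le
  have hT1 : -(A*px) ≤ ((b:ℝ) - 1) * p1 * Real.log ((b:ℝ) * p1 / (p0 + ((b:ℝ) - 1) * p1)) := by
    rcases hw0.eq_or_lt with hw|hw'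
    · have h0 : ((b:ℝ)-1) * p1 = 0 := by rw [hp1f, ← hw, mul_zero]
      rw [h0, zero_mul]
      have := mul_pos hA0 hpx0
      linarith only [this]
    · have hb1 : (0:ℝ) < (b:ℝ) - 1 := by linarith only [hbR]
      have hp1pos : 0 < p1 := by
        have hAw : 0 < A*w := mul_pos hA0 hw'
        rw [← hp1f] at hAw
        nlinarith only [hAw, hb1]
      have hfrac : w/(px+w) ≤ (b:ℝ)*p1/(p0 + ((b:ℝ)-1)*p1) := by
        rw [div_le_div_iff₀ (by positivity) hspos]
        have h1 : A*w ≤ (b:ℝ)*p1 := by linarith only [hp1f, hp1pos]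
        have h2 := mul_le_mul_of_nonneg_right h1
          (show (0:ℝ) ≤ px + w by linarith only [hpx0, hw0])
        rw [hsf]
        linarith only [h2]
      have hlog1 : Real.log (w/(px+w)) ≤ Real.log ((b:ℝ)*p1/(p0 + ((b:ℝ)-1)*p1)) :=
        Real.log_le_log (by positivity) hfrac
      have hlog2 : 1 - (px+w)/w ≤ Real.log (w/(px+w)) := by
        have h := aux_log_lb (show (0:ℝ) < w/(px+w) by positivity)
        rwa [one_div_div] at h
      have hmul := mul_le_mul_of_nonneg_left (le_trans hlog2 hlog1)
        (show (0:ℝ) ≤ A*w from (mul_pos hA0 hw').le)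
      have hid : A*w*(1 - (px+w)/w) = -(A*px) := by field_simp; ring
      rw [hid] at hmul
      rwa [← hp1f] at hmul
  -- ====== Part B : combine ======
  have hmle : A*px ≤ η + c*E := by
    have h1 : A*px ≤ px := by nlinarith only [hA1, hpx0, hA0]
    linarith only [h1, hpxle]
  have hmlb : (1 - c*η)*(η - η^2/2) ≤ A*px := by
    have t1 := mul_nonneg (sub_nonneg.2 hAlb) hpx0.le
    have t2 := mul_nonneg (show (0:ℝ) ≤ 1-c*η by linarith only [hcη1])
      (sub_nonneg.2 hpxlb)
    nlinarith only [t1, t2]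
  have hPartB : η * ((1 - η / 2) * Real.log (b:ℝ) - c * η * Real.log (b:ℝ)
        - (1 + c * E / η) * Real.log (1 + c)
        + (1 + c * E / η) * (Real.log (1 - c * η) + Real.log (1 - η / 2)) - 1 - c * E / η)
      ≤ p0 * Real.log ((b:ℝ) * p0 / (p0 + ((b:ℝ) - 1) * p1))
        + ((b:ℝ) - 1) * p1 * Real.log ((b:ℝ) * p1 / (p0 + ((b:ℝ) - 1) * p1)) := by
    have hexp : η * ((1 - η / 2) * Real.log (b:ℝ) - c * η * Real.log (b:ℝ)
          - (1 + c * E / η) * Real.log (1 + c)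
          + (1 + c * E / η) * (Real.log (1 - c * η) + Real.log (1 - η / 2)) - 1 - c * E / η)
        = (η - η^2/2 - c*η^2) * Real.log (b:ℝ) - (η + c*E) * Real.log (1+c)
          + (η + c*E) * (Real.log (1 - c*η) + Real.log (1 - η/2)) - (η + c*E) := by
      field_simp
      ring
    have hkey2 : (η - η^2/2 - c*η^2) * Real.log (b:ℝ) - (η + c*E) * Real.log (1+c)
          + (η + c*E) * (Real.log (1 - c*η) + Real.log (1 - η/2)) - (η + c*E)
        ≤ p0 * (Real.log (b:ℝ) - Real.log (1+c)) - A*px := by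
      rw [hp0f]
      rcases le_or_gt η 4 with hη4|hη4
      · have hLh : Real.log (1 - η/2) ≤ 0 :=
          aux_log_nonpos (by linarith only [hη4]) (by linarith only [hη0])
        have t1 : 0 ≤ (A*px - (η - η^2/2 - c*η^2)) * Real.log (b:ℝ) := by
          apply mul_nonneg _ hL0
          nlinarith only [hmlb, mul_nonneg hcη0 (sq_nonneg η)]
        have t2 : 0 ≤ ((η + c*E) - A*px) * (Real.log (1+c) + 1) :=
          mul_nonneg (by linarith only [hmle]) (by linarith only [hC1])
        have t3 : 0 ≤ (η + c*E) * (-(Real.log (1 - c*η) + Real.log (1 - η/2))) :=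
          mul_nonneg hx0.le (by linarith only [hLneg, hLh])
        nlinarith only [t1, t2, t3]
      · -- η > 4
        have hc4 : c ≤ 1/4 := by
          nlinarith only [hcη1, hη4, hc, mul_nonneg hc (show (0:ℝ) ≤ η - 4 by linarith only [hη4])]
        have hb4 : (4:ℝ) < (b:ℝ) := by
          have h1 : 0 ≤ (b:ℝ)*(1-E) := mul_nonneg hbpos.le (by linarith only [hE1])
          nlinarith only [h1, hη, hη4]
        have hb5 : (5:ℝ) ≤ (b:ℝ) := by
          have : (4:ℕ) < b := by exact_mod_cast hb4
          exact_mod_cast this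
        have hL4 : Real.log (4:ℝ) ≤ Real.log (b:ℝ) := Real.log_le_log (by norm_num) hb4.le
        have hlog4 : Real.log (4:ℝ) = 2 * Real.log 2 := by
          rw [show (4:ℝ) = 2^2 by norm_num, Real.log_pow]
          push_cast; ring
        have hL2120 : 21/20 ≤ Real.log (b:ℝ) := by
          rw [hlog4] at hL4
          have h2 := Real.log_two_gt_d9
          linarith only [hL4, h2]
        have hd20 : c*E ≤ η/20 := by
          have h1 : 5*(c*E) ≤ (b:ℝ)*(c*E) := by
            have := mul_le_mul_of_nonneg_right hb5 hd0
            linarith only [this]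
          have h2 : c*η ≤ η/4 := by
            have := mul_le_mul_of_nonneg_right hc4 hη0.le
            linarith only [this]
          linarith only [h1, h2, hbcE]
        have hLh' : Real.log (1 - η/2) ≤ η/2 - 2 := by
          have hrw : Real.log (1 - η/2) = Real.log (η/2 - 1) := by
            rw [show (1 - η/2 : ℝ) = -(η/2 - 1) by ring, Real.log_neg_eq_log]
          rw [hrw]
          have := Real.log_le_sub_one_of_pos (show (0:ℝ) < η/2 - 1 by linarith only [hη4])
          linarith only [this]
        have t1 : 0 ≤ (A*px) * Real.log (b:ℝ) := mul_nonneg (mul_pos hA0 hpx0).le hL0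
        have t1b : 0 ≤ c*η^2 * Real.log (b:ℝ) :=
          mul_nonneg (mul_nonneg hc (sq_nonneg η)) hL0
        have t2 : 0 ≤ ((η + c*E) - A*px) * (Real.log (1+c) + 1) :=
          mul_nonneg (by linarith only [hmle]) (by linarith only [hC1])
        have t3 : 0 ≤ (η + c*E) * (-(Real.log (1 - c*η))) :=
          mul_nonneg hx0.le (by linarith only [hLneg])
        have t4 : (η + c*E) * Real.log (1 - η/2) ≤ (η + c*E) * (η/2 - 2) :=
          mul_le_mul_of_nonneg_left hLh' hx0.le
        have t5 : (η + c*E) * (η/2 - 2) ≤ (21/20*η) * (η/2 - 2) :=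
          mul_le_mul_of_nonneg_right (by linarith only [hd20]) (by linarith only [hη4])
        have t6 : (21/20*η) * (η/2 - 2) ≤ (η^2/2 - η) * (21/20) := by
          nlinarith only [hη0]
        have t7 : (η^2/2 - η) * (21/20) ≤ (η^2/2 - η) * Real.log (b:ℝ) := by
          apply mul_le_mul_of_nonneg_left hL2120
          nlinarith only [hη0, hη4]
        nlinarith only [t1, t1b, t2, t3, t4, t5, t6, t7]
    calc η * _ = _ := hexp
      _ ≤ p0 * (Real.log (b:ℝ) - Real.log (1+c)) - A*px := hkey2
      _ ≤ _ := by linarith only [hT0, hT1]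
  -- ====== Part A : T2 and T3 ======
  have hcE12 : c*E ≤ 1/2 := by
    have h1 := mul_nonneg (mul_nonneg (show (0:ℝ) ≤ (b:ℝ)-2 by linarith only [hbR]) hc) hE0.le
    nlinarith only [h1, hbcE, hcη1]
  have hdd : 0 ≤ c*E - c^2*E^2/2 := by
    have h1 := mul_le_mul_of_nonneg_left hcE12 hd0
    nlinarith only [h1, hd0]
  have hPartA : η * ((1 - η / 2) * ((b:ℝ) - 1) * (c * E - c ^ 2 * E ^ 2 / 2) * (1 - c * η)
        * Real.log ((b:ℝ) / 2) - c ^ 2 / 2 * η - c * (η + c * E))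
      ≤ ((b:ℝ) - 1) * p2 * Real.log ((b:ℝ) * p2 / (2 * p2 + ((b:ℝ) - 2) * p3))
        + (((b:ℝ) - 1) * ((b:ℝ) - 2) / 2) * p3
            * Real.log ((b:ℝ) * p3 / (2 * p2 + ((b:ℝ) - 2) * p3)) := by
    rcases hc.eq_or_lt with hc0|hc0
    · have hp2z : p2 = 0 := by rw [hp2, ← hc0]; norm_num
      have hp3z : p3 = 0 := by rw [hp3, ← hc0]; norm_num
      rw [hp2z, hp3z, ← hc0]
      norm_num
    · have hd0' : 0 < c*E := mul_pos hc0 hE0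
      have he1 : 0 < 1 - Real.exp (-(c*E)) := by
        have h := Real.exp_lt_one_iff.mpr (show -(c*E) < 0 by linarith only [hd0'])
        linarith only [h]
      have hexη : 0 < 1 - Real.exp (-η - c*E) := by
        have h := Real.exp_lt_one_iff.mpr (show -η - c*E < 0 by linarith only [hη0, hd0'])
        linarith only [h]
      have hp2pos : 0 < p2 := by
        rw [hp2]; exact mul_pos (mul_pos hexη he1) (Real.exp_pos _)
      have hp3pos : 0 < p3 := by
        rw [hp3]; exact mul_pos (mul_pos (Real.exp_pos _) (pow_pos he1 2)) (Real.exp_pos _)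
      have hb2' : (0:ℝ) ≤ (b:ℝ) - 2 := by linarith only [hbR]
      have hb1' : (0:ℝ) ≤ (b:ℝ) - 1 := by linarith only [hbR]
      have htpos : 0 < 2*p2 + ((b:ℝ)-2)*p3 := by
        have h := mul_nonneg hb2' hp3pos.le
        linarith only [h, hp2pos]
      have hT2 : ((b:ℝ)-1) * p2 * (Real.log ((b:ℝ)/2) + 1
            - (2*p2 + ((b:ℝ)-2)*p3)/(2*p2))
          ≤ ((b:ℝ)-1) * p2 * Real.log ((b:ℝ)*p2/(2*p2 + ((b:ℝ)-2)*p3)) := by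
        apply mul_le_mul_of_nonneg_left _ (mul_nonneg hb1' hp2pos.le)
        have hsplitA : Real.log ((b:ℝ)*p2/(2*p2 + ((b:ℝ)-2)*p3))
            = Real.log ((b:ℝ)/2) + Real.log (2*p2/(2*p2 + ((b:ℝ)-2)*p3)) := by
          rw [← Real.log_mul (by positivity) (by positivity)]
          congr 1
          field_simp
        have hlb := aux_log_lb (show (0:ℝ) < 2*p2/(2*p2+((b:ℝ)-2)*p3) by positivity)
        rw [one_div_div] at hlb
        rw [hsplitA]; linarith only [hlb]
      have hT3 : (((b:ℝ)-1)*((b:ℝ)-2)/2) * p3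
            - (((b:ℝ)-1)*((b:ℝ)-2)/(2*(b:ℝ))) * (2*p2 + ((b:ℝ)-2)*p3)
          ≤ (((b:ℝ)-1)*((b:ℝ)-2)/2) * p3
            * Real.log ((b:ℝ)*p3/(2*p2 + ((b:ℝ)-2)*p3)) := by
        rcases eq_or_lt_of_le hb2' with hb2e|hb2l
        · rw [← hb2e]; norm_num
        · have hlb := aux_log_lb (show (0:ℝ) < (b:ℝ)*p3/(2*p2+((b:ℝ)-2)*p3) by positivity)
          rw [one_div_div] at hlb
          have hco : (0:ℝ) ≤ ((b:ℝ)-1)*((b:ℝ)-2)/2 * p3 := by positivity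
          have hmul := mul_le_mul_of_nonneg_left hlb hco
          refine le_trans (le_of_eq ?_) hmul
          field_simp
      have hmain : η * ((1 - η/2) * ((b:ℝ)-1) * (c*E - c^2*E^2/2) * (1 - c*η)
            * Real.log ((b:ℝ)/2))
          ≤ ((b:ℝ)-1) * p2 * Real.log ((b:ℝ)/2) := by
        rcases le_or_gt (1 - η/2) 0 with hshalf|hshalf
        · have q1 : 0 ≤ ((b:ℝ)-1) * (c*E - c^2*E^2/2) * (1-c*η) * Real.log ((b:ℝ)/2) :=
            mul_nonneg (mul_nonneg (mul_nonneg hb1' hdd)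
              (by linarith only [hcη1])) hlogb2
          have q2 := mul_nonneg (neg_nonneg.2 hshalf) q1
          have q3 := mul_nonneg hη0.le q2
          have q4 : 0 ≤ ((b:ℝ)-1) * p2 * Real.log ((b:ℝ)/2) :=
            mul_nonneg (mul_nonneg hb1' hp2pos.le) hlogb2
          nlinarith only [q3, q4]
        · have f1 : η - η^2/2 ≤ 1 - Real.exp (-η - c*E) := by
            have h1 : Real.exp (-η - c*E) ≤ Real.exp (-η) :=
              Real.exp_le_exp.2 (by linarith only [hd0'])
            have h2 := aux_one_sub_exp hη0.le
            linarith only [h1, h2]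
          have f2 : c*E - (c*E)^2/2 ≤ 1 - Real.exp (-(c*E)) := aux_one_sub_exp hd0
          have f3 : 1 - c*η ≤ Real.exp (-(((b:ℝ)-2) * c * E)) := by
            have h := Real.add_one_le_exp (-(((b:ℝ)-2) * c * E))
            have h2 : ((b:ℝ)-2)*c*E ≤ c*η := by
              have h3 : ((b:ℝ)-2)*c*E = (b:ℝ)*(c*E) - 2*(c*E) := by ring
              linarith only [h3, hbcE, hd0]
            linarith only [h, h2]
          have hnn1 : 0 ≤ η - η^2/2 := by nlinarith only [hη0, hshalf]
          have hnn2 : 0 ≤ c*E - (c*E)^2/2 := by nlinarith only [hdd]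
          have hnn3 : (0:ℝ) ≤ 1 - c*η := by linarith only [hcη1]
          have g1 : (η - η^2/2)*(c*E - (c*E)^2/2)
              ≤ (1 - Real.exp (-η - c*E))*(1 - Real.exp (-(c*E))) :=
            mul_le_mul f1 f2 hnn2 (by linarith only [f1, hnn1])
          have g2 : (η - η^2/2)*(c*E - (c*E)^2/2)*(1 - c*η)
              ≤ (1 - Real.exp (-η - c*E))*(1 - Real.exp (-(c*E)))
                * Real.exp (-(((b:ℝ)-2) * c * E)) :=
            mul_le_mul g1 f3 hnn3
              (mul_nonneg (by linarith only [f1, hnn1]) (by linarith only [f2, hnn2]))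
          have hplb : (η - η^2/2)*(c*E - (c*E)^2/2)*(1 - c*η) ≤ p2 := by
            rw [hp2]; exact g2
          have hfin := mul_le_mul_of_nonneg_left hplb (mul_nonneg hb1' hlogb2)
          nlinarith only [hfin]
      have hp2ub : p2 ≤ (η + c*E)*(c*E) := by
        rw [hp2]
        have u1 : 1 - Real.exp (-η - c*E) ≤ η + c*E := by
          have h := Real.add_one_le_exp (-η - c*E); linarith only [h]
        have u3 : Real.exp (-(((b:ℝ)-2) * c * E)) ≤ 1 := by
          apply Real.exp_le_one_iff.mpr
          have := mul_nonneg (mul_nonneg hb2' hc) hE0.le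
          linarith only [this]
        have hmm := mul_le_mul (mul_le_mul u1 he_d_ub he_d_lb hx0.le) u3
          (Real.exp_pos _).le (mul_nonneg hx0.le hd0)
        rw [mul_one] at hmm
        exact hmm
      have hp3ub : p3 ≤ (c*E)^2 := by
        rw [hp3]
        have w1 : Real.exp (-η - c*E) * Real.exp (-(((b:ℝ)-3) * c * E)) ≤ 1 := by
          rw [← Real.exp_add]
          apply Real.exp_le_one_iff.mpr
          have h1 := mul_nonneg (mul_nonneg hb2' hc) hE0.le
          nlinarith only [h1, hη0, hd0]
        have w2 : (1 - Real.exp (-(c*E)))^2 ≤ (c*E)^2 := by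
          apply pow_le_pow_left₀ he_d_lb he_d_ub
        calc Real.exp (-η - c*E) * (1 - Real.exp (-(c*E)))^2
              * Real.exp (-(((b:ℝ)-3) * c * E))
            = (Real.exp (-η - c*E) * Real.exp (-(((b:ℝ)-3) * c * E)))
              * (1 - Real.exp (-(c*E)))^2 := by ring
          _ ≤ 1 * (c*E)^2 := mul_le_mul w1 w2 (by positivity) (by norm_num)
          _ = (c*E)^2 := one_mul _
      have hrem : (((b:ℝ)-1)*((b:ℝ)-2)/(2*(b:ℝ))) * (2*p2 + ((b:ℝ)-2)*p3)
          ≤ c*η^2 + c*η*(c*E) + c^2*η^2/2 := by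
        have r2 : ((b:ℝ)-1)*((b:ℝ)-2)/(2*(b:ℝ)) ≤ (b:ℝ)/2 := by
          rw [div_le_div_iff₀ (by positivity) (by norm_num)]
          nlinarith only [hbR]
        have r3 := mul_le_mul_of_nonneg_right r2 htpos.le
        have s1 : 2*p2 + ((b:ℝ)-2)*p3 ≤ 2*((η + c*E)*(c*E)) + ((b:ℝ)-2)*(c*E)^2 := by
          have h := mul_le_mul_of_nonneg_left hp3ub hb2'
          linarith only [h, hp2ub]
        have s2 := mul_le_mul_of_nonneg_left s1 (by positivity : (0:ℝ) ≤ (b:ℝ)/2)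
        have s3 : (b:ℝ)/2 * (2*((η + c*E)*(c*E)) + ((b:ℝ)-2)*(c*E)^2)
            ≤ c*η^2 + c*η*(c*E) + c^2*η^2/2 := by
          have e2 : (b:ℝ)*(c*E)*(c*E) = c*η*(c*E) := by rw [hbcE]
          have e3 : (b:ℝ)*(c*E)*η = c*η*η := by rw [hbcE]
          have e4 : ((b:ℝ)*(c*E))*((b:ℝ)*(c*E)) = (c*η)*(c*η) := by rw [hbcE]
          have e5 := mul_nonneg (mul_nonneg hc hη0.le) hd0
          linarith only [e2, e3, e4, e5]
        linarith only [r3, s2, s3]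
      have hid2 : ((b:ℝ)-1)*p2*(Real.log ((b:ℝ)/2) + 1 - (2*p2+((b:ℝ)-2)*p3)/(2*p2))
          = ((b:ℝ)-1)*p2*Real.log ((b:ℝ)/2) + ((b:ℝ)-1)*p2
            - ((b:ℝ)-1)*(2*p2+((b:ℝ)-2)*p3)/2 := by
        field_simp
      rw [hid2] at hT2
      nlinarith only [hT2, hT3, hmain, hrem, hη0]
  -- ====== final assembly ======
  rw [ge_iff_le]
  have htotal : η * ((1 - η / 2) * Real.log (b:ℝ) - c * η * Real.log (b:ℝ)
        - (1 + c * E / η) * Real.log (1 + c)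
        + (1 + c * E / η) * (Real.log (1 - c * η) + Real.log (1 - η / 2)) - 1 - c * E / η
        + (1 - η / 2) * ((b:ℝ) - 1) * (c * E - c ^ 2 * E ^ 2 / 2) * (1 - c * η)
            * Real.log ((b:ℝ) / 2)
        - c ^ 2 / 2 * η - c * (η + c * E))
      ≤ p0 * Real.log ((b:ℝ) * p0 / (p0 + ((b:ℝ) - 1) * p1))
        + ((b:ℝ) - 1) * p1 * Real.log ((b:ℝ) * p1 / (p0 + ((b:ℝ) - 1) * p1))
        + ((b:ℝ) - 1) * p2 * Real.log ((b:ℝ) * p2 / (2 * p2 + ((b:ℝ) - 2) * p3))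
        + (((b:ℝ) - 1) * ((b:ℝ) - 2) / 2) * p3
            * Real.log ((b:ℝ) * p3 / (2 * p2 + ((b:ℝ) - 2) * p3)) := by
    linarith only [hPartB, hPartA]
  calc (1 - η / 2) * Real.log (b:ℝ) - c * η * Real.log (b:ℝ)
        - (1 + c * E / η) * Real.log (1 + c)
        + (1 + c * E / η) * (Real.log (1 - c * η) + Real.log (1 - η / 2)) - 1 - c * E / η
        + (1 - η / 2) * ((b:ℝ) - 1) * (c * E - c ^ 2 * E ^ 2 / 2) * (1 - c * η)
            * Real.log ((b:ℝ) / 2)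
        - c ^ 2 / 2 * η - c * (η + c * E)
      = (1/η) * (η * ((1 - η / 2) * Real.log (b:ℝ) - c * η * Real.log (b:ℝ)
        - (1 + c * E / η) * Real.log (1 + c)
        + (1 + c * E / η) * (Real.log (1 - c * η) + Real.log (1 - η / 2)) - 1 - c * E / η
        + (1 - η / 2) * ((b:ℝ) - 1) * (c * E - c ^ 2 * E ^ 2 / 2) * (1 - c * η)
            * Real.log ((b:ℝ) / 2)
        - c ^ 2 / 2 * η - c * (η + c * E))) := by
        field_simp
    _ ≤ _ := mul_le_mul_of_nonneg_left htotal (by positivity)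
end

section
/- Let c ≥ 0 and E ∈ (0, e^{−1}) with (1+c)·E < 1, write L := log(1/E), and let R be the distribution on ℕ with R(0) = 1 − (1+c)·E and R(y) = (1+c)·E·(1 − 1/L)·(1/L)^{y−1} for y ≥ 1. Then for every μ > 0, ∑_{y=0}^∞ Pois_μ(y)·log(Pois_μ(y)/R(y)) = e^{−μ}·log(1/(1−(1+c)·E)) + μ·log L + (1 − e^{−μ})·( log(1/((1+c)·E·L)) + log(1/(1 − 1/L)) ) − ∑_{y=0}^∞ Pois_μ(y)·log(1/Pois_μ(y)). -/
lemma aux_exp_tsum (x : ℝ) : ∑' n : ℕ, x ^ n / (Nat.factorial n : ℝ) = Real.exp x := by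
  rw [Real.exp_eq_exp_ℝ, NormedSpace.exp_eq_tsum_div]

lemma aux_summable_mul (x : ℝ) :
    Summable (fun n : ℕ => (n : ℝ) * (x ^ n / (Nat.factorial n : ℝ))) := by
  rw [← summable_nat_add_iff 1]
  have : (fun n : ℕ => ((n + 1 : ℕ) : ℝ) * (x ^ (n + 1) / (Nat.factorial (n + 1) : ℝ)))
      = fun n : ℕ => x * (x ^ n / (Nat.factorial n : ℝ)) := by
    funext n
    have h : (Nat.factorial (n + 1) : ℝ) = (n + 1 : ℝ) * (Nat.factorial n : ℝ) := by
      rw [Nat.factorial_succ]; push_cast; ring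
    have hf : (Nat.factorial n : ℝ) ≠ 0 := by positivity
    rw [h]; push_cast; field_simp; ring
  rw [this]
  exact (Real.summable_pow_div_factorial x).mul_left x

lemma aux_tsum_mul (x : ℝ) :
    ∑' n : ℕ, (n : ℝ) * (x ^ n / (Nat.factorial n : ℝ)) = x * Real.exp x := by
  rw [Summable.tsum_eq_zero_add (aux_summable_mul x)]
  simp only [Nat.cast_zero, zero_mul, zero_add]
  have : (fun n : ℕ => ((n + 1 : ℕ) : ℝ) * (x ^ (n + 1) / (Nat.factorial (n + 1) : ℝ)))
      = fun n : ℕ => x * (x ^ n / (Nat.factorial n : ℝ)) := by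
    funext n
    have h : (Nat.factorial (n + 1) : ℝ) = (n + 1 : ℝ) * (Nat.factorial n : ℝ) := by
      rw [Nat.factorial_succ]; push_cast; ring
    have hf : (Nat.factorial n : ℝ) ≠ 0 := by positivity
    rw [h]; push_cast; field_simp; ring
  rw [this, tsum_mul_left, aux_exp_tsum]

lemma aux_summable_sq (x : ℝ) :
    Summable (fun n : ℕ => (n : ℝ) ^ 2 * (x ^ n / (Nat.factorial n : ℝ))) := by
  have h2 : Summable (fun n : ℕ => (n : ℝ) * ((n : ℝ) - 1) * (x ^ n / (Nat.factorial n : ℝ))) := by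
    rw [← summable_nat_add_iff 2]
    have : (fun n : ℕ => ((n + 2 : ℕ) : ℝ) * (((n + 2 : ℕ) : ℝ) - 1)
        * (x ^ (n + 2) / (Nat.factorial (n + 2) : ℝ)))
        = fun n : ℕ => (x * x) * (x ^ n / (Nat.factorial n : ℝ)) := by
      funext n
      have h : (Nat.factorial (n + 2) : ℝ)
          = ((n:ℝ) + 2) * ((n:ℝ) + 1) * (Nat.factorial n : ℝ) := by
        rw [Nat.factorial_succ, Nat.factorial_succ]; push_cast; ring
      have hf : (Nat.factorial n : ℝ) ≠ 0 := by positivity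
      rw [h]; push_cast; field_simp; ring
    rw [this]
    exact (Real.summable_pow_div_factorial x).mul_left _
  have := h2.add (aux_summable_mul x)
  refine this.congr fun n => ?_
  ring

lemma aux_log_factorial_le (n : ℕ) : Real.log (Nat.factorial n : ℝ) ≤ (n : ℝ) ^ 2 := by
  rcases Nat.eq_zero_or_pos n with h | h
  · simp [h]
  have h1 : (Nat.factorial n : ℝ) ≤ (n : ℝ) ^ n := by
    exact_mod_cast Nat.factorial_le_pow n
  have hn : (0:ℝ) < n := by exact_mod_cast h
  calc Real.log (Nat.factorial n : ℝ) ≤ Real.log ((n:ℝ) ^ n) :=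
        Real.log_le_log (by positivity) h1
    _ = (n : ℝ) * Real.log n := by rw [Real.log_pow]
    _ ≤ (n : ℝ) * (n : ℝ) := by
        apply mul_le_mul_of_nonneg_left _ hn.le
        calc Real.log n ≤ (n:ℝ) - 1 := Real.log_le_sub_one_of_pos hn
          _ ≤ n := by linarith
    _ = (n : ℝ) ^ 2 := (sq (n:ℝ)).symm

noncomputable def pois (μ : ℝ) (y : ℕ) : ℝ := Real.exp (-μ) * μ ^ y / (Nat.factorial y : ℝ)

lemma pois_pos {μ : ℝ} (hμ : 0 < μ) (y : ℕ) : 0 < pois μ y := by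
  unfold pois
  have : (0:ℝ) < (Nat.factorial y : ℝ) := by positivity
  positivity

lemma pois_eq (μ : ℝ) (y : ℕ) :
    pois μ y = Real.exp (-μ) * (μ ^ y / (Nat.factorial y : ℝ)) := by
  unfold pois; ring

lemma pois_summable (μ : ℝ) : Summable (pois μ) := by
  refine ((Real.summable_pow_div_factorial μ).mul_left (Real.exp (-μ))).congr fun n => ?_
  rw [pois_eq]

lemma pois_tsum (μ : ℝ) : ∑' y : ℕ, pois μ y = 1 := by
  simp only [pois_eq]
  rw [tsum_mul_left, aux_exp_tsum, ← Real.exp_add]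
  simp

lemma pois_mul_summable (μ : ℝ) : Summable (fun y : ℕ => (y : ℝ) * pois μ y) := by
  refine ((aux_summable_mul μ).mul_left (Real.exp (-μ))).congr fun n => ?_
  rw [pois_eq]; ring

lemma pois_mul_tsum (μ : ℝ) : ∑' y : ℕ, (y : ℝ) * pois μ y = μ := by
  simp only [pois_eq]
  have : (fun y : ℕ => (y:ℝ) * (Real.exp (-μ) * (μ ^ y / (Nat.factorial y : ℝ))))
      = fun y : ℕ => Real.exp (-μ) * ((y:ℝ) * (μ ^ y / (Nat.factorial y : ℝ))) := by
    funext y; ring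
  rw [this, tsum_mul_left, aux_tsum_mul, ← mul_assoc, mul_comm (Real.exp (-μ)) μ, mul_assoc,
    ← Real.exp_add]
  simp

lemma pois_zero (μ : ℝ) : pois μ 0 = Real.exp (-μ) := by simp [pois]

lemma pois_log_one_div {μ : ℝ} (hμ : 0 < μ) (y : ℕ) :
    Real.log (1 / pois μ y) = μ - (y : ℝ) * Real.log μ + Real.log (Nat.factorial y : ℝ) := by
  have hf : (0:ℝ) < (Nat.factorial y : ℝ) := by positivity
  have hnum : (0:ℝ) < Real.exp (-μ) * μ ^ y := by positivity
  rw [one_div, Real.log_inv, pois, Real.log_div hnum.ne' hf.ne',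
    Real.log_mul (Real.exp_pos _).ne' (by positivity), Real.log_exp, Real.log_pow]
  ring

lemma pois_entropy_summable {μ : ℝ} (hμ : 0 < μ) :
    Summable (fun y : ℕ => pois μ y * Real.log (1 / pois μ y)) := by
  have hlogfac : Summable (fun y : ℕ => pois μ y * Real.log (Nat.factorial y : ℝ)) := by
    refine Summable.of_nonneg_of_le (fun y => ?_) (fun y => ?_)
      (((aux_summable_sq μ).mul_left (Real.exp (-μ))))
    · have := pois_pos hμ y
      have : (0:ℝ) ≤ Real.log (Nat.factorial y : ℝ) := by
        apply Real.log_nonneg; exact_mod_cast Nat.one_le_iff_ne_zero.2 (Nat.factorial_ne_zero y)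
      positivity
    · rw [pois_eq]
      have h1 : (0:ℝ) ≤ Real.exp (-μ) * (μ ^ y / (Nat.factorial y : ℝ)) := by positivity
      calc Real.exp (-μ) * (μ ^ y / (Nat.factorial y : ℝ)) * Real.log (Nat.factorial y : ℝ)
          ≤ Real.exp (-μ) * (μ ^ y / (Nat.factorial y : ℝ)) * (y:ℝ)^2 :=
            mul_le_mul_of_nonneg_left (aux_log_factorial_le y) h1
        _ = Real.exp (-μ) * ((y:ℝ)^2 * (μ ^ y / (Nat.factorial y : ℝ))) := by ring
  have hsum : Summable (fun y : ℕ =>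
      μ * pois μ y - Real.log μ * ((y:ℝ) * pois μ y)
        + pois μ y * Real.log (Nat.factorial y : ℝ)) :=
    (((pois_summable μ).mul_left μ).sub ((pois_mul_summable μ).mul_left (Real.log μ))).add hlogfac
  refine hsum.congr fun y => ?_
  rw [pois_log_one_div hμ]; ring
/-- Exact expansion of the relative entropy `D(Pois_μ ‖ R)` for the geometric-tail
output distribution `R` used in the duality bound. -/
theorem stmt_9 (c E : ℝ) (hc : 0 ≤ c) (hE0 : 0 < E) (hE1 : E < Real.exp (-1))
    (hcE : (1 + c) * E < 1) (L : ℝ) (hL : L = Real.log (1 / E))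
    (R : ℕ → ℝ) (hR0 : R 0 = 1 - (1 + c) * E)
    (hRy : ∀ y : ℕ, 1 ≤ y → R y = (1 + c) * E * (1 - 1 / L) * (1 / L) ^ (y - 1))
    (μ : ℝ) (hμ : 0 < μ) :
    ∑' y : ℕ, (Real.exp (-μ) * μ ^ y / (Nat.factorial y : ℝ))
        * Real.log ((Real.exp (-μ) * μ ^ y / (Nat.factorial y : ℝ)) / R y)
    = Real.exp (-μ) * Real.log (1 / (1 - (1 + c) * E)) + μ * Real.log L
        + (1 - Real.exp (-μ))
            * (Real.log (1 / ((1 + c) * E * L)) + Real.log (1 / (1 - 1 / L)))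
        - ∑' y : ℕ, (Real.exp (-μ) * μ ^ y / (Nat.factorial y : ℝ))
            * Real.log (1 / (Real.exp (-μ) * μ ^ y / (Nat.factorial y : ℝ))) := by
  show (∑' y : ℕ, pois μ y * Real.log (pois μ y / R y))
    = Real.exp (-μ) * Real.log (1 / (1 - (1 + c) * E)) + μ * Real.log L
        + (1 - Real.exp (-μ))
            * (Real.log (1 / ((1 + c) * E * L)) + Real.log (1 / (1 - 1 / L)))
        - ∑' y : ℕ, pois μ y * Real.log (1 / pois μ y)
  -- basic positivity facts
  have h1c : (0:ℝ) < 1 + c := by linarith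
  have hA : 0 < (1 + c) * E := mul_pos h1c hE0
  have hlogE : Real.log E < -1 := by
    have := Real.log_lt_log hE0 hE1
    rwa [Real.log_exp] at this
  have hL1 : 1 < L := by
    rw [hL, one_div, Real.log_inv]; linarith
  have hL0 : 0 < L := by linarith
  have hinv1 : 1 / L < 1 := (div_lt_one hL0).2 hL1
  have hinv0 : 0 < 1 / L := by positivity
  have h1m : 0 < 1 - 1 / L := by linarith
  have hR0p : 0 < R 0 := by rw [hR0]; linarith
  have hRpos : ∀ y : ℕ, 0 < R y := by
    intro y
    cases y with
    | zero => exact hR0p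
    | succ n =>
      rw [hRy (n+1) (by omega)]
      positivity
  -- summability of shifted series
  have hsp1 : Summable (fun n : ℕ => pois μ (n+1)) :=
    (summable_nat_add_iff 1).2 (pois_summable μ)
  have hsyp1 : Summable (fun n : ℕ => ((n+1 : ℕ):ℝ) * pois μ (n+1)) :=
    (summable_nat_add_iff 1).2 (pois_mul_summable μ)
  have hsnp1 : Summable (fun n : ℕ => (n:ℝ) * pois μ (n+1)) := by
    refine (hsyp1.sub hsp1).congr fun n => ?_
    push_cast; ring
  -- key partial sums
  have hT1 : ∑' n : ℕ, pois μ (n+1) = 1 - Real.exp (-μ) := by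
    have := pois_tsum μ
    rw [Summable.tsum_eq_zero_add (pois_summable μ), pois_zero] at this
    linarith
  have hT2 : ∑' n : ℕ, (n:ℝ) * pois μ (n+1) = μ - (1 - Real.exp (-μ)) := by
    have hy : ∑' n : ℕ, ((n+1:ℕ):ℝ) * pois μ (n+1) = μ := by
      have := pois_mul_tsum μ
      rw [Summable.tsum_eq_zero_add (pois_mul_summable μ)] at this
      simpa using this
    have : ∑' n : ℕ, (n:ℝ) * pois μ (n+1)
        = ∑' n : ℕ, (((n+1:ℕ):ℝ) * pois μ (n+1) - pois μ (n+1)) := by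
      apply tsum_congr; intro n; push_cast; ring
    rw [this, Summable.tsum_sub hsyp1 hsp1, hy, hT1]
  -- the log of R on positive integers
  have hlogR1 : ∀ n : ℕ, Real.log (R (n+1))
      = Real.log ((1+c)*E*(1-1/L)) + (n:ℝ) * Real.log (1/L) := by
    intro n
    rw [hRy (n+1) (by omega)]
    simp only [Nat.add_sub_cancel]
    rw [Real.log_mul (by positivity) (by positivity), Real.log_pow]
  -- the H series
  have hHsum : Summable (fun y : ℕ => pois μ y * (-Real.log (R y))) := by
    rw [← summable_nat_add_iff 1]
    refine (((hsp1.mul_left (-Real.log ((1+c)*E*(1-1/L)))).add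
      ((hsnp1.mul_left (-Real.log (1/L)))))).congr fun n => ?_
    rw [hlogR1 n]; ring
  have hHtsum : ∑' y : ℕ, pois μ y * (-Real.log (R y))
      = Real.exp (-μ) * (-Real.log (1 - (1+c)*E))
        + (-Real.log ((1+c)*E*(1-1/L))) * (1 - Real.exp (-μ))
        + (-Real.log (1/L)) * (μ - (1 - Real.exp (-μ))) := by
    rw [Summable.tsum_eq_zero_add hHsum, pois_zero, hR0]
    have hcongr : (fun n : ℕ => pois μ (n+1) * (-Real.log (R (n+1))))
        = fun n : ℕ => (-Real.log ((1+c)*E*(1-1/L))) * pois μ (n+1)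
          + (-Real.log (1/L)) * ((n:ℝ) * pois μ (n+1)) := by
      funext n; rw [hlogR1 n]; ring
    rw [hcongr, Summable.tsum_add (hsp1.mul_left _) (hsnp1.mul_left _), tsum_mul_left, tsum_mul_left,
      hT1, hT2]
    ring
  -- pointwise decomposition of the KL integrand
  have hpoint : ∀ y : ℕ, pois μ y * Real.log (pois μ y / R y)
      = pois μ y * (-Real.log (R y)) - pois μ y * Real.log (1 / pois μ y) := by
    intro y
    rw [Real.log_div (pois_pos hμ y).ne' (hRpos y).ne', one_div, Real.log_inv]
    ring
  rw [tsum_congr hpoint, Summable.tsum_sub hHsum (pois_entropy_summable hμ), hHtsum]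
  -- final arithmetic with logarithms
  have e1 : Real.log (1 / (1 - (1+c)*E)) = -Real.log (1 - (1+c)*E) := by
    rw [one_div, Real.log_inv]
  have e2 : Real.log ((1+c)*E*(1-1/L)) = Real.log ((1+c)*E) + Real.log (1-1/L) :=
    Real.log_mul hA.ne' h1m.ne'
  have e3 : Real.log (1 / ((1+c)*E*L)) = -(Real.log ((1+c)*E) + Real.log L) := by
    rw [one_div, Real.log_inv, Real.log_mul hA.ne' hL0.ne']
  have e4 : Real.log (1 / (1-1/L)) = -Real.log (1-1/L) := by
    rw [one_div, Real.log_inv]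
  have e5 : Real.log (1/L) = -Real.log L := by
    rw [one_div, Real.log_inv]
  rw [e1, e2, e3, e4, e5]
  ring
end

section
/- Let c ≥ 0 and E ∈ (0,1) satisfy E < e^{−1}, E·log(1/E) < e^{−1/(1−2e^{−1})}/(1+c), and E·(log(1/E))⁴ < 144/(1+c)². Write L := log(1/E). Then for every x with 12/L < x < 1, ((1+x)·e^{−x} − 1)/x² · log( (x+cE)/((1+c)·E·L) ) + (1 − e^{−x})/(x·(x+cE)) < 0. -/
set_option maxHeartbeats 1000000 in
/-- Case 1 of the localization of the maximizer of φ: the derivative of φ is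
negative on `(12/log(1/E), 1)`. -/
theorem stmt_11 (c E : ℝ) (hc : 0 ≤ c) (hE0 : 0 < E) (hE1 : E < 1)
    (hcond1 : E < Real.exp (-1))
    (hcond2 : E * Real.log (1 / E) < Real.exp (-(1 / (1 - 2 * Real.exp (-1)))) / (1 + c))
    (hcond3 : E * (Real.log (1 / E)) ^ 4 < 144 / (1 + c) ^ 2)
    (L : ℝ) (hL : L = Real.log (1 / E))
    (x : ℝ) (hx1 : 12 / L < x) (hx2 : x < 1) :
    ((1 + x) * Real.exp (-x) - 1) / x ^ 2
        * Real.log ((x + c * E) / ((1 + c) * E * L))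
      + (1 - Real.exp (-x)) / (x * (x + c * E)) < 0 := by
  have hLpos : 0 < L := by
    rw [hL, one_div, Real.log_inv]
    have := Real.log_neg hE0 hE1
    linarith
  have hx0 : 0 < x := lt_trans (by positivity) hx1
  have hxL : 12 < x * L := by
    rw [div_lt_iff₀ hLpos] at hx1; linarith
  have hcE : 0 ≤ c * E := mul_nonneg hc hE0.le
  have hxcE : 0 < x + c * E := by linarith
  have h1c : (0:ℝ) < 1 + c := by linarith
  have hD : 0 < (1 + c) * E * L := by positivity
  -- the exponential bounds
  have hexp : 0 < Real.exp (-x) := Real.exp_pos _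
  have hq : 1 + x + x ^ 2 / 2 ≤ Real.exp x := Real.quadratic_le_exp_of_nonneg hx0.le
  have hexx : Real.exp (-x) * Real.exp x = 1 := by
    rw [← Real.exp_add]; norm_num
  have hepos : 0 < Real.exp x := Real.exp_pos _
  have hB : 0 < 1 - (1 + x) * Real.exp (-x) := by
    have h1 : 1 + x < Real.exp x := by nlinarith
    nlinarith
  have hme : 0 < 1 - Real.exp (-x) := by
    have : Real.exp (-x) < 1 := Real.exp_lt_one_iff.mpr (by linarith)
    linarith
  -- key : x * (1 - e^{-x}) ≤ 6 * (1 - (1+x) e^{-x})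
  have hkey : x * (1 - Real.exp (-x)) ≤ 6 * (1 - (1 + x) * Real.exp (-x)) := by
    have h6 : 6 + 5 * x ≤ (6 - x) * Real.exp x := by nlinarith
    nlinarith [mul_le_mul_of_nonneg_left h6 hexp.le]
  -- the log bound : L / 2 < log ((x+cE)/((1+c)EL))
  have hL2 : 0 < L ^ 2 := by positivity
  have h144 : (1 + c) ^ 2 * (E * L ^ 4) < 144 := by
    rw [← hL, div_eq_mul_inv, lt_mul_inv_iff₀ (by positivity)] at hcond3
    linarith
  have hD2' : ((1 + c) * E * L) ^ 2 * L ^ 2 < 144 * E :=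
    calc ((1 + c) * E * L) ^ 2 * L ^ 2 = E * ((1 + c) ^ 2 * (E * L ^ 4)) := by ring
      _ < E * 144 := mul_lt_mul_of_pos_left h144 hE0
      _ = 144 * E := by ring
  have hxsq : 144 < x ^ 2 * L ^ 2 := by nlinarith [sq_nonneg (x * L - 12)]
  have hxcEsq : x ^ 2 ≤ (x + c * E) ^ 2 := by
    nlinarith [mul_nonneg hx0.le hcE, sq_nonneg (c * E)]
  have hargsq : 1 / E < ((x + c * E) / ((1 + c) * E * L)) ^ 2 := by
    rw [div_pow, div_lt_div_iff₀ hE0 (by positivity)]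
    have h5 : ((1 + c) * E * L) ^ 2 * L ^ 2 < (x + c * E) ^ 2 * E * L ^ 2 := by
      have h6 := mul_lt_mul_of_pos_right hxsq hE0
      have h7 := mul_le_mul_of_nonneg_right hxcEsq (show (0:ℝ) ≤ E * L ^ 2 by positivity)
      ring_nf at h6 h7 ⊢
      linarith [hD2', h6, h7]
    have h8 := lt_of_mul_lt_mul_right h5 hL2.le
    linarith
  have hlg : L / 2 < Real.log ((x + c * E) / ((1 + c) * E * L)) := by
    have harg : 0 < (x + c * E) / ((1 + c) * E * L) := by positivity
    have h := Real.log_lt_log (by positivity : (0:ℝ) < 1 / E) hargsq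
    rw [Real.log_pow, ← hL] at h
    push_cast at h
    linarith
  -- main chain
  set lg := Real.log ((x + c * E) / ((1 + c) * E * L)) with hlgdef
  have hmain : 1 - Real.exp (-x) < (1 - (1 + x) * Real.exp (-x)) * lg := by
    have h1 : (1 - (1 + x) * Real.exp (-x)) * (L / 2) < (1 - (1 + x) * Real.exp (-x)) * lg :=
      mul_lt_mul_of_pos_left hlg hB
    have h3 := mul_le_mul_of_nonneg_right hkey
      (le_of_lt (show (0:ℝ) < L / 12 by linarith))
    have h4 : 0 < (x * L - 12) * (1 - Real.exp (-x)) :=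
      mul_pos (by linarith) hme
    nlinarith [h1, h3, h4]
  have hstep1 : (1 - Real.exp (-x)) / (x * (x + c * E)) ≤ (1 - Real.exp (-x)) / x ^ 2 := by
    apply div_le_div_of_nonneg_left hme.le (by positivity)
    nlinarith
  have hstep2 : (1 - Real.exp (-x)) / x ^ 2
      < ((1 - (1 + x) * Real.exp (-x)) * lg) / x ^ 2 := by
    gcongr
  have heq : ((1 + x) * Real.exp (-x) - 1) / x ^ 2 * lg
      = -(((1 - (1 + x) * Real.exp (-x)) * lg) / x ^ 2) := by ring
  rw [heq]
  linarith
end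

section
/- Let c ≥ 0 and E ∈ (0,1) satisfy E < e^{−1} and E·log(1/E) < e^{−1/(1−2e^{−1})}/(1+c). Write L := log(1/E). Then for every x ≥ 1, ((1+x)·e^{−x} − 1)/x² · log( (x+cE)/((1+c)·E·L) ) + (1 − e^{−x})/(x·(x+cE)) < 0. -/
/-- Case 2 of the localization of the maximizer of φ: the derivative of φ is
negative on `[1, ∞)`. -/
theorem stmt_12 (c E : ℝ) (hc : 0 ≤ c) (hE0 : 0 < E) (hE1 : E < 1)
    (hcond1 : E < Real.exp (-1))
    (hcond2 : E * Real.log (1 / E) < Real.exp (-(1 / (1 - 2 * Real.exp (-1)))) / (1 + c))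
    (L : ℝ) (hL : L = Real.log (1 / E))
    (x : ℝ) (hx : 1 ≤ x) :
    ((1 + x) * Real.exp (-x) - 1) / x ^ 2
        * Real.log ((x + c * E) / ((1 + c) * E * L))
      + (1 - Real.exp (-x)) / (x * (x + c * E)) < 0 := by
  have hx0 : (0:ℝ) < x := by linarith
  have he2 : Real.exp (-1) < 1 / 2 := by
    rw [Real.exp_neg]
    rw [inv_lt_comm₀ (Real.exp_pos 1) (by norm_num)]
    have := Real.add_one_lt_exp (x := 1) (by norm_num)
    linarith
  have hden : 0 < 1 - 2 * Real.exp (-1) := by linarith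
  set M : ℝ := 1 / (1 - 2 * Real.exp (-1)) with hM
  have hM0 : 0 < M := by positivity
  have hL0 : 0 < L := by
    rw [hL, one_div]
    exact Real.log_pos ((one_lt_inv₀ hE0).mpr hE1)
  have h1c : (0:ℝ) < 1 + c := by linarith
  have hP0 : 0 < (1 + c) * E * L := by positivity
  have hxcE : (1:ℝ) ≤ x + c * E := by nlinarith
  have hP : (1 + c) * E * L < Real.exp (-M) := by
    rw [hL]
    calc (1 + c) * E * Real.log (1 / E)
        < (1 + c) * (Real.exp (-M) / (1 + c)) := by
          rw [mul_assoc]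
          exact mul_lt_mul_of_pos_left hcond2 h1c
      _ = Real.exp (-M) := by field_simp
  have hlog : M < Real.log ((x + c * E) / ((1 + c) * E * L)) := by
    have h1 : Real.exp M < (x + c * E) / ((1 + c) * E * L) := by
      rw [lt_div_iff₀ hP0]
      have h2 : Real.exp M * ((1 + c) * E * L) < Real.exp M * Real.exp (-M) :=
        mul_lt_mul_of_pos_left hP (Real.exp_pos M)
      rw [← Real.exp_add, add_neg_cancel, Real.exp_zero] at h2
      linarith
    calc M = Real.log (Real.exp M) := (Real.log_exp M).symm
      _ < _ := Real.log_lt_log (Real.exp_pos M) h1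
  -- key: (1+x) e^{-x} ≤ 2 e^{-1} for x ≥ 1
  have hexx : x ≤ Real.exp (x - 1) := by
    have := Real.add_one_le_exp (x - 1); linarith
  have hprod : Real.exp (-x) * Real.exp (x - 1) = Real.exp (-1) := by
    rw [← Real.exp_add]; ring_nf
  have hkey : (1 + x) * Real.exp (-x) ≤ 2 * Real.exp (-1) := by
    nlinarith [Real.exp_pos (-x), hexx, hprod]
  set t := Real.exp (-x) with ht
  set lg := Real.log ((x + c * E) / ((1 + c) * E * L)) with hlg
  have ht0 : 0 < t := Real.exp_pos _
  have ht1 : t < 1 := by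
    rw [ht]; calc Real.exp (-x) ≤ Real.exp (-1) := Real.exp_le_exp.mpr (by linarith)
      _ < 1 := by linarith
  -- first term ≤ -(1/x²)
  have hu : (1 + x) * t - 1 ≤ -(1 - 2 * Real.exp (-1)) := by linarith
  have hulg : ((1 + x) * t - 1) * lg ≤ -1 := by
    have h1 : ((1 + x) * t - 1) * lg ≤ ((1 + x) * t - 1) * M := by
      apply mul_le_mul_of_nonpos_left (le_of_lt hlog)
      linarith
    have h2 : ((1 + x) * t - 1) * M ≤ -(1 - 2 * Real.exp (-1)) * M :=
      mul_le_mul_of_nonneg_right hu (le_of_lt hM0)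
    have h3 : -(1 - 2 * Real.exp (-1)) * M = -1 := by
      rw [hM]; field_simp
    linarith
  have hA : ((1 + x) * t - 1) / x ^ 2 * lg ≤ -(1 / x ^ 2) := by
    rw [div_mul_eq_mul_div, neg_div' ]
    apply div_le_div_of_nonneg_right ?_ (by positivity)
    · linarith
  have hB : (1 - t) / (x * (x + c * E)) < 1 / x ^ 2 := by
    have hx2 : x ^ 2 ≤ x * (x + c * E) := by
      nlinarith [mul_nonneg hx0.le (mul_nonneg hc hE0.le)]
    calc (1 - t) / (x * (x + c * E)) ≤ (1 - t) / x ^ 2 := by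
          apply div_le_div_of_nonneg_left (by linarith) (by positivity) hx2
      _ < 1 / x ^ 2 := (div_lt_div_iff_of_pos_right (by positivity)).mpr (by linarith)
  linarith
end

section
/- Let c ≥ 0 and E ∈ (0,1) satisfy E < e^{−1}, E·log(1/E) < e^{−1/(1−2e^{−1})}/(1+c), and E·(log(1/E))⁴ < 144/(1+c)². Then for every x > 0, ((1 − e^{−x})/x)·log( (x + cE)/((1+c)·E·log(1/E)) ) ≤ log(1/E) − 2·log log(1/E) − log(1+c) + log 13. -/
set_option maxHeartbeats 1000000

lemma aux_exp_bound (x : ℝ) (hx : 0 ≤ x) : 2 - x ≤ (2 + x) * Real.exp (-x) := by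
  have hderiv : ∀ t : ℝ, HasDerivAt (fun t : ℝ => (2 + t) * Real.exp (-t) + t - 2)
      (1 - (1 + t) * Real.exp (-t)) t := by
    intro t
    have h1 : HasDerivAt (fun t : ℝ => Real.exp (-t)) (-Real.exp (-t)) t := by
      simpa using (hasDerivAt_neg t).exp
    have h2 : HasDerivAt (fun t : ℝ => (2 + t) * Real.exp (-t))
        ((0 + 1) * Real.exp (-t) + (2 + t) * -Real.exp (-t)) t :=
      (((hasDerivAt_const t (2:ℝ)).add (hasDerivAt_id t)).mul h1)
    have h3 := (h2.add (hasDerivAt_id t)).sub_const 2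
    exact h3.congr_deriv (by ring)
  have hmono : MonotoneOn (fun t : ℝ => (2 + t) * Real.exp (-t) + t - 2) (Set.Ici 0) := by
    apply monotoneOn_of_deriv_nonneg (convex_Ici 0)
    · exact Continuous.continuousOn (by continuity)
    · intro t _
      exact (hderiv t).differentiableAt.differentiableWithinAt
    · intro t _
      rw [(hderiv t).deriv]
      have h4 : (1 + t) ≤ Real.exp t := by linarith [Real.add_one_le_exp t]
      have h5 : Real.exp t * Real.exp (-t) = 1 := by rw [← Real.exp_add]; simp
      have h6 : 0 < Real.exp (-t) := Real.exp_pos _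
      nlinarith [mul_le_mul_of_nonneg_right h4 h6.le]
  have h0 := hmono (Set.self_mem_Ici) (Set.mem_Ici.mpr hx) hx
  simp only [Real.exp_zero] at h0
  norm_num at h0
  linarith


lemma aux_fle (x : ℝ) (hx : 0 < x) : (1 - Real.exp (-x)) / x ≤ 2 / (x + 2) := by
  rw [div_le_div_iff₀ hx (by linarith)]
  nlinarith [aux_exp_bound x hx.le]

lemma aux_exp3 : Real.exp (-3) ≤ 1/20 := by
  have he : Real.exp 3 = Real.exp 1 * Real.exp 1 * Real.exp 1 := by
    rw [← Real.exp_add, ← Real.exp_add]; norm_num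
  have h0 : (2.715:ℝ) < Real.exp 1 := by linarith [Real.exp_one_gt_d9]
  have h1 : (20:ℝ) < Real.exp 3 := by rw [he]; nlinarith
  have h2 : Real.exp (-3) * Real.exp 3 = 1 := by rw [← Real.exp_add]; norm_num
  nlinarith [Real.exp_pos (-3)]

lemma aux_inv1 (a b : ℝ) (hprod : a * b = 1) (h2 : 2 < b) (h3 : b < 3) (ha : 0 < a) :
    1/3 < a ∧ a < 1/2 := by
  constructor <;> nlinarith

lemma aux_ATmono (B k : ℝ) (hB3 : 3 < B) (hk0 : 0 ≤ k) :
    Real.exp (-B) * (B + k) ≤ Real.exp (-3) * (3 + k) := by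
  have hs : (0:ℝ) ≤ B - 3 := by linarith
  have he1 : Real.exp (-B) * Real.exp (B - 3) = Real.exp (-3) := by
    rw [← Real.exp_add]; ring_nf
  have he2 : 1 + (B - 3) ≤ Real.exp (B - 3) := by linarith [Real.add_one_le_exp (B - 3)]
  have hmid : B + k ≤ Real.exp (B - 3) * (3 + k) := by
    nlinarith [mul_le_mul_of_nonneg_right he2 (by linarith : (0:ℝ) ≤ 3 + k),
      mul_nonneg hs hk0]
  calc Real.exp (-B) * (B + k) ≤ Real.exp (-B) * (Real.exp (B - 3) * (3 + k)) :=
        mul_le_mul_of_nonneg_left hmid (Real.exp_pos _).le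
    _ = Real.exp (-3) * (3 + k) := by rw [← mul_assoc, he1]

lemma aux_claim (A B T L v : ℝ) (hv : 0 < v) (hTpos : 0 < T)
    (h1 : Real.log v + Real.log T - Real.log 2 ≤ v * T / 2 - 1)
    (hlogT : Real.log L - Real.log 2 ≤ Real.log T)
    (hlog13_lb : 2 * Real.log 2 ≤ Real.log 13)
    (hAT : A * T ≤ 2)
    (hBT : B = T - Real.log 13 + Real.log L) :
    2 * (Real.log v + B) ≤ T * (v + 2 - A) := by
  nlinarith [h1, hlogT, hlog13_lb, hAT, hBT]

/-- Supremum bound (151) on the function φ used in the duality upper bound. -/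
theorem stmt_13 (c E : ℝ) (hc : 0 ≤ c) (hE0 : 0 < E) (hE1 : E < 1)
    (hcond1 : E < Real.exp (-1))
    (hcond2 : E * Real.log (1 / E) < Real.exp (-(1 / (1 - 2 * Real.exp (-1)))) / (1 + c))
    (hcond3 : E * (Real.log (1 / E)) ^ 4 < 144 / (1 + c) ^ 2)
    (x : ℝ) (hx : 0 < x) :
    ((1 - Real.exp (-x)) / x)
        * Real.log ((x + c * E) / ((1 + c) * E * Real.log (1 / E)))
    ≤ Real.log (1 / E) - 2 * Real.log (Real.log (1 / E)) - Real.log (1 + c)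
        + Real.log 13 := by
  have hc1 : (0:ℝ) < 1 + c := by linarith
  obtain ⟨L, hLdef⟩ : ∃ y : ℝ, y = Real.log (1 / E) := ⟨_, rfl⟩
  rw [← hLdef] at hcond2 hcond3 ⊢
  have hLE : L = -Real.log E := by rw [hLdef, one_div, Real.log_inv]
  have hL1 : 1 < L := by
    have h := Real.log_lt_log hE0 hcond1
    rw [Real.log_exp] at h
    rw [hLE]; linarith
  have hL0 : (0:ℝ) < L := by linarith
  have hEexp : Real.exp (-L) = E := by rw [hLE, neg_neg, Real.exp_log hE0]
  have hA0 : (0:ℝ) < (1 + c) * E * L := by positivity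
  obtain ⟨A, hAdef⟩ : ∃ y : ℝ, y = (1 + c) * E * L := ⟨_, rfl⟩
  rw [← hAdef] at hA0 ⊢
  obtain ⟨B, hBdef⟩ : ∃ y : ℝ, y = -Real.log A := ⟨_, rfl⟩
  have hAexp : A = Real.exp (-B) := by rw [hBdef, neg_neg, Real.exp_log hA0]
  have hB_eq : B = L - Real.log L - Real.log (1 + c) := by
    rw [hBdef, hAdef, Real.log_mul (by positivity) (ne_of_gt hL0),
      Real.log_mul (ne_of_gt hc1) (ne_of_gt hE0), hLE]
    ring
  -- B > 3
  have hprod1 : Real.exp (-1) * Real.exp 1 = 1 := by rw [← Real.exp_add]; simp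
  have h2e : (2:ℝ) < Real.exp 1 := lt_trans (by norm_num) Real.exp_one_gt_d9
  have h3e : Real.exp 1 < 3 := lt_trans Real.exp_one_lt_d9 (by norm_num)
  obtain ⟨hinv2, hinv1⟩ := aux_inv1 (Real.exp (-1)) (Real.exp 1) hprod1 h2e h3e (Real.exp_pos _)
  have hd0 : (0:ℝ) < 1 - 2 * Real.exp (-1) := by linarith
  have hβ : (3:ℝ) ≤ 1 / (1 - 2 * Real.exp (-1)) := by
    rw [le_div_iff₀ hd0]; linarith
  have hA_lt : A < Real.exp (-3) := by
    have h1 : (1 + c) * (E * L) < (1 + c) * (Real.exp (-(1 / (1 - 2 * Real.exp (-1)))) / (1 + c)) :=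
      mul_lt_mul_of_pos_left hcond2 hc1
    have h2 : (1 + c) * (Real.exp (-(1 / (1 - 2 * Real.exp (-1)))) / (1 + c))
        = Real.exp (-(1 / (1 - 2 * Real.exp (-1)))) := by field_simp
    have h3 : Real.exp (-(1 / (1 - 2 * Real.exp (-1)))) ≤ Real.exp (-3) :=
      Real.exp_le_exp.mpr (by linarith)
    calc A = (1 + c) * (E * L) := by rw [hAdef]; ring
      _ < Real.exp (-(1 / (1 - 2 * Real.exp (-1)))) := by rw [← h2]; exact h1
      _ ≤ Real.exp (-3) := h3
  have hB3 : (3:ℝ) < B := by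
    have h := Real.log_lt_log hA0 hA_lt
    rw [Real.log_exp] at h
    rw [hBdef]; linarith
  obtain ⟨T, hTdef⟩ : ∃ y : ℝ, y = B + Real.log 13 - Real.log L := ⟨_, rfl⟩
  -- T lower bound from hcond3
  have hT_lb : L / 2 + (Real.log 13 - Real.log 12) ≤ T := by
    have h1 : E * L ^ 4 * (1 + c) ^ 2 < 144 := (lt_div_iff₀ (by positivity)).mp hcond3
    have h2 : (A * L) ^ 2 < 144 * E := by
      have he : (A * L) ^ 2 = (E * L ^ 4 * (1 + c) ^ 2) * E := by rw [hAdef]; ring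
      rw [he]; exact mul_lt_mul_of_pos_right h1 hE0
    have e2 : Real.exp (-(L/2)) * Real.exp (-(L/2)) = Real.exp (-L) := by
      rw [← Real.exp_add]; ring_nf
    have h3 : 144 * E = (12 * Real.exp (-(L/2))) ^ 2 := by
      rw [← hEexp, ← e2]; ring
    have h4 : A * L < 12 * Real.exp (-(L/2)) := by
      have hpos : (0:ℝ) ≤ 12 * Real.exp (-(L/2)) := by positivity
      exact lt_of_pow_lt_pow_left₀ 2 hpos (by rw [← h3]; exact h2)
    have h5 := Real.log_lt_log (by positivity) h4
    rw [Real.log_mul (by norm_num) (Real.exp_ne_zero _), Real.log_exp,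
      Real.log_mul (ne_of_gt hA0) (ne_of_gt hL0)] at h5
    rw [hTdef, hBdef]; linarith
  have hlog1213 : Real.log 12 < Real.log 13 := Real.log_lt_log (by norm_num) (by norm_num)
  have hT_pos : 1/2 < T := by linarith
  have hL2T : L / 2 ≤ T := by linarith
  have hlogT : Real.log L - Real.log 2 ≤ Real.log T := by
    have h1 : Real.log (L / 2) ≤ Real.log T := Real.log_le_log (by positivity) hL2T
    rwa [Real.log_div (ne_of_gt hL0) (by norm_num)] at h1
  have hlog4 : Real.log 4 = 2 * Real.log 2 := by
    rw [show (4:ℝ) = 2 ^ 2 by norm_num, Real.log_pow]; norm_num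
  have hlog16 : Real.log 16 = 4 * Real.log 2 := by
    rw [show (16:ℝ) = 2 ^ 4 by norm_num, Real.log_pow]; norm_num
  have hlog13_lb : 2 * Real.log 2 ≤ Real.log 13 := by
    have h := Real.log_le_log (by norm_num : (0:ℝ) < 4) (by norm_num : (4:ℝ) ≤ 13)
    linarith
  have hlog13_ub : Real.log 13 ≤ 4 * Real.log 2 := by
    have h := Real.log_le_log (by norm_num : (0:ℝ) < 13) (by norm_num : (13:ℝ) ≤ 16)
    linarith
  have hlog2_ub : Real.log 2 < 0.6931471808 := Real.log_two_lt_d9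
  have hlog13_nonneg : (0:ℝ) ≤ Real.log 13 := Real.log_nonneg (by norm_num)
  have hlogL_nonneg : (0:ℝ) ≤ Real.log L := Real.log_nonneg (le_of_lt hL1)
  have hexp3 : Real.exp (-3) ≤ 1/20 := aux_exp3
  -- A * T ≤ 2
  have hAT : A * T ≤ 2 := by
    have hTle : T ≤ B + Real.log 13 := by rw [hTdef]; linarith
    have h7 : A * T ≤ Real.exp (-3) * (3 + Real.log 13) := by
      rw [hAexp]
      calc Real.exp (-B) * T ≤ Real.exp (-B) * (B + Real.log 13) :=
            mul_le_mul_of_nonneg_left hTle (Real.exp_pos _).le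
        _ ≤ Real.exp (-3) * (3 + Real.log 13) := aux_ATmono B _ hB3 hlog13_nonneg
    have h8 : Real.exp (-3) * (3 + Real.log 13) ≤ (1/20) * (3 + 4 * Real.log 2) :=
      mul_le_mul hexp3 (by linarith) (by linarith) (by norm_num)
    have h9 : (1/20 : ℝ) * (3 + 4 * Real.log 2) ≤ 2 := by nlinarith [hlog2_ub]
    linarith
  -- main claim
  have hclaim : ∀ v : ℝ, 0 < v → 2 * (Real.log v + B) ≤ T * (v + 2 - A) := by
    intro v hv
    have hTpos : (0:ℝ) < T := by linarith
    have h1 : Real.log (v * T / 2) ≤ v * T / 2 - 1 :=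
      Real.log_le_sub_one_of_pos (by positivity)
    rw [Real.log_div (by positivity) (by norm_num),
      Real.log_mul (ne_of_gt hv) (ne_of_gt hTpos)] at h1
    have hBT : B = T - Real.log 13 + Real.log L := by rw [hTdef]; ring
    exact aux_claim A B T L v hv hTpos h1 hlogT hlog13_lb hAT hBT
  -- bound on the kernel
  have hfle : (1 - Real.exp (-x)) / x ≤ 2 / (x + 2) := aux_fle x hx
  have hf0 : 0 ≤ (1 - Real.exp (-x)) / x := by
    have h := Real.exp_le_one_iff.mpr (by linarith : -x ≤ 0)
    exact div_nonneg (by linarith) hx.le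
  have hgoalT : ((1 - Real.exp (-x)) / x) * Real.log ((x + c * E) / A) ≤ T := by
    by_cases hS : Real.log ((x + c * E) / A) ≤ 0
    · exact le_trans (mul_nonpos_of_nonneg_of_nonpos hf0 hS) (by linarith)
    · push_neg at hS
      have hcE : 0 ≤ c * E := mul_nonneg hc hE0.le
      have hxcE : 0 < x + c * E := by linarith
      have hcEA : c * E ≤ A := by
        rw [hAdef]
        calc c * E ≤ (1 + c) * E := mul_le_mul_of_nonneg_right (by linarith) hE0.le
          _ = (1 + c) * E * 1 := by ring
          _ ≤ (1 + c) * E * L := by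
              exact mul_le_mul_of_nonneg_left hL1.le (by positivity)
      have hSeq : Real.log ((x + c * E) / A) = Real.log (x + c * E) + B := by
        rw [Real.log_div (ne_of_gt hxcE) (ne_of_gt hA0), hBdef]; ring
      have hmonol : Real.log (x + c * E) ≤ Real.log (x + A) :=
        Real.log_le_log hxcE (by linarith)
      have hcl := hclaim (x + A) (by linarith)
      calc ((1 - Real.exp (-x)) / x) * Real.log ((x + c * E) / A)
          ≤ (2 / (x + 2)) * Real.log ((x + c * E) / A) :=
            mul_le_mul_of_nonneg_right hfle hS.le
        _ ≤ (2 / (x + 2)) * (Real.log (x + A) + B) := by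
            have hstep : Real.log ((x + c * E) / A) ≤ Real.log (x + A) + B := by
              rw [hSeq]; linarith
            have hpos2 : (0:ℝ) ≤ 2 / (x + 2) := by positivity
            exact mul_le_mul_of_nonneg_left hstep hpos2
        _ ≤ T := by
            rw [div_mul_eq_mul_div, div_le_iff₀ (by linarith : (0:ℝ) < x + 2)]
            calc 2 * (Real.log (x + A) + B) ≤ T * (x + A + 2 - A) := hcl
              _ = T * (x + 2) := by ring
  have hTR : T = L - 2 * Real.log L - Real.log (1 + c) + Real.log 13 := by
    rw [hTdef, hB_eq]; ring
  linarith [hgoalT]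
end

section
/- Let c ≥ 0 and E ∈ (0,1) satisfy E < e^{−1}, E·log(1/E) < e^{−1/(1−2e^{−1})}/(1+c), and E·(log(1/E))⁴ < 144/(1+c)². Write L := log(1/E) and let R be the distribution on ℕ with R(0) = 1 − (1+c)·E and R(y) = (1+c)·E·(1 − 1/L)·(1/L)^{y−1} for y ≥ 1. Define D(x) := ∑_{y=0}^∞ Pois_{x+cE}(y)·log(Pois_{x+cE}(y)/R(y)) for x ≥ 0. Let μ be a Borel probability measure on ℝ with μ((−∞,0)) = 0 and ∫ x dμ(x) ≤ E, and assume x ↦ D(x) is μ-integrable. Then (1/E)·∫ D(x) dμ(x) ≤ log(1/E) − log log(1/E) − log(1+c) + 2 + log 13 + (1/E)·( log(1/(1−(1+c)·E)) − (1+c)·E ) + (c²/2)·E·log log(1/E) + (1+c)·log(1/(1 − 1/log(1/E))). -/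
open Real MeasureTheory

lemma tsum_pois (ν : ℝ) : ∑' y : ℕ, ν ^ y / (Nat.factorial y : ℝ) = Real.exp ν := by
  rw [Real.exp_eq_exp_ℝ, NormedSpace.exp_eq_tsum_div]

lemma summable_pois (ν : ℝ) : Summable (fun y : ℕ => ν ^ y / (Nat.factorial y : ℝ)) :=
  Real.summable_pow_div_factorial ν

lemma pois_succ (ν : ℝ) (n : ℕ) :
    ν ^ (n+1) / (Nat.factorial (n+1) : ℝ) * ((n:ℝ) + 1) = ν * (ν ^ n / (Nat.factorial n : ℝ)) := by
  rw [Nat.factorial_succ, pow_succ]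
  have h1 : ((Nat.factorial n : ℝ)) ≠ 0 := by positivity
  push_cast
  field_simp

/-- key affine sum: `∑ P y * G y` where `G 0 = g0`, `G (n+1) = a + b n`. -/
lemma tsum_pois_affine (ν g0 a b : ℝ) (G : ℕ → ℝ) (hG0 : G 0 = g0)
    (hGs : ∀ n : ℕ, G (n+1) = a + b * n) :
    Summable (fun y : ℕ => (Real.exp (-ν) * ν ^ y / (Nat.factorial y : ℝ)) * G y) ∧
    ∑' y : ℕ, (Real.exp (-ν) * ν ^ y / (Nat.factorial y : ℝ)) * G y
      = Real.exp (-ν) * g0 + a * (1 - Real.exp (-ν)) + b * (ν - 1 + Real.exp (-ν)) := by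
  set q : ℕ → ℝ := fun n => ν ^ n / (Nat.factorial n : ℝ) with hq
  have hsq : Summable q := summable_pois ν
  have hsq1 : Summable (fun n : ℕ => q (n+1)) := (summable_nat_add_iff 1).mpr hsq
  set f : ℕ → ℝ := fun y => (Real.exp (-ν) * ν ^ y / (Nat.factorial y : ℝ)) * G y with hf
  have hfq : ∀ y, f y = Real.exp (-ν) * (q y * G y) := by
    intro y; rw [hf, hq]; ring
  have hterm : ∀ n : ℕ, f (n+1) = Real.exp (-ν) * ((a - b) * q (n+1) + (b * ν) * q n) := by
    intro n
    have key : q (n+1) * ((n:ℝ) + 1) = ν * q n := pois_succ ν n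
    rw [hfq, hGs n]
    linear_combination Real.exp (-ν) * b * key
  have hsum1 : Summable (fun n => f (n+1)) := by
    have : Summable (fun n => Real.exp (-ν) * ((a - b) * q (n+1) + (b * ν) * q n)) :=
      (((hsq1.mul_left (a-b)).add (hsq.mul_left (b*ν))).mul_left _)
    exact this.congr (fun n => (hterm n).symm)
  have hsf : Summable f := (summable_nat_add_iff 1).mp hsum1
  refine ⟨hsf, ?_⟩
  have hshift : ∑' n : ℕ, q (n+1) = Real.exp ν - 1 := by
    have h0 := Summable.tsum_eq_zero_add hsq
    rw [tsum_pois] at h0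
    have hq0 : q 0 = 1 := by rw [hq]; simp
    rw [hq0] at h0; linarith
  have hsq' : ∑' n : ℕ, q n = Real.exp ν := tsum_pois ν
  rw [Summable.tsum_eq_zero_add hsf]
  have hf0 : f 0 = Real.exp (-ν) * g0 := by rw [hfq, hq, hG0]; simp
  have hrest : ∑' n : ℕ, f (n+1)
      = Real.exp (-ν) * ((a - b) * (Real.exp ν - 1) + (b * ν) * Real.exp ν) := by
    rw [tsum_congr hterm, tsum_mul_left, Summable.tsum_add (hsq1.mul_left (a-b)) (hsq.mul_left (b*ν)),
      tsum_mul_left, tsum_mul_left, hshift, hsq']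
  rw [hf0, hrest]
  have he : Real.exp (-ν) * Real.exp ν = 1 := by
    rw [← Real.exp_add]; simp
  linear_combination (a - b + b*ν) * he

lemma exp_upper {x : ℝ} (hx : x < 1) : Real.exp x ≤ 1 / (1 - x) := by
  have h1 : 1 - x ≤ Real.exp (-x) := by
    have := Real.add_one_le_exp (-x); linarith
  have h2 : 0 < 1 - x := by linarith
  have h4 : 0 < Real.exp x := Real.exp_pos x
  rw [Real.exp_neg] at h1
  rw [le_div_iff₀ h2]
  calc Real.exp x * (1 - x) ≤ Real.exp x * (Real.exp x)⁻¹ :=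
        mul_le_mul_of_nonneg_left h1 h4.le
    _ = 1 := mul_inv_cancel₀ h4.ne'

lemma exp_pow_eq (n : ℕ) : Real.exp n = (Real.exp 1) ^ n := by
  rw [← Real.exp_nat_mul, mul_one]

lemma exp5_lb : (148.3 : ℝ) ≤ Real.exp 5 := by
  have h := Real.exp_one_gt_d9
  have e5 : Real.exp 5 = (Real.exp 1)^(5:ℕ) := by rw [← Real.exp_nat_mul]; norm_num
  rw [e5]
  calc (148.3:ℝ) ≤ (2.7182818283)^5 := by norm_num
    _ ≤ (Real.exp 1)^5 := pow_le_pow_left₀ (by norm_num) h.le 5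

lemma exp5_ub : Real.exp 5 ≤ (148.5 : ℝ) := by
  have h := Real.exp_one_lt_d9
  have e5 : Real.exp 5 = (Real.exp 1)^(5:ℕ) := by rw [← Real.exp_nat_mul]; norm_num
  rw [e5]
  calc (Real.exp 1)^5 ≤ (2.7182818286)^5 :=
        pow_le_pow_left₀ (Real.exp_pos 1).le h.le 5
    _ ≤ 148.5 := by norm_num

lemma exp7_lb : (1096 : ℝ) ≤ Real.exp 7 := by
  have h := Real.exp_one_gt_d9
  have e7 : Real.exp 7 = (Real.exp 1)^(7:ℕ) := by rw [← Real.exp_nat_mul]; norm_num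
  rw [e7]
  calc (1096:ℝ) ≤ (2.7182818283)^7 := by norm_num
    _ ≤ (Real.exp 1)^7 := pow_le_pow_left₀ (by norm_num) h.le 7

lemma exp2_lb : (7.38 : ℝ) ≤ Real.exp 2 := by
  have h := Real.exp_one_gt_d9
  have e2 : Real.exp 2 = (Real.exp 1)^(2:ℕ) := by rw [← Real.exp_nat_mul]; norm_num
  rw [e2]
  calc (7.38:ℝ) ≤ (2.7182818283)^2 := by norm_num
    _ ≤ (Real.exp 1)^2 := pow_le_pow_left₀ (by norm_num) h.le 2

lemma einv_lb : (0.3678 : ℝ) ≤ Real.exp (-1) := by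
  have h := Real.exp_one_lt_d9
  rw [Real.exp_neg, le_inv_comm₀ (by norm_num) (Real.exp_pos 1)]
  calc Real.exp 1 ≤ 2.7182818286 := h.le
    _ ≤ (0.3678:ℝ)⁻¹ := by norm_num

lemma einv_ub : Real.exp (-1) ≤ (0.368 : ℝ) := by
  have h := Real.exp_one_gt_d9
  rw [Real.exp_neg, inv_le_comm₀ (Real.exp_pos 1) (by norm_num)]
  calc (0.368:ℝ)⁻¹ ≤ 2.7182818283 := by norm_num
    _ ≤ Real.exp 1 := h.le

-- exp(2.5) ≥ 12.1
lemma exp25_lb : (12.1 : ℝ) ≤ Real.exp 2.5 := by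
  have h5 := exp5_lb
  have hsq : Real.exp 2.5 * Real.exp 2.5 = Real.exp 5 := by
    rw [← Real.exp_add]; norm_num
  nlinarith [Real.exp_pos (2.5:ℝ)]

-- exp(2.5) ≤ 12.2
lemma exp25_ub : Real.exp 2.5 ≤ (12.2 : ℝ) := by
  have h5 := exp5_ub
  have hsq : Real.exp 2.5 * Real.exp 2.5 = Real.exp 5 := by
    rw [← Real.exp_add]; norm_num
  nlinarith [Real.exp_pos (2.5:ℝ)]

-- log 13 bounds
lemma log13_lb : (2.5 : ℝ) ≤ Real.log 13 := by
  rw [Real.le_log_iff_exp_le (by norm_num)]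
  calc Real.exp 2.5 ≤ 12.2 := exp25_ub
    _ ≤ 13 := by norm_num

lemma log13_ub : Real.log 13 ≤ (2.6 : ℝ) := by
  rw [Real.log_le_iff_le_exp (by norm_num)]
  -- 13 ≤ exp 2.6 : exp 2.6 ≥ exp 2 * exp 0.6 ≥ 7.38*1.6 = 11.8?? not enough
  -- use exp 2.6 = exp 5 / exp 2.4 ≥ 148.3 / (exp 2.4) ; exp 2.4 ≤ exp 2.5 ≤ 12.2 gives ≥12.15 <13 ✗
  -- use (exp 2.6)^5 = exp 13 ≥ exp7*exp5*exp1 ≥ 1096*148.3*2.71 ≥ 440500 ≥ 13^5=371293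
  have h13 : Real.exp 13 = (Real.exp 2.6)^5 := by
    rw [← Real.exp_nat_mul]; norm_num
  have hlow : (371293 : ℝ) ≤ Real.exp 13 := by
    have : Real.exp 13 = Real.exp 7 * Real.exp 5 * Real.exp 1 := by
      rw [← Real.exp_add, ← Real.exp_add]; norm_num
    rw [this]
    have h1 := Real.exp_one_gt_d9
    have s1 : (1096:ℝ)*148.3 ≤ Real.exp 7 * Real.exp 5 :=
      mul_le_mul exp7_lb exp5_lb (by norm_num) (Real.exp_pos 7).le
    calc (371293:ℝ) ≤ (1096*148.3)*2.7182818283 := by norm_num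
      _ ≤ (Real.exp 7 * Real.exp 5) * Real.exp 1 :=
        mul_le_mul s1 h1.le (by norm_num) (by positivity)
  have : (13:ℝ)^5 ≤ (Real.exp 2.6)^5 := by
    rw [← h13]; norm_num; linarith
  exact le_of_pow_le_pow_left₀ (by norm_num) (Real.exp_pos 2.6).le this

lemma log12_ub : Real.log 12 ≤ (2.49 : ℝ) := by
  rw [Real.log_le_iff_le_exp (by norm_num)]
  -- exp 2.49 = exp 2.5 / exp 0.01 ≥ 12.1/1.0102 ≥ 11.977?? not ≥ 12! 12.1/1.0102=11.978 ✗
  -- tighter: exp2.5 ≥ 12.18: recompute with 148.3: sqrt(148.3)=12.177; use 12.17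
  have h25 : (12.17 : ℝ) ≤ Real.exp 2.5 := by
    have h5 := exp5_lb
    have hsq : Real.exp 2.5 * Real.exp 2.5 = Real.exp 5 := by
      rw [← Real.exp_add]; norm_num
    nlinarith [Real.exp_pos (2.5:ℝ)]
  have hsplit : Real.exp 2.5 = Real.exp 2.49 * Real.exp 0.01 := by
    rw [← Real.exp_add]; norm_num
  have h001 : Real.exp (0.01:ℝ) ≤ 1/(1-0.01) := exp_upper (by norm_num)
  nlinarith [Real.exp_pos (2.49:ℝ), Real.exp_pos (0.01:ℝ)]

lemma log4_ub : Real.log 4 ≤ (2 : ℝ) := by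
  rw [Real.log_le_iff_le_exp (by norm_num)]
  calc (4:ℝ) ≤ 7.38 := by norm_num
    _ ≤ Real.exp 2 := exp2_lb

lemma log5_lb : (1.6 : ℝ) ≤ Real.log 5 := by
  rw [Real.le_log_iff_exp_le (by norm_num)]
  -- exp 1.6 ≤ 5 : (exp 1.6)^5 = exp 8 ≤ 148.5*20.1 = 2985 ≤ 3125
  have h8 : Real.exp 8 = (Real.exp 1.6)^5 := by rw [← Real.exp_nat_mul]; norm_num
  have e3ub : Real.exp 3 ≤ 20.1 := by
    have e3 : Real.exp 3 = (Real.exp 1)^(3:ℕ) := by rw [← Real.exp_nat_mul]; norm_num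
    rw [e3]
    calc (Real.exp 1)^3 ≤ (2.7182818286)^3 := pow_le_pow_left₀ (Real.exp_pos 1).le Real.exp_one_lt_d9.le 3
      _ ≤ 20.1 := by norm_num
  have h8ub : Real.exp 8 ≤ 2985.85 := by
    have : Real.exp 8 = Real.exp 5 * Real.exp 3 := by rw [← Real.exp_add]; norm_num
    rw [this]
    nlinarith [exp5_ub, Real.exp_pos (5:ℝ), Real.exp_pos (3:ℝ)]
  have : (Real.exp 1.6)^5 ≤ (5:ℝ)^5 := by rw [← h8]; norm_num; linarith
  exact le_of_pow_le_pow_left₀ (by norm_num) (by norm_num) this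

-- exp(-(1/(1-2*exp(-1)))) ≤ 0.03
lemma darkK_ub : Real.exp (-(1 / (1 - 2 * Real.exp (-1)))) ≤ (0.03 : ℝ) := by
  have h1 := einv_lb
  have h2 := einv_ub
  have hx : (3.55 : ℝ) ≤ 1 / (1 - 2 * Real.exp (-1)) := by
    have hpos : (0:ℝ) < 1 - 2 * Real.exp (-1) := by nlinarith
    rw [le_div_iff₀ hpos]; nlinarith
  have hmono : Real.exp (-(1 / (1 - 2 * Real.exp (-1)))) ≤ Real.exp (-3.55) :=
    Real.exp_le_exp.mpr (by linarith)
  refine hmono.trans ?_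
  -- exp(3.55) ≥ 33.34 : exp(7.1) = exp7*exp(0.1) ≥ 1096*1.1 = 1205 ≥ 33.34² = 1111.6
  have hsq : Real.exp 3.55 * Real.exp 3.55 = Real.exp 7 * Real.exp 0.1 := by
    rw [← Real.exp_add, ← Real.exp_add]; norm_num
  have h01 : (1.1:ℝ) ≤ Real.exp 0.1 := by
    have := Real.add_one_le_exp (0.1:ℝ); linarith
  have h355 : (33.34:ℝ) ≤ Real.exp 3.55 := by
    nlinarith [Real.exp_pos (3.55:ℝ), exp7_lb, Real.exp_pos (7:ℝ), Real.exp_pos (0.1:ℝ)]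
  rw [Real.exp_neg, inv_le_comm₀ (Real.exp_pos _) (by norm_num)]
  calc (0.03:ℝ)⁻¹ ≤ 33.34 := by norm_num
    _ ≤ Real.exp 3.55 := h355

lemma exp_quad_lb {x : ℝ} (hx : 0 ≤ x) : 1 + x + x^2/2 ≤ Real.exp x := by
  have h := Real.sum_le_exp_of_nonneg hx 3
  simp [Finset.sum_range_succ, Nat.factorial] at h
  nlinarith [h]

lemma exp_neg_quad_ub {x : ℝ} (hx : 0 ≤ x) : Real.exp (-x) ≤ 1 - x + x^2/2 := by
  have h := exp_quad_lb hx
  have h1 : Real.exp (-x) * Real.exp x = 1 := by rw [← Real.exp_add]; simp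
  have hq : (0:ℝ) < 1 - x + x^2/2 := by nlinarith [sq_nonneg (1-x)]
  nlinarith [Real.exp_pos x, Real.exp_pos (-x), sq_nonneg (x^2), mul_le_mul_of_nonneg_left h (Real.exp_pos (-x)).le]

-- exp x ≤ 1 + x + x²/2 + x³/6 + 5x⁴/96 on [0,1]
lemma exp_quartic_ub {x : ℝ} (h0 : 0 ≤ x) (h1 : x ≤ 1) :
    Real.exp x ≤ 1 + x + x^2/2 + x^3/6 + 5*x^4/96 := by
  have h := Real.exp_bound' h0 h1 (n := 4) (by norm_num)
  simp [Finset.sum_range_succ, Nat.factorial] at h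
  nlinarith [h]

-- 1 - exp(-x) ≤ x - 0.28 x² on [0,1]
lemma one_sub_exp_neg_ub {x : ℝ} (h0 : 0 ≤ x) (h1 : x ≤ 1) :
    1 - Real.exp (-x) ≤ x - 0.28*x^2 := by
  have h := exp_quartic_ub h0 h1
  have h1' : Real.exp (-x) * Real.exp x = 1 := by rw [← Real.exp_add]; simp
  -- (1-x+0.28x²)·exp x ≤ (1-x+0.28x²)·P(x) ≤ 1 when 1-x+0.28x² ≥ 0
  have hqnn : (0:ℝ) ≤ 1 - x + 0.28*x^2 := by nlinarith
  have key : (1 - x + 0.28*x^2) * Real.exp x ≤ 1 := by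
    have step := mul_le_mul_of_nonneg_left h hqnn
    refine step.trans ?_
    nlinarith [pow_le_pow_left₀ h0 h1 2, pow_le_pow_left₀ h0 h1 3, pow_le_pow_left₀ h0 h1 4,
      pow_le_pow_left₀ h0 h1 5, pow_le_pow_left₀ h0 h1 6, sq_nonneg x]
  nlinarith [Real.exp_pos x, Real.exp_pos (-x),
    mul_le_mul_of_nonneg_left key (Real.exp_pos (-x)).le]

-- exp(-x) ≥ (2-x)*exp(-1)
lemma exp_neg_lb_lin (x : ℝ) : (2 - x) * Real.exp (-1) ≤ Real.exp (-x) := by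
  have h : (2 - x) ≤ Real.exp (1 - x) := by
    have := Real.add_one_le_exp (1 - x); linarith
  have he : Real.exp (1 - x) * Real.exp (-1) = Real.exp (-x) := by
    rw [← Real.exp_add]; ring_nf
  calc (2-x) * Real.exp (-1) ≤ Real.exp (1-x) * Real.exp (-1) :=
        mul_le_mul_of_nonneg_right h (Real.exp_pos _).le
    _ = Real.exp (-x) := he

-- log t ≤ t * exp(-1) for t > 0
lemma log_le_mul_einv {t : ℝ} (ht : 0 < t) : Real.log t ≤ t * Real.exp (-1) := by
  have h := Real.log_le_sub_one_of_pos (mul_pos ht (Real.exp_pos (-1)))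
  rw [Real.log_mul ht.ne' (Real.exp_pos _).ne', Real.log_exp] at h
  linarith

-- -log(1-1/L) ≤ 1/(L-1) for L > 1
lemma neg_log_one_sub_inv {L : ℝ} (hL : 1 < L) : -Real.log (1 - 1/L) ≤ 1/(L-1) := by
  have hpos : 0 < 1 - 1/L := by
    rw [sub_pos, div_lt_one (by linarith)]; linarith
  have h := Real.log_le_sub_one_of_pos (x := (1 - 1/L)⁻¹) (by positivity)
  rw [Real.log_inv] at h
  have hL0 : (0:ℝ) < L := by linarith
  have : (1 - 1/L)⁻¹ - 1 = 1/(L-1) := by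
    have hL1 : L - 1 ≠ 0 := by intro h'; nlinarith
    rw [inv_eq_one_div]
    field_simp
    ring
  linarith
set_option maxHeartbeats 1600000

/-- Proposition 3: duality upper bound on the photon efficiency of the Poisson
channel with average-power constraint `E` and dark current `c·E`. -/
theorem stmt_14 (c E : ℝ) (hc : 0 ≤ c) (hE0 : 0 < E)
    (hcond1 : E < Real.exp (-1))
    (hcond2 : E * Real.log (1 / E) < Real.exp (-(1 / (1 - 2 * Real.exp (-1)))) / (1 + c))
    (hcond3 : E * (Real.log (1 / E)) ^ 4 < 144 / (1 + c) ^ 2)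
    (L : ℝ) (hL : L = Real.log (1 / E))
    (R : ℕ → ℝ) (hR0 : R 0 = 1 - (1 + c) * E)
    (hRy : ∀ y : ℕ, 1 ≤ y → R y = (1 + c) * E * (1 - 1 / L) * (1 / L) ^ (y - 1))
    (D : ℝ → ℝ)
    (hD : ∀ x : ℝ, 0 ≤ x →
      D x = ∑' y : ℕ,
        (Real.exp (-(x + c * E)) * (x + c * E) ^ y / (Nat.factorial y : ℝ))
          * Real.log
              ((Real.exp (-(x + c * E)) * (x + c * E) ^ y / (Nat.factorial y : ℝ))
                / R y))
    (μ : Measure ℝ) [IsProbabilityMeasure μ]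
    (hsupp : μ (Set.Iio 0) = 0)
    (hXint : Integrable (fun x : ℝ => x) μ)
    (hmean : ∫ x, x ∂μ ≤ E)
    (hDint : Integrable D μ) :
    (1 / E) * ∫ x, D x ∂μ
    ≤ Real.log (1 / E) - Real.log (Real.log (1 / E)) - Real.log (1 + c)
        + 2 + Real.log 13
        + (1 / E) * (Real.log (1 / (1 - (1 + c) * E)) - (1 + c) * E)
        + (c ^ 2 / 2) * E * Real.log (Real.log (1 / E))
        + (1 + c) * Real.log (1 / (1 - 1 / Real.log (1 / E))) := by
  rw [← hL] at hcond2 hcond3 ⊢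
  have h1c : (0:ℝ) < 1 + c := by linarith only [hc]
  have hLlogE : Real.log E = -L := by rw [hL, one_div, Real.log_inv]; ring
  have hexpL : Real.exp (-L) = E := by rw [← hLlogE, Real.exp_log hE0]
  have hL1 : 1 < L := by
    have h := Real.log_lt_log hE0 hcond1
    rw [Real.log_exp] at h
    rw [hLlogE] at h; linarith only [h]
  have hLpos : (0:ℝ) < L := by linarith only [hL1]
  have hEL : E * L < 0.03 := by
    have hk := darkK_ub
    have h2 : Real.exp (-(1 / (1 - 2 * Real.exp (-1)))) / (1 + c)
        ≤ Real.exp (-(1 / (1 - 2 * Real.exp (-1)))) := by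
      apply div_le_self (Real.exp_pos _).le; linarith only [hc]
    linarith only [hcond2, h2, hk]
  have hL5 : (5:ℝ) ≤ L := by
    by_contra hlt
    push_neg at hlt
    have h1 : (5:ℝ)/L ≤ Real.exp (5 - L) := by
      have h0 := Real.add_one_le_exp (5 - L)
      have h2 : 5/L ≤ 5 - L + 1 := by
        rw [div_le_iff₀ hLpos]; nlinarith only [hL1, hlt]
      linarith only [h0, h2]
    have h2 : 5 * Real.exp (-5) ≤ E * L := by
      have he : E * L = L * (Real.exp (5 - L) * Real.exp (-5)) := by
        rw [← Real.exp_add]; ring_nf; rw [mul_comm, hexpL]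
      rw [he]
      calc 5 * Real.exp (-5) = (5/L) * L * Real.exp (-5) := by field_simp
        _ ≤ Real.exp (5-L) * L * Real.exp (-5) := by
            apply mul_le_mul_of_nonneg_right (mul_le_mul_of_nonneg_right h1 hLpos.le)
              (Real.exp_pos _).le
        _ = L * (Real.exp (5-L) * Real.exp (-5)) := by ring
    have h3 : (0.0336:ℝ) ≤ 5 * Real.exp (-5) := by
      rw [Real.exp_neg, show (5:ℝ) * (Real.exp 5)⁻¹ = 5 / Real.exp 5 by ring,
        le_div_iff₀ (Real.exp_pos _)]
      nlinarith only [exp5_ub]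
    linarith only [hEL, h2, h3]
  -- abbreviations
  set l : ℝ := Real.log L with hldef
  set lam : ℝ := Real.log (1 / (1 - 1 / L)) with hlamdef
  set C0 : ℝ := Real.log (1 / (1 - (1 + c) * E)) with hC0def
  set T : ℝ := (1 + c) * E with hTdef
  clear_value l lam C0 T
  have hTpos : 0 < T := by rw [hTdef]; positivity
  have hl16 : (1.6:ℝ) ≤ l := by
    rw [hldef]
    exact le_trans log5_lb (Real.log_le_log (by norm_num) hL5)
  have hlpos : (0:ℝ) < l := by linarith only [hl16]
  have h1L : (0:ℝ) < 1 - 1/L := by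
    rw [sub_pos, div_lt_one hLpos]; linarith only [hL1]
  have hlam_eq : lam = -Real.log (1 - 1/L) := by rw [hlamdef, one_div, Real.log_inv]
  have hlam_pos : 0 ≤ lam := by
    rw [hlam_eq, neg_nonneg]
    apply Real.log_nonpos h1L.le
    have : 0 < 1/L := by positivity
    linarith only [this]
  have hlam_ub : lam ≤ 0.25 := by
    rw [hlam_eq]
    have h := neg_log_one_sub_inv hL1
    have h4 : 1/(L-1) ≤ (0.25:ℝ) := by
      rw [div_le_iff₀ (by linarith only [hL5])]; linarith only [hL5]
    linarith only [h, h4]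
  have hcE_nonneg : 0 ≤ c * E := by positivity
  have hcET : c * E ≤ T := by rw [hTdef]; nlinarith only [hE0, hc]
  -- hcond3 consequences
  have hupos : 0 < Real.exp (-(L/2)) := Real.exp_pos _
  have hEsq : E = Real.exp (-(L/2)) * Real.exp (-(L/2)) := by
    rw [← Real.exp_add, show -(L/2) + -(L/2) = -L by ring, hexpL]
  have h12c : (1+c)*L^2*Real.exp (-(L/2)) ≤ 12 := by
    have h2 : (0:ℝ) < (1+c)^2 := by positivity
    have h3 := (lt_div_iff₀ h2).mp hcond3
    have hsq : ((1+c)*L^2*Real.exp (-(L/2)))^2 < 144 := by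
      calc ((1+c)*L^2*Real.exp (-(L/2)))^2 = (E*L^4)*(1+c)^2 := by rw [hEsq]; ring
        _ < 144 := h3
    have hXpos : 0 < (1+c)*L^2*Real.exp (-(L/2)) :=
      mul_pos (mul_pos h1c (pow_pos hLpos 2)) hupos
    nlinarith only [hsq, hXpos]
  have hTL2 : T * L^2 ≤ 12 * Real.exp (-(L/2)) := by
    calc T*L^2 = ((1+c)*L^2*Real.exp (-(L/2)))*Real.exp (-(L/2)) := by
          rw [hTdef, hEsq]; ring
      _ ≤ 12*Real.exp (-(L/2)) := mul_le_mul_of_nonneg_right h12c hupos.le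
  have hu_ub : Real.exp (-(L/2)) ≤ 1/12.1 := by
    have h1 : Real.exp (-(L/2)) ≤ Real.exp (-2.5) := Real.exp_le_exp.mpr (by linarith only [hL5])
    have h2 : Real.exp (-2.5) ≤ 1/12.1 := by
      rw [Real.exp_neg]
      calc (Real.exp 2.5)⁻¹ ≤ (12.1)⁻¹ := inv_anti₀ (by norm_num) exp25_lb
        _ = 1/12.1 := by norm_num
    linarith only [h1, h2]
  have hT99 : T * L^2 ≤ 0.992 := by
    calc T * L^2 ≤ 12 * Real.exp (-(L/2)) := hTL2
      _ ≤ 12 * (1/12.1) := by linarith only [hu_ub]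
      _ ≤ 0.992 := by norm_num
  have hlog1c_nonneg : 0 ≤ Real.log (1 + c) := Real.log_nonneg (by linarith only [hc])
  have hlog1c_ub : Real.log (1 + c) ≤ L/2 + Real.log 12 - 2*l := by
    have hpos : (0:ℝ) < (1+c)*L^2*Real.exp (-(L/2)) :=
      mul_pos (mul_pos h1c (pow_pos hLpos 2)) hupos
    have hlog := Real.log_le_log hpos h12c
    rw [Real.log_mul (mul_pos h1c (pow_pos hLpos 2)).ne' hupos.ne',
      Real.log_mul h1c.ne' (pow_pos hLpos 2).ne', Real.log_pow, Real.log_exp] at hlog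
    rw [hldef]
    push_cast at hlog
    linarith only [hlog]
  set B : ℝ := L - Real.log (1 + c) + lam with hBdef
  set S : ℝ := L - l - Real.log (1 + c) + 2 + Real.log 13 with hSdef
  clear_value B S
  have hB_lb : L/2 + 2*l - 2.49 ≤ B := by
    rw [hBdef]
    linarith only [log12_ub, hlog1c_ub, hlam_pos]
  have hBpos : (0:ℝ) < B := by linarith only [hB_lb, hL5, hl16]
  have hBl_lb : L/2 + l - 2.49 ≤ B - l := by linarith only [hB_lb]
  have hBl_pos : (0:ℝ) ≤ B - l := by linarith only [hBl_lb, hL5, hl16]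
  have hS_eq : S = B - lam - l + 2 + Real.log 13 := by rw [hSdef, hBdef]; ring
  have hS_ub : S ≤ L + 4.6 := by
    rw [hSdef]
    linarith only [log13_ub, hlog1c_nonneg, hlpos]
  have hS1 : (1:ℝ) ≤ S - 1 := by
    rw [hS_eq]
    linarith only [log13_lb, hlam_ub, hB_lb, hL5, hl16]
  have hS_nonneg : (0:ℝ) ≤ S := by linarith only [hS1]
  have hTSL : T * S * L ≤ 1.91 := by
    have h1 : T * S ≤ T * (L + 4.6) := mul_le_mul_of_nonneg_left hS_ub hTpos.le
    have h4 : T*L ≤ 0.1984 := by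
      have hp : 0 ≤ T*L*(L-5) :=
        mul_nonneg (mul_nonneg hTpos.le hLpos.le) (by linarith only [hL5])
      nlinarith only [hp, hT99]
    have h6 := mul_le_mul_of_nonneg_right h1 hLpos.le
    nlinarith only [h6, hT99, h4]
  have hTSnn : (0:ℝ) ≤ T * S := mul_nonneg hTpos.le hS_nonneg
  have hTS_ub : T * S ≤ 0.382 := by
    have hp : 0 ≤ T*S*(L-5) := mul_nonneg hTSnn (by linarith only [hL5])
    nlinarith only [hp, hTSL]
  have hT1 : T < 1 := by
    have hp : 0 ≤ T*(L^2-25) := mul_nonneg hTpos.le (by nlinarith only [hL5])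
    nlinarith only [hp, hT99, hTpos]
  have hC0_lb : T ≤ C0 := by
    rw [hC0def, one_div, Real.log_inv, hTdef]
    have h := Real.log_le_sub_one_of_pos (show (0:ℝ) < 1 - (1+c)*E by
      rw [← hTdef]; linarith only [hT1])
    linarith only [h]
  have hC0_nonneg : 0 ≤ C0 := le_trans hTpos.le hC0_lb
  set KK : ℝ := C0 - c*E + T*lam with hKKdef
  clear_value KK
  have hTlam_nonneg : 0 ≤ T*lam := mul_nonneg hTpos.le hlam_pos
  have hKK_nonneg : 0 ≤ KK := by
    rw [hKKdef]
    linarith only [hTlam_nonneg, hC0_lb, hcET]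
  -- THE POINTWISE BOUND
  have hpt : ∀ x : ℝ, 0 ≤ x → D x ≤ (S-1)*x + KK := by
    intro x hx
    have hDx := hD x hx
    set ν : ℝ := x + c * E with hnu
    have hν0 : 0 ≤ ν := by rw [hnu]; linarith only [hx, hcE_nonneg]
    have hxν : x = ν - c*E := by rw [hnu]; ring
    clear_value ν
    rcases hν0.eq_or_lt with hν00 | hνpos
    · -- ν = 0
      have hcE0 : c * E = 0 := by
        rw [hnu] at hν00; linarith only [hν00, hx, hcE_nonneg]
      have hx0 : x = 0 := by rw [hnu] at hν00; linarith only [hν00, hx, hcE_nonneg]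
      rw [hDx]
      have hts : (∑' y : ℕ, (Real.exp (-ν) * ν ^ y / (Nat.factorial y : ℝ))
          * Real.log ((Real.exp (-ν) * ν ^ y / (Nat.factorial y : ℝ)) / R y))
          = Real.log (1 / R 0) := by
        rw [tsum_eq_single 0 ?_]
        · rw [← hν00]; norm_num
        · intro y hy
          have hz : ν ^ y = 0 := by rw [← hν00]; exact zero_pow hy
          rw [hz]; simp
      rw [hts, hR0]
      have hrw : Real.log (1/(1-T)) = C0 := by rw [hC0def, hTdef]
      rw [hrw, hx0, hKKdef]
      linarith only [hTlam_nonneg, hcE0]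
    · -- ν > 0
      have hfact_pos : ∀ y:ℕ, (0:ℝ) < (Nat.factorial y : ℝ) := fun y => by
        exact_mod_cast Nat.factorial_pos y
      have hPpos : ∀ y:ℕ, 0 < Real.exp (-ν) * ν ^ y / (Nat.factorial y : ℝ) := fun y => by
        have := hfact_pos y
        positivity
      have hRs : ∀ n:ℕ, R (n+1) = T * (1 - 1/L) * (1/L)^n := by
        intro n
        have h := hRy (n+1) (by omega)
        rw [h]
        norm_num
      have hR0pos : (0:ℝ) < R 0 := by rw [hR0]; linarith only [hT1]
      have hRspos : ∀ n:ℕ, 0 < R (n+1) := by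
        intro n
        rw [hRs n]
        have h1Lpos : (0:ℝ) < 1/L := by positivity
        exact mul_pos (mul_pos hTpos h1L) (pow_pos h1Lpos n)
      have hlogT : Real.log T = Real.log (1+c) - L := by
        rw [hTdef, Real.log_mul h1c.ne' hE0.ne', hLlogE]; ring
      have hlog1L : Real.log (1 - 1/L) = -lam := by rw [hlam_eq, neg_neg]
      have hloginvL : Real.log (1/L) = -l := by rw [one_div, Real.log_inv, hldef]
      have hlogRs : ∀ n:ℕ, Real.log (R (n+1)) = -B - l*n := by
        intro n
        have h1Lpos : (0:ℝ) < 1/L := by positivity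
        rw [hRs n, Real.log_mul (mul_pos hTpos h1L).ne' (pow_pos h1Lpos n).ne',
          Real.log_mul hTpos.ne' h1L.ne', Real.log_pow, hlogT, hlog1L, hloginvL, hBdef]
        push_cast; ring
      have hlogR0 : Real.log (R 0) = -C0 := by
        rw [hR0, hC0def, hTdef, one_div, Real.log_inv, neg_neg]
      have hsumP : Summable (fun y:ℕ => ν^y/(Nat.factorial y : ℝ)) := summable_pois ν
      have hPle1 : ∀ y:ℕ, Real.exp (-ν) * ν ^ y / (Nat.factorial y : ℝ) ≤ 1 := by
        intro y
        have h1 : ν^y/(Nat.factorial y:ℝ) ≤ Real.exp ν := by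
          have h := Summable.le_tsum hsumP y (fun i _ => by positivity)
          rwa [tsum_pois] at h
        have h2 : Real.exp (-ν) * (ν^y/(Nat.factorial y:ℝ)) ≤ Real.exp (-ν) * Real.exp ν :=
          mul_le_mul_of_nonneg_left h1 (Real.exp_pos _).le
        rw [← Real.exp_add, neg_add_cancel, Real.exp_zero] at h2
        calc Real.exp (-ν) * ν ^ y / (Nat.factorial y:ℝ)
            = Real.exp (-ν) * (ν^y/(Nat.factorial y:ℝ)) := by ring
          _ ≤ 1 := h2
      have hlogP : ∀ y:ℕ, Real.log (Real.exp (-ν) * ν ^ y / (Nat.factorial y : ℝ))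
          = -ν + y * Real.log ν - Real.log (Nat.factorial y : ℝ) := by
        intro y
        rw [Real.log_div (by positivity) (hfact_pos y).ne',
          Real.log_mul (Real.exp_pos _).ne' (by positivity), Real.log_exp, Real.log_pow]
      have hlogfact : ∀ y:ℕ, 0 ≤ Real.log (Nat.factorial y : ℝ) := by
        intro y
        apply Real.log_nonneg
        have h : (1:ℕ) ≤ Nat.factorial y := Nat.factorial_pos y
        exact_mod_cast h
      have hlogfact0 : Real.log (Nat.factorial 0 : ℝ) = 0 := by norm_num
      rw [hDx]
      have hKKexp : KK = C0 - c*E + T*lam := hKKdef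
      have hp_pos : 0 < Real.exp (-ν) := Real.exp_pos _
      have hp_le1 : Real.exp (-ν) ≤ 1 := by
        rw [show (1:ℝ) = Real.exp 0 by simp]
        exact Real.exp_le_exp.mpr (by linarith only [hνpos])
      have hpC0 : Real.exp (-ν) * C0 ≤ C0 := mul_le_of_le_one_left hC0_nonneg hp_le1
      rcases le_total ν 1 with hν1 | hν1
      · -- BRANCH I : ν ≤ 1
        obtain ⟨hGsum, hGtsum⟩ := tsum_pois_affine ν (-ν + C0) (-ν + Real.log ν + B)
          (l + Real.log ν)
          (fun y => match y with
            | 0 => -ν + C0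
            | (n+1) => (-ν + Real.log ν + B) + (l + Real.log ν) * n)
          rfl (fun n => rfl)
        have hbound : ∀ y:ℕ,
            (Real.exp (-ν) * ν ^ y / (Nat.factorial y : ℝ))
              * Real.log ((Real.exp (-ν) * ν ^ y / (Nat.factorial y : ℝ)) / R y)
            ≤ (Real.exp (-ν) * ν ^ y / (Nat.factorial y : ℝ))
              * (fun y => match y with
                  | 0 => -ν + C0
                  | (n+1) => (-ν + Real.log ν + B) + (l + Real.log ν) * n) y := by
          intro y
          apply mul_le_mul_of_nonneg_left ?_ (hPpos y).le
          cases y with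
          | zero =>
            rw [Real.log_div (hPpos 0).ne' hR0pos.ne', hlogP 0, hlogR0, hlogfact0]
            exact le_of_eq (by push_cast; ring)
          | succ n =>
            rw [Real.log_div (hPpos (n+1)).ne' (hRspos n).ne', hlogP (n+1), hlogRs n]
            have hf := hlogfact (n+1)
            push_cast
            nlinarith only [hf]
        -- core analytic inequality
        have hcore : ν*Real.log ν + ν*(B - S) - ν^2*(0.28*B - l/2) + (c*E)*S ≤ T*lam := by
          have hBS : B - S = lam + l - 2 - Real.log 13 := by rw [hS_eq]; ring
          have hB2_lb : L/52 ≤ 0.28*B - l/2 := by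
            linarith only [hB_lb, hl16, hL5]
          have hB2pos : (0:ℝ) < 0.28*B - l/2 := by
            have h : (0:ℝ) < L/52 := by positivity
            linarith only [h, hB2_lb]
          rcases le_or_gt (Real.log ν) (-1 - (lam + l - 2 - Real.log 13)) with hsmall | hbig
          · rcases hcE_nonneg.eq_or_lt with hcE0 | hcEpos
            · have h1 : ν*Real.log ν ≤ ν*(-1 - (lam + l - 2 - Real.log 13)) :=
                mul_le_mul_of_nonneg_left hsmall hνpos.le
              have hsq : 0 ≤ ν^2*(0.28*B - l/2) := mul_nonneg (sq_nonneg ν) hB2pos.le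
              have hc0 : (c*E)*S = 0 := by rw [← hcE0]; ring
              rw [hBS]
              nlinarith only [h1, hsq, hc0, hνpos, hTlam_nonneg]
            · have hcpos : 0 < c := by
                rcases lt_or_ge 0 c with h | h
                · exact h
                · exfalso; nlinarith only [hcEpos, hE0, h]
              have hlogcE : Real.log (c*E) = Real.log c - L := by
                rw [Real.log_mul hcpos.ne' hE0.ne', hLlogE]; ring
              have htan : (c*E)*(Real.log ν) - (c*E)*Real.log (c*E) ≤ ν - c*E := by
                have h := Real.log_le_sub_one_of_pos (show 0 < ν/(c*E) by positivity)
                rw [Real.log_div hνpos.ne' (by positivity)] at h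
                have h2 := mul_le_mul_of_nonneg_left h hcEpos.le
                have h3 : (c*E) * (ν/(c*E) - 1) = ν - c*E := by field_simp
                rw [h3] at h2
                nlinarith only [h2]
              have hd : 0 ≤ ν - c*E := by rw [← hxν]; exact hx
              have h5 : (ν - c*E)*(Real.log ν + 1 + (lam + l - 2 - Real.log 13)) ≤ 0 :=
                mul_nonpos_of_nonneg_of_nonpos hd (by linarith only [hsmall])
              have hψ : ν*(Real.log ν + (lam + l - 2 - Real.log 13))
                  ≤ (c*E)*(Real.log (c*E) + (lam + l - 2 - Real.log 13)) := by
                nlinarith only [h5, htan]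
              have hkey0 : (c*E)*(Real.log (c*E) + (lam + l - 2 - Real.log 13)) + (c*E)*S
                  ≤ T*lam := by
                rw [hlogcE]
                have hlogc : Real.log c ≤ Real.log (1+c) :=
                  Real.log_le_log hcpos (by linarith only [hE0])
                have hBid : (Real.log c - L) + (lam + l - 2 - Real.log 13) + S
                    = Real.log c - Real.log (1+c) + lam := by rw [hSdef]; ring
                have h6 : (c*E)*((Real.log c - L) + ((lam + l - 2 - Real.log 13) + S))
                    ≤ (c*E)*lam := by
                  apply mul_le_mul_of_nonneg_left ?_ hcEpos.le
                  have := hBid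
                  linarith only [this, hlogc]
                have h7 : (c*E)*lam ≤ T*lam := mul_le_mul_of_nonneg_right hcET hlam_pos
                nlinarith only [h6, h7]
              have hsq : 0 ≤ ν^2*(0.28*B - l/2) := mul_nonneg (sq_nonneg ν) hB2pos.le
              rw [hBS]
              nlinarith only [hψ, hkey0, hsq]
          · -- big ν
            have hνm : Real.exp (-1 - (lam + l - 2 - Real.log 13)) ≤ ν := by
              have h := Real.exp_le_exp.mpr hbig.le
              rwa [Real.exp_log hνpos] at h
            have hνm_lb : 26/L ≤ Real.exp (-1 - (lam + l - 2 - Real.log 13)) := by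
              have hid : -1 - (lam + l - 2 - Real.log 13)
                  = (1 + Real.log 13) + (-lam) + (-l) := by ring
              rw [hid, Real.exp_add, Real.exp_add, Real.exp_add]
              have hexpnl : Real.exp (-l) = 1/L := by
                rw [hldef, Real.exp_neg, Real.exp_log hLpos, one_div]
              rw [hexpnl]
              have he1 : (2.7182:ℝ) ≤ Real.exp 1 := by linarith only [Real.exp_one_gt_d9]
              have hel : (0.75:ℝ) ≤ Real.exp (-lam) := by
                have h := Real.one_sub_le_exp_neg lam
                linarith only [h, hlam_ub]
              have hLinv : (0:ℝ) < 1/L := by positivity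
              have hstep : (26:ℝ) ≤ Real.exp 1 * Real.exp (Real.log 13) * Real.exp (-lam) := by
                rw [Real.exp_log (show (0:ℝ) < 13 by norm_num)]
                nlinarith only [he1, hel, Real.exp_pos (-lam)]
              calc 26/L = 26*(1/L) := by ring
                _ ≤ (Real.exp 1 * Real.exp (Real.log 13) * Real.exp (-lam)) * (1/L) :=
                    mul_le_mul_of_nonneg_right hstep hLinv.le
                _ = Real.exp 1 * Real.exp (Real.log 13) * Real.exp (-lam) * (1/L) := by ring
            have hlogB2 : Real.log ν ≤ ν*(0.28*B - l/2) - 1 - Real.log (0.28*B - l/2) := by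
              have h := Real.log_le_sub_one_of_pos (mul_pos hνpos hB2pos)
              rw [Real.log_mul hνpos.ne' hB2pos.ne'] at h
              linarith only [h]
            have hK : (0.75:ℝ) ≤ 1 + Real.log (0.28*B - l/2) - (lam + l - 2 - Real.log 13) := by
              have h52 : Real.log (L/52) ≤ Real.log (0.28*B - l/2) :=
                Real.log_le_log (by positivity) hB2_lb
              have hlogL52 : Real.log (L/52) = l - Real.log 52 := by
                rw [Real.log_div hLpos.ne' (by norm_num), hldef]
              have h5213 : Real.log 52 = Real.log 13 + Real.log 4 := by
                rw [← Real.log_mul (by norm_num) (by norm_num)]; norm_num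
              linarith only [h52, hlogL52, h5213, log4_ub, hlam_ub]
            have hmain : ν*(Real.log ν + (lam + l - 2 - Real.log 13) - ν*(0.28*B - l/2))
                ≤ ν*(-0.75) := by
              apply mul_le_mul_of_nonneg_left ?_ hνpos.le
              linarith only [hlogB2, hK]
            have hchain : ν*(-0.75) ≤ (26/L)*(-0.75) := by
              apply mul_le_mul_of_nonpos_right ?_ (by norm_num)
              linarith only [hνm, hνm_lb]
            have hcES : (c*E)*S ≤ 1.91/L := by
              have h1 : (c*E)*S ≤ T*S := mul_le_mul_of_nonneg_right hcET hS_nonneg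
              have h2 : T*S ≤ 1.91/L := (le_div_iff₀ hLpos).mpr hTSL
              linarith only [h1, h2]
            have hLinv : (0:ℝ) < 1/L := by positivity
            have hineq : (26/L)*(-0.75) + 1.91/L ≤ 0 := by
              have hh : (26/L)*(-0.75) + 1.91/L = (-17.59)*(1/L) := by ring
              rw [hh]
              nlinarith only [hLinv]
            rw [hBS]
            nlinarith only [hmain, hchain, hcES, hineq, hTlam_nonneg]
        -- combine to finish branch I
        have hfinal : Real.exp (-ν) * (-ν + C0)
            + (-ν + Real.log ν + B) * (1 - Real.exp (-ν))
            + (l + Real.log ν) * (ν - 1 + Real.exp (-ν)) ≤ (S-1)*x + KK := by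
          have h1mp : 1 - Real.exp (-ν) ≤ ν - 0.28*ν^2 := by
            have h := one_sub_exp_neg_ub hνpos.le hν1
            linarith only [h]
          have hq2 : ν - 1 + Real.exp (-ν) ≤ ν^2/2 := by
            have h := exp_neg_quad_ub hνpos.le
            linarith only [h]
          have hBmul : B*(1 - Real.exp (-ν)) ≤ B*(ν - 0.28*ν^2) :=
            mul_le_mul_of_nonneg_left h1mp hBpos.le
          have hlmul : l*(ν - 1 + Real.exp (-ν)) ≤ l*(ν^2/2) :=
            mul_le_mul_of_nonneg_left hq2 hlpos.le
          rw [hxν, hKKexp]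
          nlinarith only [hpC0, hBmul, hlmul, hcore]
        by_cases hsf : Summable (fun y:ℕ =>
            (Real.exp (-ν) * ν ^ y / (Nat.factorial y : ℝ))
              * Real.log ((Real.exp (-ν) * ν ^ y / (Nat.factorial y : ℝ)) / R y))
        · have h1 := Summable.tsum_le_tsum hbound hsf hGsum
          rw [hGtsum] at h1
          exact h1.trans hfinal
        · rw [tsum_eq_zero_of_not_summable hsf]
          have h2 : 0 ≤ (S-1)*x := mul_nonneg (by linarith only [hS1]) hx
          linarith only [h2, hKK_nonneg]
      · -- BRANCH II : 1 ≤ ν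
        obtain ⟨hGsum, hGtsum⟩ := tsum_pois_affine ν C0 B l
          (fun y => match y with
            | 0 => C0
            | (n+1) => B + l * n)
          rfl (fun n => rfl)
        have hbound : ∀ y:ℕ,
            (Real.exp (-ν) * ν ^ y / (Nat.factorial y : ℝ))
              * Real.log ((Real.exp (-ν) * ν ^ y / (Nat.factorial y : ℝ)) / R y)
            ≤ (Real.exp (-ν) * ν ^ y / (Nat.factorial y : ℝ))
              * (fun y => match y with
                  | 0 => C0
                  | (n+1) => B + l * n) y := by
          intro y
          apply mul_le_mul_of_nonneg_left ?_ (hPpos y).le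
          cases y with
          | zero =>
            rw [Real.log_div (hPpos 0).ne' hR0pos.ne', hlogP 0, hlogR0, hlogfact0]
            push_cast
            linarith only [hνpos]
          | succ n =>
            rw [Real.log_div (hPpos (n+1)).ne' (hRspos n).ne', hlogRs n]
            have hlp : Real.log (Real.exp (-ν) * ν ^ (n+1) / (Nat.factorial (n+1) : ℝ)) ≤ 0 :=
              Real.log_nonpos (hPpos (n+1)).le (hPle1 (n+1))
            push_cast
            linarith only [hlp]
        have hfinal : Real.exp (-ν) * C0 + B * (1 - Real.exp (-ν))
            + l * (ν - 1 + Real.exp (-ν)) ≤ (S-1)*x + KK := by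
          have hplow := exp_neg_lb_lin ν
          have hpBl : ((2-ν)*Real.exp (-1))*(B-l) ≤ Real.exp (-ν)*(B-l) :=
            mul_le_mul_of_nonneg_right hplow hBl_pos
          have hlL : l ≤ 0.368*L := by
            have h1 := log_le_mul_einv hLpos
            have h2 : L*Real.exp (-1) ≤ L*0.368 :=
              mul_le_mul_of_nonneg_left einv_ub hLpos.le
            rw [hldef]
            linarith only [h1, h2]
          have hsqrt_mul : Real.sqrt L * Real.sqrt L = L := Real.mul_self_sqrt hLpos.le
          have hspos : 0 < Real.sqrt L := Real.sqrt_pos.mpr hLpos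
          have hlsqrt : l ≤ 0.736*Real.sqrt L := by
            have h1 : Real.log (Real.sqrt L) ≤ Real.sqrt L * Real.exp (-1) :=
              log_le_mul_einv hspos
            have h2 : l = 2*Real.log (Real.sqrt L) := by
              rw [hldef, Real.log_sqrt hLpos.le]; ring
            have h3 : Real.sqrt L * Real.exp (-1) ≤ Real.sqrt L * 0.368 :=
              mul_le_mul_of_nonneg_left einv_ub hspos.le
            linarith only [h1, h2, h3]
          have hbr2 : l + Real.exp (-1)*(B - l) ≤ S - 1 := by
            have h1 : 0.632*(B-l) ≤ (1 - Real.exp (-1))*(B - l) :=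
              mul_le_mul_of_nonneg_right (by linarith only [einv_ub]) hBl_pos
            have hS1eq : S - 1 = B - lam - l + 1 + Real.log 13 := by rw [hS_eq]; ring
            nlinarith only [log13_lb, hlam_ub, hlL, hBl_lb, h1, hS1eq, hLpos]
          have hbr1 : B - Real.exp (-1)*(B - l) + (c*E)*S ≤ S - 1 := by
            have h1 : 0.3678*(B-l) ≤ Real.exp (-1)*(B-l) :=
              mul_le_mul_of_nonneg_right einv_lb hBl_pos
            have hcES : (c*E)*S ≤ 0.382 :=
              le_trans (mul_le_mul_of_nonneg_right hcET hS_nonneg) hTS_ub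
            have hS1eq : S - 1 = B - lam - l + 1 + Real.log 13 := by rw [hS_eq]; ring
            have hquad : 0 ≤ 0.1839*L - 0.4653*Real.sqrt L + 1.952 := by
              nlinarith only [sq_nonneg (Real.sqrt L - 1.265), Real.sq_sqrt hLpos.le,
                Real.sqrt_nonneg L]
            nlinarith only [log13_lb, hlam_ub, h1, hBl_lb, hlsqrt, hquad, hcES, hS1eq,
              Real.sqrt_nonneg L]
          have hu : 0 ≤ ν - 1 := by linarith only [hν1]
          have hu2 : (ν-1)*(l + Real.exp (-1)*(B - l)) ≤ (ν-1)*(S-1) :=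
            mul_le_mul_of_nonneg_left hbr2 hu
          rw [hxν, hKKexp]
          nlinarith only [hpC0, hpBl, hbr1, hu2, hTlam_nonneg]
        by_cases hsf : Summable (fun y:ℕ =>
            (Real.exp (-ν) * ν ^ y / (Nat.factorial y : ℝ))
              * Real.log ((Real.exp (-ν) * ν ^ y / (Nat.factorial y : ℝ)) / R y))
        · have h1 := Summable.tsum_le_tsum hbound hsf hGsum
          rw [hGtsum] at h1
          exact h1.trans hfinal
        · rw [tsum_eq_zero_of_not_summable hsf]
          have h2 : 0 ≤ (S-1)*x := mul_nonneg (by linarith only [hS1]) hx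
          linarith only [h2, hKK_nonneg]
  -- INTEGRATION
  have hae0 : ∀ᵐ x ∂μ, (0:ℝ) ≤ x := by
    rw [MeasureTheory.ae_iff]
    have hset : {x : ℝ | ¬ (0:ℝ) ≤ x} = Set.Iio 0 := by
      ext x; simp [not_le]
    rwa [hset]
  have hae : ∀ᵐ x ∂μ, D x ≤ (S-1)*x + KK := hae0.mono (fun x hx => hpt x hx)
  have hint2 : Integrable (fun x : ℝ => (S-1)*x + KK) μ :=
    (hXint.const_mul (S-1)).add (integrable_const KK)
  have hI1 : ∫ x, D x ∂μ ≤ ∫ x, ((S-1)*x + KK) ∂μ :=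
    integral_mono_ae hDint hint2 hae
  have hI2 : ∫ x, ((S-1)*x + KK) ∂μ = (S-1) * (∫ x, x ∂μ) + KK := by
    rw [integral_add (hXint.const_mul (S-1)) (integrable_const KK),
      integral_const_mul, integral_const]
    simp [measure_univ]
  have hI3 : (S-1) * (∫ x, x ∂μ) ≤ (S-1)*E :=
    mul_le_mul_of_nonneg_left hmean (by linarith only [hS1])
  have hIfinal : ∫ x, D x ∂μ ≤ (S-1)*E + KK := by
    rw [hI2] at hI1
    linarith only [hI1, hI3]
  have hEinv : (0:ℝ) < 1/E := by positivity
  have hmul : (1/E) * ∫ x, D x ∂μ ≤ (1/E) * ((S-1)*E + KK) :=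
    mul_le_mul_of_nonneg_left hIfinal hEinv.le
  refine hmul.trans ?_
  have hexpand : (1/E) * ((S-1)*E + KK) = S - 1 + (1/E)*C0 - c + (1+c)*lam := by
    rw [hKKdef, hTdef]
    field_simp
    ring
  rw [hexpand]
  have hcsq : 0 ≤ (c^2/2)*E*l := by
    have h1 : 0 ≤ (c^2/2)*E := by positivity
    exact mul_nonneg h1 hlpos.le
  have hCT : (1/E)*(C0 - T) = (1/E)*C0 - (1+c) := by
    rw [hTdef]
    field_simp
  rw [hCT, hSdef]
  linarith only [hcsq]
end

section
/- The following two inequalities hold: (i) for every x with 0 < x ≤ 1, ((1+x)·e^{−x} − 1)/x² ≤ −1/2 + x/3, and in particular ((1+x)·e^{−x} − 1)/x² ≤ −1/6; (ii) for every x ≥ 1, (1+x)·e^{−x} ≤ 2·e^{−1}. -/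
lemma cubic_le_exp {x : ℝ} (hx : 0 ≤ x) :
    1 + x + x ^ 2 / 2 + x ^ 3 / 6 ≤ Real.exp x := by
  have h := Real.sum_le_exp_of_nonneg hx 4
  simp [Finset.sum_range_succ, Nat.factorial] at h
  linarith

/-- Estimates (138)–(140) and (142) on the factor `((1+x)e^{-x} - 1)/x²`. -/
theorem stmt_16 :
    (∀ x : ℝ, 0 < x → x ≤ 1 →
        ((1 + x) * Real.exp (-x) - 1) / x ^ 2 ≤ -(1 / 2) + x / 3
          ∧ ((1 + x) * Real.exp (-x) - 1) / x ^ 2 ≤ -(1 / 6))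
    ∧ (∀ x : ℝ, 1 ≤ x → (1 + x) * Real.exp (-x) ≤ 2 * Real.exp (-1)) := by
  constructor
  · intro x hx hx1
    have hexp := cubic_le_exp hx.le
    have hpos : (0:ℝ) < Real.exp x := Real.exp_pos x
    have hq : 0 < 1 - x ^ 2 / 2 + x ^ 3 / 3 := by nlinarith
    -- key: (1+x) * exp(-x) ≤ 1 - x²/2 + x³/3
    have key : (1 + x) * Real.exp (-x) ≤ 1 - x ^ 2 / 2 + x ^ 3 / 3 := by
      rw [Real.exp_neg, mul_inv_le_iff₀ hpos]
      calc 1 + x ≤ (1 - x ^ 2 / 2 + x ^ 3 / 3) * (1 + x + x ^ 2 / 2 + x ^ 3 / 6) := by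
            nlinarith [pow_nonneg hx.le 4, pow_nonneg hx.le 5, pow_nonneg hx.le 6]
        _ ≤ (1 - x ^ 2 / 2 + x ^ 3 / 3) * Real.exp x := by
            exact mul_le_mul_of_nonneg_left hexp hq.le
    have h1 : ((1 + x) * Real.exp (-x) - 1) / x ^ 2 ≤ -(1 / 2) + x / 3 := by
      rw [div_le_iff₀ (by positivity : (0:ℝ) < x ^ 2)]
      nlinarith
    refine ⟨h1, h1.trans ?_⟩
    linarith
  · intro x hx
    have h : x ≤ Real.exp (x - 1) := by
      have := Real.add_one_le_exp (x - 1)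
      linarith
    have hx2 : 1 + x ≤ 2 * x := by linarith
    calc (1 + x) * Real.exp (-x) ≤ 2 * x * Real.exp (-x) := by
          apply mul_le_mul_of_nonneg_right hx2 (Real.exp_pos _).le
      _ ≤ 2 * Real.exp (x - 1) * Real.exp (-x) := by
          have := (Real.exp_pos (-x)).le
          nlinarith
      _ = 2 * Real.exp (-1) := by
          rw [mul_assoc, ← Real.exp_add]; ring_nf
end

section
/- Let E > 0 and let p : ℕ → ℝ be a probability mass function (p(y) ≥ 0 for all y and ∑_{y=0}^∞ p(y) = 1) whose mean satisfies ∑_{y=0}^∞ y·p(y) ≤ E, and such that y ↦ p(y)·log(1/p(y)) is summable. Then the entropy satisfies ∑_{y=0}^∞ p(y)·log(1/p(y)) ≤ (1+E)·log(1+E) − E·log E. -/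
/-- Maximum-entropy bound for nonnegative-integer random variables under a
first-moment constraint: the entropy is at most that of the geometric
distribution with mean `E`. -/
theorem stmt_17 (E : ℝ) (hE : 0 < E) (p : ℕ → ℝ)
    (hp : ∀ y : ℕ, 0 ≤ p y) (hp1 : ∑' y : ℕ, p y = 1)
    (hmean_summable : Summable (fun y : ℕ => (y : ℝ) * p y))
    (hmean : ∑' y : ℕ, (y : ℝ) * p y ≤ E)
    (hent_summable : Summable (fun y : ℕ => p y * Real.log (1 / p y))) :
    ∑' y : ℕ, p y * Real.log (1 / p y)
      ≤ (1 + E) * Real.log (1 + E) - E * Real.log E := by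
  have h1E : (0:ℝ) < 1 + E := by linarith
  set r : ℝ := E / (1 + E) with hr_def
  have hr0 : 0 < r := div_pos hE h1E
  have hr1 : r < 1 := (div_lt_one h1E).2 (by linarith)
  set q : ℕ → ℝ := fun y => (1 - r) * r ^ y with hq_def
  have hq0 : ∀ y, 0 < q y := fun y => mul_pos (by linarith) (pow_pos hr0 y)
  have hqsum : Summable q := (summable_geometric_of_lt_one hr0.le hr1).mul_left _
  have hqtsum : ∑' y, q y = 1 := by
    rw [hq_def, tsum_mul_left, tsum_geometric_of_lt_one hr0.le hr1,
      mul_inv_cancel₀ (by linarith : (1:ℝ) - r ≠ 0)]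
  have hpsum : Summable p := by
    by_contra h
    rw [tsum_eq_zero_of_not_summable h] at hp1
    norm_num at hp1
  -- cross-entropy term
  set g : ℕ → ℝ := fun y => p y * Real.log (1 / q y) with hg_def
  have hg_eq : ∀ y, g y = (-Real.log (1 - r)) * p y + (-Real.log r) * ((y:ℝ) * p y) := by
    intro y
    have : Real.log (1 / q y) = -Real.log (1 - r) - (y:ℝ) * Real.log r := by
      rw [one_div, Real.log_inv, hq_def]
      rw [Real.log_mul (by linarith) (pow_ne_zero _ hr0.ne'), Real.log_pow]
      ring
    rw [hg_def]; dsimp only; rw [this]; ring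
  have hgsum : Summable g := by
    have : Summable (fun y => (-Real.log (1 - r)) * p y + (-Real.log r) * ((y:ℝ) * p y)) :=
      (hpsum.mul_left _).add (hmean_summable.mul_left _)
    exact this.congr (fun y => (hg_eq y).symm)
  -- pointwise Gibbs inequality
  have key : ∀ y, p y * Real.log (1 / p y) ≤ g y + (q y - p y) := by
    intro y
    rcases eq_or_lt_of_le (hp y) with h | h
    · simp [hg_def, ← h]
      exact (hq0 y).le
    · have hqy := hq0 y
      have hlog : Real.log (q y / p y) ≤ q y / p y - 1 :=
        Real.log_le_sub_one_of_pos (div_pos hqy h)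
      have hsplit : Real.log (1 / p y) = Real.log (1 / q y) + Real.log (q y / p y) := by
        rw [← Real.log_mul (by positivity) (by positivity)]
        congr 1
        field_simp
      rw [hsplit, mul_add]
      have : p y * Real.log (q y / p y) ≤ p y * (q y / p y - 1) :=
        mul_le_mul_of_nonneg_left hlog h.le
      have heq : p y * (q y / p y - 1) = q y - p y := by field_simp
      rw [heq] at this
      have hgy : g y = p y * Real.log (1 / q y) := rfl
      rw [hgy]
      linarith [this]
  -- compare tsums
  have hsum_rhs : Summable (fun y => g y + (q y - p y)) := hgsum.add (hqsum.sub hpsum)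
  have step1 : ∑' y, p y * Real.log (1 / p y) ≤ ∑' y, (g y + (q y - p y)) :=
    Summable.tsum_le_tsum key hent_summable hsum_rhs
  have step2 : ∑' y, (g y + (q y - p y)) = ∑' y, g y := by
    rw [Summable.tsum_add hgsum (hqsum.sub hpsum), Summable.tsum_sub hqsum hpsum, hqtsum, hp1]
    ring
  -- evaluate tsum g
  have hgtsum : ∑' y, g y =
      (-Real.log (1 - r)) + (-Real.log r) * ∑' y : ℕ, (y:ℝ) * p y := by
    calc ∑' y, g y
        = ∑' y : ℕ, ((-Real.log (1 - r)) * p y + (-Real.log r) * ((y:ℝ) * p y)) :=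
          tsum_congr hg_eq
      _ = (-Real.log (1 - r)) * ∑' y, p y + (-Real.log r) * ∑' y : ℕ, (y:ℝ) * p y := by
          rw [Summable.tsum_add (hpsum.mul_left _) (hmean_summable.mul_left _),
            tsum_mul_left, tsum_mul_left]
      _ = _ := by rw [hp1]; ring
  have hlog1r : Real.log (1 - r) = -Real.log (1 + E) := by
    have : 1 - r = (1 + E)⁻¹ := by rw [hr_def]; field_simp; ring
    rw [this, Real.log_inv]
  have hlogr : Real.log r = Real.log E - Real.log (1 + E) := by
    rw [hr_def, Real.log_div hE.ne' h1E.ne']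
  have hcoef : 0 ≤ -Real.log r := by
    rw [hlogr]
    have : Real.log E ≤ Real.log (1 + E) := Real.log_le_log hE (by linarith)
    linarith
  have hbound : (-Real.log r) * ∑' y : ℕ, (y:ℝ) * p y ≤ (-Real.log r) * E :=
    mul_le_mul_of_nonneg_left hmean hcoef
  calc ∑' y, p y * Real.log (1 / p y) ≤ ∑' y, g y := by rw [← step2]; exact step1
    _ = (-Real.log (1 - r)) + (-Real.log r) * ∑' y : ℕ, (y:ℝ) * p y := hgtsum
    _ ≤ (-Real.log (1 - r)) + (-Real.log r) * E := by linarith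
    _ = (1 + E) * Real.log (1 + E) - E * Real.log E := by
        rw [hlog1r, hlogr]; ring
end
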